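/- arXiv:2210.14340 — 7 statements merged into one kernel-verified Lean document; each statement's English description precedes it below -/
import Mathlib

section
/- Let (Θⁿ)_{n∈ℕ} be a family of subsets of L_p(μ;X) with Θⁿ ⊆ Θ^{n+1} for all n ∈ ℕ. If ⋃_{n∈ℕ} Θⁿ is dense in L_p(μ;X) and contains 0, then for every h > 0 and f ∈ Lip_p, the sequence I_{Θⁿ}(h)f is nondecreasing in n and converges to I_{L_p(μ;X)}(h)f as n → ∞. -/
open MeasureTheory Filter Set
open scoped Topology ENNReal NNReal RealInnerProductSpace

noncomputable section

variable {X : Type*} [NormedAddCommGroup X] [InnerProductSpace ℝ X]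
  [SecondCountableTopology X] [CompleteSpace X] [MeasurableSpace X] [BorelSpace X]

/-- `π` is a coupling of `μ` and `ν`. -/
def IsCoupling (μ ν : Measure X) (π : Measure (X × X)) : Prop :=
  π.map Prod.fst = μ ∧ π.map Prod.snd = ν

/-- The `p`-Wasserstein distance between `μ` and `ν` (valued in `ℝ≥0∞`). -/
def Wp (p : ℝ) (μ ν : Measure X) : ℝ≥0∞ :=
  (⨅ π ∈ {π : Measure (X × X) | IsCoupling μ ν π},
    ∫⁻ q, (‖q.1 - q.2‖₊ : ℝ≥0∞) ^ p ∂π) ^ (1 / p)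

/-- Borel probability measures with finite `p`-th moment. -/
def Pp (p : ℝ) : Set (Measure X) :=
  {ν | IsProbabilityMeasure ν ∧ ∫⁻ x, (‖x‖₊ : ℝ≥0∞) ^ p ∂ν < ⊤}

/-- The rescaled penalty function `φ_h(v) = h·φ(v/h)`. -/
def phih (φ : ℝ → ℝ≥0∞) (h v : ℝ) : ℝ≥0∞ := ENNReal.ofReal h * φ (v / h)

/-- The risk functional `I(h) f`. -/
def Ifun (μ : Measure X) (φ : ℝ → ℝ≥0∞) (p h : ℝ) (f : X → ℝ) : EReal :=
  ⨆ ν ∈ Pp (X := X) p,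
    ((∫ x, f x ∂ν : ℝ) : EReal) - ((phih φ h (Wp p μ ν).toReal : ℝ≥0∞) : EReal)

/-- The `L_p(μ; X)` norm of a vector field. -/
def lpnorm (μ : Measure X) (p : ℝ) (θ : X → X) : ℝ := (∫ y, ‖θ y‖ ^ p ∂μ) ^ (1 / p)

/-- The parametric risk functional `I_Θ(h) f`, where `μ_θ` is the pushforward of `μ`
under `y ↦ y + θ(y)`. -/
def ITheta (μ : Measure X) (φ : ℝ → ℝ≥0∞) (p : ℝ) (Θ : Set (X → X)) (h : ℝ)
    (f : X → ℝ) : EReal :=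
  ⨆ θ ∈ Θ, ((∫ x, f x ∂(μ.map fun y => y + θ y) : ℝ) : EReal)
    - ((phih φ h (lpnorm μ p θ) : ℝ≥0∞) : EReal)

/-- Membership in `Lip_p`. -/
def MemLipP (p : ℝ) (f : X → ℝ) : Prop :=
  ∃ L : ℝ, 0 ≤ L ∧ ∀ x₁ x₂ : X,
    |f x₁ - f x₂| ≤ L * (1 + max ‖x₁‖ ‖x₂‖) ^ (p - 1) * ‖x₁ - x₂‖

/-- The local Lipschitz constant `|f|_Lip`. -/
def locLip (f : X → ℝ) (x : X) : ℝ :=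
  limsup (fun h : ℝ =>
      sSup ((fun u : X => (f (x + h • u) - f x) / h) '' {u : X | ‖u‖ = 0 ∨ ‖u‖ = 1}))
    (𝓝[>] (0 : ℝ))

/-- `v` is a measurable direction of steepest ascent for `f`. -/
def SteepestAscent (f : X → ℝ) (v : X → X) : Prop :=
  Measurable v ∧ ∀ x : X, (‖v x‖ = 0 ∨ ‖v x‖ = 1) ∧
    Tendsto (fun h : ℝ => (f (x + h • v x) - f x) / h) (𝓝[>] (0 : ℝ)) (𝓝 (locLip f x))

/-- The convex conjugate `φ*` of the penalty function. -/
def phiStar (φ : ℝ → ℝ≥0∞) (u : ℝ) : EReal :=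
  ⨆ v ∈ Ici (0 : ℝ), ((u * v : ℝ) : EReal) - ((φ v : ℝ≥0∞) : EReal)

section AuxLemmas

variable {p L : ℝ} {μ : Measure X} {f : X → ℝ}

lemma lipP_continuous (hp : 1 < p) (hL : 0 ≤ L)
    (hLip : ∀ x₁ x₂ : X, |f x₁ - f x₂| ≤ L * (1 + max ‖x₁‖ ‖x₂‖) ^ (p - 1) * ‖x₁ - x₂‖) :
    Continuous f := by
  refine continuous_iff_continuousAt.2 fun x => ?_
  refine continuousAt_of_locally_lipschitz zero_lt_one (L * (2 + ‖x‖) ^ (p - 1)) fun y hy => ?_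
  rw [Real.dist_eq, dist_eq_norm]
  have hmax : 1 + max ‖y‖ ‖x‖ ≤ 2 + ‖x‖ := by
    have h1 : ‖y‖ ≤ ‖x‖ + 1 := by
      have := norm_sub_norm_le y x
      rw [← dist_eq_norm] at this; linarith
    have h2 : max ‖y‖ ‖x‖ ≤ ‖x‖ + 1 := max_le h1 (by linarith)
    linarith
  have hrpow : (1 + max ‖y‖ ‖x‖) ^ (p - 1) ≤ (2 + ‖x‖) ^ (p - 1) :=
    Real.rpow_le_rpow (by positivity) hmax (by linarith)
  calc |f y - f x| ≤ L * (1 + max ‖y‖ ‖x‖) ^ (p - 1) * ‖y - x‖ := hLip y x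
    _ ≤ L * (2 + ‖x‖) ^ (p - 1) * ‖y - x‖ :=
        mul_le_mul_of_nonneg_right (mul_le_mul_of_nonneg_left hrpow hL) (norm_nonneg _)

lemma lipP_growth (hp : 1 < p) (hL : 0 ≤ L)
    (hLip : ∀ x₁ x₂ : X, |f x₁ - f x₂| ≤ L * (1 + max ‖x₁‖ ‖x₂‖) ^ (p - 1) * ‖x₁ - x₂‖)
    (x : X) : |f x| ≤ (L + |f 0|) * (1 + ‖x‖) ^ p := by
  have h0 : (0:ℝ) ≤ 1 + ‖x‖ := by positivity
  have hone : (1:ℝ) ≤ (1 + ‖x‖) ^ p := by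
    calc (1:ℝ) = 1 ^ p := (Real.one_rpow p).symm
      _ ≤ (1 + ‖x‖) ^ p := Real.rpow_le_rpow zero_le_one (by linarith [norm_nonneg x]) (by linarith)
  have he : (1 + ‖x‖) ^ p = (1 + ‖x‖) ^ (p - 1) * (1 + ‖x‖) := by
    rw [show p = (p - 1) + 1 by ring, Real.rpow_add_one (by positivity : (1:ℝ) + ‖x‖ ≠ 0)]
    ring_nf
  have hsplit : (1 + ‖x‖) ^ (p - 1) * ‖x‖ ≤ (1 + ‖x‖) ^ p := by
    rw [he]
    exact mul_le_mul_of_nonneg_left (by linarith [norm_nonneg x])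
      (Real.rpow_nonneg h0 _)
  have habs : |f x| ≤ |f x - f 0| + |f 0| := by
    calc |f x| = |(f x - f 0) + f 0| := by ring_nf
      _ ≤ |f x - f 0| + |f 0| := abs_add_le _ _
  have hkey : |f x - f 0| ≤ L * ((1 + ‖x‖) ^ (p - 1) * ‖x‖) := by
    have := hLip x 0
    simpa [max_eq_left (norm_nonneg x), mul_assoc] using this
  have h1 : L * ((1 + ‖x‖) ^ (p - 1) * ‖x‖) ≤ L * (1 + ‖x‖) ^ p :=
    mul_le_mul_of_nonneg_left hsplit hL
  have h2 : |f 0| ≤ |f 0| * (1 + ‖x‖) ^ p := le_mul_of_one_le_right (abs_nonneg _) hone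
  calc |f x| ≤ |f x - f 0| + |f 0| := habs
    _ ≤ L * (1 + ‖x‖) ^ p + |f 0| * (1 + ‖x‖) ^ p := by linarith
    _ = (L + |f 0|) * (1 + ‖x‖) ^ p := by ring

lemma memLp_id (hp : 1 < p) (hμ : μ ∈ Pp (X := X) p) :
    MemLp (fun x : X => x) (ENNReal.ofReal p) μ := by
  have hp0 : (0:ℝ) < p := lt_trans zero_lt_one hp
  refine ⟨aestronglyMeasurable_id, ?_⟩
  rw [eLpNorm_eq_lintegral_rpow_enorm_toReal (by simp [ENNReal.ofReal_eq_zero, not_le, hp0])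
    ENNReal.ofReal_ne_top, ENNReal.toReal_ofReal hp0.le]
  exact ENNReal.rpow_lt_top_of_nonneg (by positivity) hμ.2.ne

end AuxLemmas

set_option linter.unusedSectionVars false

section Aux2

variable {p L : ℝ} {μ : Measure X} {f : X → ℝ}

lemma integrable_comp_add (hp : 1 < p) (hμ : μ ∈ Pp (X := X) p)
    (hfc : Continuous f) {D : ℝ}
    (hgrow : ∀ x : X, |f x| ≤ D * (1 + ‖x‖) ^ p)
    {θ : X → X} (hθ : MemLp θ (ENNReal.ofReal p) μ) :
    Integrable (fun y => f (y + θ y)) μ := by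
  haveI : IsProbabilityMeasure μ := hμ.1
  have hp0 : (0:ℝ) < p := lt_trans zero_lt_one hp
  have hq0 : (ENNReal.ofReal p) ≠ 0 := by simp [ENNReal.ofReal_eq_zero, not_le, hp0]
  have hD : 0 ≤ D := by
    have := hgrow 0
    have h1 : (0:ℝ) ≤ D * (1 + ‖(0:X)‖) ^ p := le_trans (abs_nonneg _) this
    simpa [Real.one_rpow] using h1
  have hW : MemLp (fun y : X => 1 + ‖y‖ + ‖θ y‖) (ENNReal.ofReal p) μ :=
    ((memLp_const (1:ℝ)).add (memLp_id hp hμ).norm).add hθ.norm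
  have hint0 : Integrable (fun y : X => ‖1 + ‖y‖ + ‖θ y‖‖ ^ p) μ := by
    have := hW.integrable_norm_rpow hq0 ENNReal.ofReal_ne_top
    rwa [ENNReal.toReal_ofReal hp0.le] at this
  have hint : Integrable (fun y : X => D * ‖1 + ‖y‖ + ‖θ y‖‖ ^ p) μ := hint0.const_mul D
  refine hint.mono (hfc.comp_aestronglyMeasurable (aestronglyMeasurable_id.add hθ.1)) ?_
  refine Eventually.of_forall fun y => ?_
  have hWnn : (0:ℝ) ≤ 1 + ‖y‖ + ‖θ y‖ := by positivity
  have hb : ‖y + θ y‖ ≤ ‖y‖ + ‖θ y‖ := norm_add_le _ _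
  have h1 : (1 + ‖y + θ y‖) ^ p ≤ (1 + ‖y‖ + ‖θ y‖) ^ p :=
    Real.rpow_le_rpow (by positivity) (by linarith) hp0.le
  have h2 : |f (y + θ y)| ≤ D * (1 + ‖y‖ + ‖θ y‖) ^ p :=
    le_trans (hgrow _) (mul_le_mul_of_nonneg_left h1 hD)
  rw [Real.norm_eq_abs, Real.norm_eq_abs, Real.norm_of_nonneg hWnn]
  exact le_trans h2 (le_abs_self _)

lemma diffA (hp : 1 < p) (hμ : μ ∈ Pp (X := X) p) (hL : 0 ≤ L)
    (hLip : ∀ x₁ x₂ : X, |f x₁ - f x₂| ≤ L * (1 + max ‖x₁‖ ‖x₂‖) ^ (p - 1) * ‖x₁ - x₂‖)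
    {θ₁ θ₂ : X → X} (h₁ : MemLp θ₁ (ENNReal.ofReal p) μ) (h₂ : MemLp θ₂ (ENNReal.ofReal p) μ)
    {B : ℝ≥0∞}
    (hB : 1 + eLpNorm (fun x : X => x) (ENNReal.ofReal p) μ + eLpNorm θ₁ (ENNReal.ofReal p) μ
        + eLpNorm θ₂ (ENNReal.ofReal p) μ ≤ B)
    (hBt : B ≠ ⊤) :
    |(∫ y, f (y + θ₁ y) ∂μ) - ∫ y, f (y + θ₂ y) ∂μ| ≤
      (ENNReal.ofReal L * B ^ (p - 1) *
        eLpNorm (fun y => θ₁ y - θ₂ y) (ENNReal.ofReal p) μ).toReal := by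
  haveI : IsProbabilityMeasure μ := hμ.1
  have hp0 : (0:ℝ) < p := lt_trans zero_lt_one hp
  have hq0 : (ENNReal.ofReal p) ≠ 0 := by simp [ENNReal.ofReal_eq_zero, not_le, hp0]
  have hqT : (ENNReal.ofReal p) ≠ ⊤ := ENNReal.ofReal_ne_top
  have hqR : (ENNReal.ofReal p).toReal = p := ENNReal.toReal_ofReal hp0.le
  have hfc : Continuous f := lipP_continuous hp hL hLip
  have hgrow := lipP_growth hp hL hLip
  have I₁ : Integrable (fun y => f (y + θ₁ y)) μ := integrable_comp_add hp hμ hfc hgrow h₁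
  have I₂ : Integrable (fun y => f (y + θ₂ y)) μ := integrable_comp_add hp hμ hfc hgrow h₂
  set W : X → ℝ := fun y => 1 + ‖y‖ + ‖θ₁ y‖ + ‖θ₂ y‖ with hWdef
  have hWnn : ∀ y, 0 ≤ W y := fun y => by simp only [hWdef]; positivity
  set Δ : X → X := fun y => θ₁ y - θ₂ y with hΔdef
  have hΔ : MemLp Δ (ENNReal.ofReal p) μ := h₁.sub h₂
  -- conjugate exponent
  have hcj : p.HolderConjugate (p / (p - 1)) := by
    exact Real.HolderConjugate.conjExponent hp
  set q' : ℝ := p / (p - 1) with hq'def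
  -- pointwise bound
  have hptw : ∀ y, |f (y + θ₁ y) - f (y + θ₂ y)| ≤ L * (W y) ^ (p - 1) * ‖Δ y‖ := by
    intro y
    have h1 := hLip (y + θ₁ y) (y + θ₂ y)
    have hd : (y + θ₁ y) - (y + θ₂ y) = Δ y := by simp [hΔdef]
    rw [hd] at h1
    refine le_trans h1 ?_
    have hb1 : ‖y + θ₁ y‖ ≤ ‖y‖ + ‖θ₁ y‖ := norm_add_le _ _
    have hb2 : ‖y + θ₂ y‖ ≤ ‖y‖ + ‖θ₂ y‖ := norm_add_le _ _
    have hmax : 1 + max ‖y + θ₁ y‖ ‖y + θ₂ y‖ ≤ W y := by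
      have e1 : ‖y + θ₁ y‖ ≤ ‖y‖ + ‖θ₁ y‖ + ‖θ₂ y‖ := by linarith [norm_nonneg (θ₂ y)]
      have e2 : ‖y + θ₂ y‖ ≤ ‖y‖ + ‖θ₁ y‖ + ‖θ₂ y‖ := by linarith [norm_nonneg (θ₁ y)]
      have hm := max_le e1 e2
      show 1 + max ‖y + θ₁ y‖ ‖y + θ₂ y‖ ≤ 1 + ‖y‖ + ‖θ₁ y‖ + ‖θ₂ y‖
      linarith
    have hr : (1 + max ‖y + θ₁ y‖ ‖y + θ₂ y‖) ^ (p - 1) ≤ (W y) ^ (p - 1) :=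
      Real.rpow_le_rpow (by positivity) hmax (by linarith)
    exact mul_le_mul_of_nonneg_right (mul_le_mul_of_nonneg_left hr hL) (norm_nonneg _)
  -- measurability
  have hWm : AEMeasurable W μ := by
    have hn : AEMeasurable (fun y : X => ‖y‖) μ := measurable_norm.aemeasurable
    exact ((aemeasurable_const.add hn).add h₁.1.norm.aemeasurable).add h₂.1.norm.aemeasurable
  have hoW : AEMeasurable (fun y => ENNReal.ofReal (W y)) μ :=
    ENNReal.measurable_ofReal.comp_aemeasurable hWm
  have hF : AEMeasurable (fun y => (ENNReal.ofReal (W y)) ^ (p - 1)) μ :=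
    ENNReal.continuous_rpow_const.measurable.comp_aemeasurable hoW
  have hG : AEMeasurable (fun y => (‖Δ y‖₊ : ℝ≥0∞)) μ := hΔ.1.enorm
  have hpne : p ≠ 0 := hp0.ne'
  have hp1ne : p - 1 ≠ 0 := by intro hc; rw [sub_eq_zero] at hc; exact absurd hc.symm hp.ne
  have holder : (∫⁻ y, (ENNReal.ofReal (W y)) ^ (p - 1) * (‖Δ y‖₊ : ℝ≥0∞) ∂μ) ≤
      (∫⁻ y, ((ENNReal.ofReal (W y)) ^ (p - 1)) ^ q' ∂μ) ^ (1 / q') *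
      (∫⁻ y, ((‖Δ y‖₊ : ℝ≥0∞)) ^ p ∂μ) ^ (1 / p) := by
    simpa using ENNReal.lintegral_mul_le_Lp_mul_Lq μ hcj.symm hF hG
  have hFac2 : (∫⁻ y, ((‖Δ y‖₊ : ℝ≥0∞)) ^ p ∂μ) ^ (1 / p)
      = eLpNorm Δ (ENNReal.ofReal p) μ := by
    rw [eLpNorm_eq_lintegral_rpow_enorm_toReal hq0 hqT, hqR]
    rfl
  have hWint : (∫⁻ y, ((ENNReal.ofReal (W y)) ^ (p - 1)) ^ q' ∂μ)
      = ∫⁻ y, ((‖W y‖₊ : ℝ≥0∞)) ^ p ∂μ := by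
    refine lintegral_congr fun y => ?_
    rw [← ENNReal.rpow_mul, hcj.sub_one_mul_conj]
    congr 1
    rw [← enorm_eq_nnnorm, ← ofReal_norm, Real.norm_of_nonneg (hWnn y)]
  -- triangle inequality for eLpNorm of W
  have hq1 : (1:ℝ≥0∞) ≤ ENNReal.ofReal p := ENNReal.one_le_ofReal.2 hp.le
  have m1 : AEStronglyMeasurable (fun _ : X => (1:ℝ)) μ := aestronglyMeasurable_const
  have m2 : AEStronglyMeasurable (fun y : X => ‖y‖) μ := aestronglyMeasurable_id.norm
  have m3 : AEStronglyMeasurable (fun y => ‖θ₁ y‖) μ := h₁.1.norm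
  have m4 : AEStronglyMeasurable (fun y => ‖θ₂ y‖) μ := h₂.1.norm
  have hc1 : eLpNorm (fun _ : X => (1:ℝ)) (ENNReal.ofReal p) μ = 1 := by
    rw [eLpNorm_const (1:ℝ) hq0 (IsProbabilityMeasure.ne_zero μ)]
    simp [measure_univ]
  have hsnW : eLpNorm W (ENNReal.ofReal p) μ ≤ B := by
    have t1 : eLpNorm W (ENNReal.ofReal p) μ ≤
        eLpNorm (fun y : X => 1 + ‖y‖ + ‖θ₁ y‖) (ENNReal.ofReal p) μ
          + eLpNorm (fun y => ‖θ₂ y‖) (ENNReal.ofReal p) μ :=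
      eLpNorm_add_le ((m1.add m2).add m3) m4 hq1
    have t2 : eLpNorm (fun y : X => 1 + ‖y‖ + ‖θ₁ y‖) (ENNReal.ofReal p) μ ≤
        eLpNorm (fun y : X => 1 + ‖y‖) (ENNReal.ofReal p) μ
          + eLpNorm (fun y => ‖θ₁ y‖) (ENNReal.ofReal p) μ :=
      eLpNorm_add_le (m1.add m2) m3 hq1
    have t3 : eLpNorm (fun y : X => 1 + ‖y‖) (ENNReal.ofReal p) μ ≤
        eLpNorm (fun _ : X => (1:ℝ)) (ENNReal.ofReal p) μ
          + eLpNorm (fun y : X => ‖y‖) (ENNReal.ofReal p) μ :=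
      eLpNorm_add_le m1 m2 hq1
    have e2 : eLpNorm (fun y : X => ‖y‖) (ENNReal.ofReal p) μ
        = eLpNorm (fun y : X => y) (ENNReal.ofReal p) μ := eLpNorm_norm _
    have e3 : eLpNorm (fun y => ‖θ₁ y‖) (ENNReal.ofReal p) μ
        = eLpNorm θ₁ (ENNReal.ofReal p) μ := eLpNorm_norm _
    have e4 : eLpNorm (fun y => ‖θ₂ y‖) (ENNReal.ofReal p) μ
        = eLpNorm θ₂ (ENNReal.ofReal p) μ := eLpNorm_norm _
    rw [hc1, e2] at t3
    rw [e3] at t2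
    rw [e4] at t1
    refine le_trans t1 (le_trans (add_le_add_left (le_trans t2 (add_le_add_left t3 _)) _) hB)
  have key : (∫⁻ y, ENNReal.ofReal (|f (y + θ₁ y) - f (y + θ₂ y)|) ∂μ)
      ≤ ENNReal.ofReal L * B ^ (p - 1) * eLpNorm Δ (ENNReal.ofReal p) μ := by
    have step1 : ∀ y, ENNReal.ofReal (|f (y + θ₁ y) - f (y + θ₂ y)|)
        ≤ ENNReal.ofReal L * ((ENNReal.ofReal (W y)) ^ (p - 1) * (‖Δ y‖₊ : ℝ≥0∞)) := by
      intro y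
      refine le_trans (ENNReal.ofReal_le_ofReal (hptw y)) (le_of_eq ?_)
      have hWp : (0:ℝ) ≤ (W y) ^ (p - 1) := Real.rpow_nonneg (hWnn y) _
      rw [ENNReal.ofReal_mul (by positivity : (0:ℝ) ≤ L * (W y) ^ (p - 1)),
        ENNReal.ofReal_mul hL,
        ENNReal.ofReal_rpow_of_nonneg (hWnn y) (by linarith : (0:ℝ) ≤ p - 1),
        ofReal_norm, enorm_eq_nnnorm, mul_assoc]
    have e1 : (∫⁻ y, ((‖W y‖₊ : ℝ≥0∞)) ^ p ∂μ) ^ (1 / q')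
        = (eLpNorm W (ENNReal.ofReal p) μ) ^ (p - 1) := by
      rw [eLpNorm_eq_lintegral_rpow_enorm_toReal hq0 hqT, hqR, ← ENNReal.rpow_mul]
      congr 1
      rw [hq'def]
      field_simp
    calc (∫⁻ y, ENNReal.ofReal (|f (y + θ₁ y) - f (y + θ₂ y)|) ∂μ)
        ≤ ∫⁻ y, ENNReal.ofReal L * ((ENNReal.ofReal (W y)) ^ (p - 1) * (‖Δ y‖₊ : ℝ≥0∞)) ∂μ :=
          lintegral_mono step1
      _ = ENNReal.ofReal L * ∫⁻ y, (ENNReal.ofReal (W y)) ^ (p - 1) * (‖Δ y‖₊ : ℝ≥0∞) ∂μ :=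
          lintegral_const_mul' _ _ ENNReal.ofReal_ne_top
      _ ≤ ENNReal.ofReal L * ((∫⁻ y, ((ENNReal.ofReal (W y)) ^ (p - 1)) ^ q' ∂μ) ^ (1 / q') *
            (∫⁻ y, ((‖Δ y‖₊ : ℝ≥0∞)) ^ p ∂μ) ^ (1 / p)) := mul_le_mul_right holder _
      _ ≤ ENNReal.ofReal L * (B ^ (p - 1) * eLpNorm Δ (ENNReal.ofReal p) μ) := by
          refine mul_le_mul_right (mul_le_mul' ?_ (le_of_eq hFac2)) _
          rw [hWint, e1]
          exact ENNReal.rpow_le_rpow hsnW (by linarith)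
      _ = ENNReal.ofReal L * B ^ (p - 1) * eLpNorm Δ (ENNReal.ofReal p) μ := by ring
  have hRne : ENNReal.ofReal L * B ^ (p - 1) * eLpNorm Δ (ENNReal.ofReal p) μ ≠ ⊤ :=
    ENNReal.mul_ne_top (ENNReal.mul_ne_top ENNReal.ofReal_ne_top
      (ENNReal.rpow_lt_top_of_nonneg (by linarith) hBt).ne) hΔ.2.ne
  have habs : |(∫ y, f (y + θ₁ y) ∂μ) - ∫ y, f (y + θ₂ y) ∂μ|
      ≤ ∫ y, |f (y + θ₁ y) - f (y + θ₂ y)| ∂μ := by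
    rw [← integral_sub I₁ I₂]
    simpa [Real.norm_eq_abs] using
      norm_integral_le_integral_norm (fun y => f (y + θ₁ y) - f (y + θ₂ y)) (μ := μ)
  have heq : ENNReal.ofReal (∫ y, |f (y + θ₁ y) - f (y + θ₂ y)| ∂μ)
      = ∫⁻ y, ENNReal.ofReal (|f (y + θ₁ y) - f (y + θ₂ y)|) ∂μ :=
    ofReal_integral_eq_lintegral_ofReal (I₁.sub I₂).abs
      (Eventually.of_forall fun y => abs_nonneg _)
  have hfin : ∫ y, |f (y + θ₁ y) - f (y + θ₂ y)| ∂μ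
      ≤ (ENNReal.ofReal L * B ^ (p - 1) * eLpNorm Δ (ENNReal.ofReal p) μ).toReal := by
    have h3 := ENNReal.toReal_mono hRne (heq ▸ key)
    rwa [ENNReal.toReal_ofReal (integral_nonneg fun y => abs_nonneg _)] at h3
  exact le_trans habs hfin

end Aux2


section Aux3

variable {p L : ℝ} {μ : Measure X} {f : X → ℝ}

lemma coe_ennreal_eq_coe_toReal {b : ℝ≥0∞} (hb : b ≠ ⊤) :
    ((b : EReal)) = ((b.toReal : ℝ) : EReal) := by
  have h2 : ((b : ℝ≥0∞) : EReal) ≠ ⊤ := by simp [EReal.coe_ennreal_eq_top_iff, hb]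
  have h3 : ((b : ℝ≥0∞) : EReal) ≠ ⊥ :=
    (lt_of_lt_of_le (by simp : (⊥ : EReal) < 0) (EReal.coe_ennreal_nonneg b)).ne'
  calc ((b : ℝ≥0∞) : EReal) = (((b : ℝ≥0∞) : EReal).toReal : EReal) :=
        (EReal.coe_toReal h2 h3).symm
    _ = ((b.toReal : ℝ) : EReal) := by rw [EReal.toReal_coe_ennreal]

lemma lpnorm_nonneg {θ : X → X} : 0 ≤ lpnorm μ p θ :=
  Real.rpow_nonneg (integral_nonneg fun y => Real.rpow_nonneg (norm_nonneg _) _) _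

lemma lpnorm_eq (hp : 1 < p) {θ : X → X} (hθ : MemLp θ (ENNReal.ofReal p) μ) :
    lpnorm μ p θ = (eLpNorm θ (ENNReal.ofReal p) μ).toReal := by
  have hp0 : (0:ℝ) < p := lt_trans zero_lt_one hp
  have hq0 : (ENNReal.ofReal p) ≠ 0 := by simp [ENNReal.ofReal_eq_zero, not_le, hp0]
  have hint : ∫ y, ‖θ y‖ ^ p ∂μ = (∫⁻ y, ((‖θ y‖₊ : ℝ≥0∞)) ^ p ∂μ).toReal := by
    rw [integral_eq_lintegral_of_nonneg_ae
      (Eventually.of_forall fun y => Real.rpow_nonneg (norm_nonneg _) p)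
      ((Real.continuous_rpow_const hp0.le).comp_aestronglyMeasurable hθ.1.norm)]
    congr 1
    refine lintegral_congr fun y => ?_
    rw [← enorm_eq_nnnorm, ← ofReal_norm, ← ENNReal.ofReal_rpow_of_nonneg (norm_nonneg _) hp0.le]
  show (∫ y, ‖θ y‖ ^ p ∂μ) ^ (1 / p) = (eLpNorm θ (ENNReal.ofReal p) μ).toReal
  rw [hint, eLpNorm_eq_lintegral_rpow_enorm_toReal hq0 ENNReal.ofReal_ne_top,
    ENNReal.toReal_ofReal hp0.le, ENNReal.toReal_rpow]
  rfl

lemma A_map (hfc : Continuous f) {θ : X → X} (hθ : AEStronglyMeasurable θ μ) :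
    ∫ x, f x ∂(μ.map fun y => y + θ y) = ∫ y, f (y + θ y) ∂μ :=
  integral_map (aemeasurable_id.add hθ.aemeasurable) hfc.aestronglyMeasurable

end Aux3


theorem stmt9 (p : ℝ) (hp : 1 < p)
    (μ : Measure X) (hμ : μ ∈ Pp (X := X) p)
    (φ : ℝ → ℝ≥0∞) (hmono : MonotoneOn φ (Ici (0 : ℝ))) (hzero : φ 0 = 0)
    (hgrowth : 0 < liminf (fun v : ℝ => φ v / ENNReal.ofReal (v ^ p)) atTop)
    (Θ : ℕ → Set (X → X)) (hincr : ∀ n : ℕ, Θ n ⊆ Θ (n + 1))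
    (hsub : ∀ n : ℕ, ∀ g ∈ Θ n, MemLp g (ENNReal.ofReal p) μ)
    (hdense : ∀ g : X → X, MemLp g (ENNReal.ofReal p) μ → ∀ ε : ℝ≥0∞, 0 < ε →
      ∃ n : ℕ, ∃ θ ∈ Θ n, eLpNorm (fun x => g x - θ x) (ENNReal.ofReal p) μ < ε)
    (hzeroΘ : ∃ n : ℕ, (fun _ : X => (0 : X)) ∈ Θ n)
    (h : ℝ) (hh : 0 < h) (f : X → ℝ) (hf : MemLipP p f) :
    Monotone (fun n : ℕ => ITheta μ φ p (Θ n) h f) ∧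
    Tendsto (fun n : ℕ => ITheta μ φ p (Θ n) h f) atTop
      (𝓝 (ITheta μ φ p {g : X → X | MemLp g (ENNReal.ofReal p) μ} h f)) := by
  obtain ⟨L, hL, hLip⟩ := hf
  haveI : IsProbabilityMeasure μ := hμ.1
  have hp0 : (0:ℝ) < p := lt_trans zero_lt_one hp
  have hq0 : (ENNReal.ofReal p) ≠ 0 := by simp [ENNReal.ofReal_eq_zero, not_le, hp0]
  have hqT : (ENNReal.ofReal p) ≠ ⊤ := ENNReal.ofReal_ne_top
  have hq1 : (1:ℝ≥0∞) ≤ ENNReal.ofReal p := ENNReal.one_le_ofReal.2 hp.le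
  have hfc : Continuous f := lipP_continuous hp hL hLip
  have hΘmono : Monotone Θ := monotone_nat_of_le_succ fun n => hincr n
  have hmonoI : Monotone (fun n : ℕ => ITheta μ φ p (Θ n) h f) := by
    intro m n hmn
    simp only [ITheta]
    exact biSup_mono fun θ hθ => hΘmono hmn hθ
  refine ⟨hmonoI, ?_⟩
  set T := ⨆ n : ℕ, ITheta μ φ p (Θ n) h f with hT
  have hle_T : ∀ n : ℕ, ∀ θ' ∈ Θ n,
      ((∫ x, f x ∂(μ.map fun y => y + θ' y) : ℝ) : EReal)
        - ((phih φ h (lpnorm μ p θ') : ℝ≥0∞) : EReal) ≤ T := by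
    intro n θ' hθ'
    refine le_trans ?_ (le_iSup (fun n => ITheta μ φ p (Θ n) h f) n)
    simp only [ITheta]
    exact le_iSup₂ (f := fun (θ'' : X → X) (_ : θ'' ∈ Θ n) =>
      ((∫ x, f x ∂(μ.map fun y => y + θ'' y) : ℝ) : EReal)
        - ((phih φ h (lpnorm μ p θ'') : ℝ≥0∞) : EReal)) θ' hθ'
  have hkey : T = ITheta μ φ p {g : X → X | MemLp g (ENNReal.ofReal p) μ} h f := by
    refine le_antisymm (iSup_le fun n => ?_) ?_
    · simp only [ITheta]
      exact biSup_mono fun θ hθ => hsub n θ hθ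
    · simp only [ITheta]
      refine iSup₂_le fun θ hθ => ?_
      simp only [mem_setOf_eq] at hθ
      set b := phih φ h (lpnorm μ p θ) with hb
      by_cases hbT : b = ⊤
      · have hbtop : ((b : ℝ≥0∞) : EReal) = ⊤ := by rw [hbT]; exact EReal.coe_ennreal_top
        rw [hbtop, EReal.sub_top]
        exact bot_le
      -- finite penalty case
      have hbE : ((b : ℝ≥0∞) : EReal) = ((b.toReal : ℝ) : EReal) := coe_ennreal_eq_coe_toReal hbT
      set Ath := ∫ y, f (y + θ y) ∂μ with hAth
      have hmapθ : ∫ x, f x ∂(μ.map fun y => y + θ y) = Ath := A_map hfc hθ.1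
      have claim : ∀ ε : ℝ, 0 < ε → ∃ n : ℕ, ∃ θ' ∈ Θ n,
          phih φ h (lpnorm μ p θ') ≠ ⊤ ∧
          Ath - b.toReal - ε ≤ (∫ y, f (y + θ' y) ∂μ) - (phih φ h (lpnorm μ p θ')).toReal := by
        intro ε hε
        set N := eLpNorm θ (ENNReal.ofReal p) μ with hN
        have hNt : N ≠ ⊤ := hθ.2.ne
        have hlp : lpnorm μ p θ = N.toReal := lpnorm_eq hp hθ
        by_cases ht0 : lpnorm μ p θ = 0
        · -- zero-norm case
          obtain ⟨n0, h0Θ⟩ := hzeroΘ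
          have hlp0 : lpnorm μ p (fun _ : X => (0:X)) = 0 := by
            simp [lpnorm, Real.zero_rpow hp0.ne', Real.zero_rpow (one_div_ne_zero hp0.ne'),
              Real.zero_rpow (inv_ne_zero hp0.ne')]
          have hphi0 : phih φ h 0 = 0 := by simp [phih, zero_div, hzero]
          refine ⟨n0, (fun _ => (0:X)), h0Θ, ?_, ?_⟩
          · rw [hlp0, hphi0]; exact ENNReal.zero_ne_top
          · have hN0 : N = 0 := by
              rw [hlp] at ht0
              rcases (ENNReal.toReal_eq_zero_iff _).1 ht0 with h' | h'
              · exact h'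
              · exact absurd h' hNt
            have hae : θ =ᵐ[μ] (fun _ => (0:X)) := by
              have := (eLpNorm_eq_zero_iff hθ.1 hq0).1 (by rw [← hN]; exact hN0)
              exact this
            have hAeq : Ath = ∫ y, f (y + (0:X)) ∂μ := by
              rw [hAth]
              refine integral_congr_ae (hae.mono fun y hy => ?_)
              simp only [hy]
            rw [hlp0, hphi0]
            simp only [ENNReal.toReal_zero]
            rw [← hAeq]
            have hbnn : (0:ℝ) ≤ b.toReal := ENNReal.toReal_nonneg
            linarith
        · -- positive-norm case
          have htpos : 0 < lpnorm μ p θ := lt_of_le_of_ne lpnorm_nonneg (Ne.symm ht0)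
          set t := lpnorm μ p θ with htdef
          have hNofReal : N = ENNReal.ofReal t := by
            rw [hlp, ENNReal.ofReal_toReal hNt]
          have hid := memLp_id hp hμ
          set Kid := eLpNorm (fun x : X => x) (ENNReal.ofReal p) μ with hKid
          set B₀ : ℝ≥0∞ := 2 + Kid + 2 * N with hB₀
          have hB₀t : B₀ ≠ ⊤ := by
            rw [hB₀]
            refine ENNReal.add_ne_top.2 ⟨ENNReal.add_ne_top.2 ⟨?_, hid.2.ne⟩, ?_⟩
            · exact ENNReal.ofNat_ne_top
            · exact ENNReal.mul_ne_top ENNReal.ofNat_ne_top hNt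
          set c := (ENNReal.ofReal L * B₀ ^ (p - 1)).toReal with hc
          have hc0 : 0 ≤ c := ENNReal.toReal_nonneg
          set δ := min (1/2 : ℝ) (ε / (2 * (c * t + 1))) with hδdef
          have hδpos : 0 < δ := lt_min (by norm_num) (div_pos hε (by positivity))
          have hδlt1 : δ < 1 := lt_of_le_of_lt (min_le_left _ _) (by norm_num)
          have hδle : δ ≤ ε / (2 * (c * t + 1)) := min_le_right _ _
          set θδ : X → X := fun y => (1 - δ) • θ y with hθδ
          have hθδmem : MemLp θδ (ENNReal.ofReal p) μ := hθ.const_smul (1 - δ)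
          have hsmul : eLpNorm θδ (ENNReal.ofReal p) μ = ENNReal.ofReal (1 - δ) * N := by
            rw [show θδ = (1 - δ) • θ from rfl, eLpNorm_const_smul,
              Real.enorm_eq_ofReal (by linarith : (0:ℝ) ≤ 1 - δ), hN]
          have hθδle : eLpNorm θδ (ENNReal.ofReal p) μ ≤ N := by
            rw [hsmul]
            calc ENNReal.ofReal (1 - δ) * N ≤ 1 * N :=
                  mul_le_mul_left (ENNReal.ofReal_le_one.2 (by linarith)) N
              _ = N := one_mul N
          have hdiff : (fun y => θ y - θδ y) = fun y => δ • θ y := by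
            funext y
            show θ y - (1 - δ) • θ y = δ • θ y
            rw [sub_smul, one_smul, sub_sub_cancel]
          have hdiffnorm : eLpNorm (fun y => θ y - θδ y) (ENNReal.ofReal p) μ
              = ENNReal.ofReal δ * N := by
            rw [hdiff, show (fun y => δ • θ y) = δ • θ from rfl, eLpNorm_const_smul,
              Real.enorm_eq_ofReal hδpos.le, hN]
          have hB1 : 1 + Kid + eLpNorm θ (ENNReal.ofReal p) μ
              + eLpNorm θδ (ENNReal.ofReal p) μ ≤ B₀ := by
            rw [hB₀]
            calc 1 + Kid + eLpNorm θ (ENNReal.ofReal p) μ + eLpNorm θδ (ENNReal.ofReal p) μ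
                ≤ 1 + Kid + N + N := by
                  rw [hN]
                  exact add_le_add le_rfl hθδle
              _ ≤ 2 + Kid + 2 * N := by
                  rw [two_mul]
                  calc (1:ℝ≥0∞) + Kid + N + N ≤ 2 + Kid + N + N := by
                        gcongr
                        exact one_le_two
                    _ = 2 + Kid + (N + N) := by rw [add_assoc]
          have bound1 := diffA hp hμ hL hLip hθ hθδmem hB1 hB₀t
          have hb1r : |Ath - ∫ y, f (y + θδ y) ∂μ| ≤ c * (δ * t) := by
            refine le_trans bound1 (le_of_eq ?_)
            have e : (ENNReal.ofReal δ * N).toReal = δ * N.toReal := by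
              rw [ENNReal.toReal_mul, ENNReal.toReal_ofReal hδpos.le]
            rw [hdiffnorm, ENNReal.toReal_mul, e, ← hc, ← hlp]
          have hple1 : c * (δ * t) ≤ ε / 2 := by
            have hct : (0:ℝ) ≤ c * t := by positivity
            have h1 : c * t * δ ≤ c * t * (ε / (2 * (c * t + 1))) :=
              mul_le_mul_of_nonneg_left hδle hct
            have h2 : c * t * (ε / (2 * (c * t + 1))) ≤ ε / 2 := by
              rw [mul_div_assoc'] at *
              rw [div_le_div_iff₀ (by positivity) (by norm_num : (0:ℝ) < 2)]
              nlinarith [hε.le, hct]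
            calc c * (δ * t) = c * t * δ := by ring
              _ ≤ ε / 2 := le_trans h1 h2
          have hδt : 0 < δ * t := mul_pos hδpos htpos
          set η : ℝ≥0∞ := min (ENNReal.ofReal (δ * t))
            (min 1 (ENNReal.ofReal (ε / (2 * (c + 1))))) with hη
          have hηpos : 0 < η :=
            lt_min (ENNReal.ofReal_pos.2 hδt)
              (lt_min zero_lt_one (ENNReal.ofReal_pos.2 (by positivity)))
          obtain ⟨n, θ', hθ'Θ, hclose⟩ := hdense θδ hθδmem η hηpos
          have hθ' : MemLp θ' (ENNReal.ofReal p) μ := hsub n θ' hθ'Θ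
          have hdle := hclose.le
          have hθ'le : eLpNorm θ' (ENNReal.ofReal p) μ ≤ ENNReal.ofReal t := by
            have heqθ' : θ' = fun x => θδ x + (θ' x - θδ x) := by
              funext x; abel
            have tri : eLpNorm θ' (ENNReal.ofReal p) μ ≤
                eLpNorm θδ (ENNReal.ofReal p) μ
                  + eLpNorm (fun x => θ' x - θδ x) (ENNReal.ofReal p) μ := by
              conv_lhs => rw [heqθ']
              exact eLpNorm_add_le hθδmem.1 (hθ'.1.sub hθδmem.1) hq1
            have hcomm : eLpNorm (fun x => θ' x - θδ x) (ENNReal.ofReal p) μ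
                = eLpNorm (fun x => θδ x - θ' x) (ENNReal.ofReal p) μ :=
              eLpNorm_sub_comm θ' θδ (ENNReal.ofReal p) μ
            have hd2 : eLpNorm (fun x => θδ x - θ' x) (ENNReal.ofReal p) μ
                ≤ ENNReal.ofReal (δ * t) := le_trans hdle (min_le_left _ _)
            calc eLpNorm θ' (ENNReal.ofReal p) μ
                ≤ eLpNorm θδ (ENNReal.ofReal p) μ
                  + eLpNorm (fun x => θ' x - θδ x) (ENNReal.ofReal p) μ := tri
              _ ≤ ENNReal.ofReal (1 - δ) * ENNReal.ofReal t + ENNReal.ofReal (δ * t) := by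
                  refine add_le_add (le_of_eq ?_) ?_
                  · rw [hsmul, hNofReal]
                  · rw [hcomm]; exact hd2
              _ = ENNReal.ofReal t := by
                  rw [← ENNReal.ofReal_mul (by linarith : (0:ℝ) ≤ 1 - δ),
                    ← ENNReal.ofReal_add (by nlinarith : (0:ℝ) ≤ (1 - δ) * t)
                      (by positivity : (0:ℝ) ≤ δ * t)]
                  congr 1; ring
          have hlpθ' : lpnorm μ p θ' ≤ t := by
            rw [lpnorm_eq hp hθ']
            have h5 := ENNReal.toReal_mono ENNReal.ofReal_ne_top hθ'le
            rwa [ENNReal.toReal_ofReal htpos.le] at h5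
          have hb'le : phih φ h (lpnorm μ p θ') ≤ b := by
            rw [hb]
            simp only [phih]
            refine mul_le_mul_right ?_ _
            refine hmono (div_nonneg lpnorm_nonneg hh.le) (div_nonneg htpos.le hh.le) ?_
            gcongr
          have hb'T : phih φ h (lpnorm μ p θ') ≠ ⊤ :=
            (lt_of_le_of_lt hb'le (lt_top_iff_ne_top.2 hbT)).ne
          have hB2 : 1 + Kid + eLpNorm θδ (ENNReal.ofReal p) μ
              + eLpNorm θ' (ENNReal.ofReal p) μ ≤ B₀ := by
            rw [hB₀]
            have h1 : eLpNorm θ' (ENNReal.ofReal p) μ ≤ N + 1 := by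
              refine le_trans hθ'le ?_
              rw [← hNofReal]
              exact self_le_add_right N 1
            calc 1 + Kid + eLpNorm θδ (ENNReal.ofReal p) μ + eLpNorm θ' (ENNReal.ofReal p) μ
                ≤ 1 + Kid + N + (N + 1) := add_le_add (add_le_add le_rfl hθδle) h1
              _ = 2 + Kid + 2 * N := by ring
          have bound2 := diffA hp hμ hL hLip hθδmem hθ' hB2 hB₀t
          have hb2r : |(∫ y, f (y + θδ y) ∂μ) - ∫ y, f (y + θ' y) ∂μ| ≤ ε / 2 := by
            refine le_trans bound2 ?_
            have hd3 : eLpNorm (fun y => θδ y - θ' y) (ENNReal.ofReal p) μ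
                ≤ ENNReal.ofReal (ε / (2 * (c + 1))) :=
              le_trans hdle (le_trans (min_le_right _ _) (min_le_right _ _))
            calc (ENNReal.ofReal L * B₀ ^ (p - 1)
                  * eLpNorm (fun y => θδ y - θ' y) (ENNReal.ofReal p) μ).toReal
                = c * (eLpNorm (fun y => θδ y - θ' y) (ENNReal.ofReal p) μ).toReal := by
                  rw [ENNReal.toReal_mul, ← hc]
              _ ≤ c * (ε / (2 * (c + 1))) :=
                  mul_le_mul_of_nonneg_left
                    (ENNReal.toReal_le_of_le_ofReal (by positivity) hd3) hc0
              _ ≤ ε / 2 := by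
                  have he : c * (ε / (2 * (c + 1))) = (c * ε) / (2 * (c + 1)) := by ring
                  rw [he, div_le_div_iff₀ (by positivity) (by norm_num : (0:ℝ) < 2)]
                  nlinarith [hε.le, hc0]
          refine ⟨n, θ', hθ'Θ, hb'T, ?_⟩
          have hbtr : (phih φ h (lpnorm μ p θ')).toReal ≤ b.toReal :=
            ENNReal.toReal_mono hbT hb'le
          have htot : |Ath - ∫ y, f (y + θ' y) ∂μ| ≤ ε := by
            calc |Ath - ∫ y, f (y + θ' y) ∂μ|
                ≤ |Ath - ∫ y, f (y + θδ y) ∂μ|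
                  + |(∫ y, f (y + θδ y) ∂μ) - ∫ y, f (y + θ' y) ∂μ| := abs_sub_le _ _ _
              _ ≤ ε / 2 + ε / 2 := add_le_add (le_trans hb1r hple1) hb2r
              _ = ε := by ring
          have habs := abs_le.1 htot
          linarith [habs.2]
      -- deduce the inequality from the claim
      rw [hmapθ, hbE, ← EReal.coe_sub]
      by_contra hcon
      push_neg at hcon
      obtain ⟨z, hz1, hz2⟩ := exists_between hcon
      have hzt : z ≠ ⊤ := (hz2.trans (EReal.coe_lt_top _)).ne
      have hzb : z ≠ ⊥ := by
        intro hzb'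
        rw [hzb'] at hz1
        exact absurd hz1 (by simp)
      have hzr : (z.toReal : EReal) = z := EReal.coe_toReal hzt hzb
      have hzlt : z.toReal < Ath - b.toReal := by
        rw [← hzr] at hz2
        exact_mod_cast hz2
      obtain ⟨n, θ', hθ'Θ, hb'T, hineq⟩ := claim (Ath - b.toReal - z.toReal) (by linarith)
      have hθ'mem : MemLp θ' (ENNReal.ofReal p) μ := hsub n θ' hθ'Θ
      have hzval : z.toReal ≤ (∫ y, f (y + θ' y) ∂μ) - (phih φ h (lpnorm μ p θ')).toReal := by
        linarith
      have hEθ' : ((∫ x, f x ∂(μ.map fun y => y + θ' y) : ℝ) : EReal)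
          - ((phih φ h (lpnorm μ p θ') : ℝ≥0∞) : EReal)
          = (((∫ y, f (y + θ' y) ∂μ) - (phih φ h (lpnorm μ p θ')).toReal : ℝ) : EReal) := by
        rw [A_map hfc hθ'mem.1, coe_ennreal_eq_coe_toReal hb'T, ← EReal.coe_sub]
      have hfinal : z ≤ T := by
        calc z = (z.toReal : EReal) := hzr.symm
          _ ≤ (((∫ y, f (y + θ' y) ∂μ) - (phih φ h (lpnorm μ p θ')).toReal : ℝ) : EReal) := by
              exact_mod_cast hzval
          _ = ((∫ x, f x ∂(μ.map fun y => y + θ' y) : ℝ) : EReal)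
              - ((phih φ h (lpnorm μ p θ') : ℝ≥0∞) : EReal) := hEθ'.symm
          _ ≤ T := hle_T n θ' hθ'Θ
      exact absurd hfinal (not_le.2 hz1)
  rw [← hkey]
  exact tendsto_atTop_iSup hmonoI
end
end

section
/- Let f ∈ Lip_p. Then there exist h₀ > 0 and a ≥ 0 (depending only on f and the penalty function φ) such that for all h ∈ (0,h₀], I(h)f = sup over ν ∈ P_p with W_p(μ,ν) ≤ ah of ( ∫_X f dν − φ_h(W_p(μ,ν)) ). -/
open MeasureTheory Filter Set
open scoped Topology ENNReal NNReal RealInnerProductSpace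

noncomputable section

variable {X : Type*} [NormedAddCommGroup X] [InnerProductSpace ℝ X]
  [SecondCountableTopology X] [CompleteSpace X] [MeasurableSpace X] [BorelSpace X]

section AuxLemmas

open Real

lemma aux_real_two_rpow {t q : ℝ} (ht : 0 ≤ t) (hq : 0 ≤ q) :
    (1 + t) ^ q ≤ 2 ^ q * (1 + t ^ q) := by
  have htp : (0:ℝ) ≤ t ^ q := Real.rpow_nonneg ht q
  have hm : (0:ℝ) ≤ max 1 t := le_trans zero_le_one (le_max_left _ _)
  have h1 : (1:ℝ) + t ≤ 2 * max 1 t := by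
    rcases le_total 1 t with h | h
    · rw [max_eq_right h]; linarith
    · rw [max_eq_left h]; linarith
  have h2 : (1 + t) ^ q ≤ (2 * max 1 t) ^ q := Real.rpow_le_rpow (by linarith) h1 hq
  rw [Real.mul_rpow (by norm_num) hm] at h2
  refine h2.trans (mul_le_mul_of_nonneg_left ?_ (Real.rpow_nonneg (by norm_num) q))
  rcases le_total 1 t with h | h
  · rw [max_eq_right h]; linarith
  · rw [max_eq_left h, Real.one_rpow]; linarith

lemma aux_real_three_rpow {a b q : ℝ} (ha : 0 ≤ a) (hb : 0 ≤ b) (hq : 0 ≤ q) :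
    (1 + a + b) ^ q ≤ 3 ^ q * (1 + a ^ q + b ^ q) := by
  have hap : (0:ℝ) ≤ a ^ q := Real.rpow_nonneg ha q
  have hbp : (0:ℝ) ≤ b ^ q := Real.rpow_nonneg hb q
  have hM0 : (0:ℝ) ≤ max (max 1 a) b :=
    le_trans zero_le_one ((le_max_left 1 a).trans (le_max_left _ _))
  have h1 : 1 + a + b ≤ 3 * max (max 1 a) b := by
    have l1 : (1:ℝ) ≤ max (max 1 a) b := (le_max_left 1 a).trans (le_max_left _ _)
    have l2 : a ≤ max (max 1 a) b := (le_max_right 1 a).trans (le_max_left _ _)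
    have l3 : b ≤ max (max 1 a) b := le_max_right _ _
    linarith
  have h2 : (1 + a + b) ^ q ≤ (3 * max (max 1 a) b) ^ q :=
    Real.rpow_le_rpow (by linarith) h1 hq
  rw [Real.mul_rpow (by norm_num) hM0] at h2
  refine h2.trans (mul_le_mul_of_nonneg_left ?_ (Real.rpow_nonneg (by norm_num) q))
  rcases max_cases (max 1 a) b with ⟨hEq, _⟩ | ⟨hEq, _⟩
  · rw [hEq]
    rcases max_cases 1 a with ⟨hE2, _⟩ | ⟨hE2, _⟩
    · rw [hE2, Real.one_rpow]; linarith
    · rw [hE2]; linarith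
  · rw [hEq]; linarith

lemma aux_ennreal_add_rpow {a b : ℝ≥0∞} {q : ℝ} (hq : 0 ≤ q) :
    (a + b) ^ q ≤ 2 ^ q * (a ^ q + b ^ q) := by
  have h1 : a + b ≤ 2 * max a b := by
    rcases le_total a b with h | h
    · rw [max_eq_right h, two_mul]; exact add_le_add h le_rfl
    · rw [max_eq_left h, two_mul]; exact add_le_add le_rfl h
  have h2 := ENNReal.rpow_le_rpow h1 hq
  rw [ENNReal.mul_rpow_of_nonneg _ _ hq] at h2
  refine h2.trans (mul_le_mul_right ?_ _)
  rcases le_total a b with h | h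
  · rw [max_eq_right h]; exact le_add_self
  · rw [max_eq_left h]; exact le_self_add

end AuxLemmas

section RealConstLemmas

lemma aux_one_le_rpow {x e : ℝ} (hx : 1 ≤ x) (he : 0 ≤ e) : 1 ≤ x ^ e := by
  calc (1:ℝ) = 1 ^ e := (Real.one_rpow e).symm
    _ ≤ x ^ e := Real.rpow_le_rpow zero_le_one hx he

lemma aux_K_bound {p : ℝ} (hp : 1 < p) {L m w : ℝ} (hL0 : 0 ≤ L) (hm : 0 ≤ m) (hw : 0 ≤ w) :
    L * (3 ^ p * (1 + m + (m ^ (1/p) + w) ^ p)) ^ (1 / Real.conjExponent p)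
      ≤ (max 1 (L * (3 ^ p * ((1 + m) + (m ^ (1/p) + 1) ^ p)) ^ (1 / Real.conjExponent p)))
        * (1 + w) ^ (p - 1) := by
  have hp0 : (0:ℝ) < p := lt_trans zero_lt_one hp
  have hpq : p.HolderConjugate (Real.conjExponent p) := Real.HolderConjugate.conjExponent hp
  set q' := Real.conjExponent p with hq'
  have hq'0 : (0:ℝ) < q' := hpq.symm.pos
  have hmp : (0:ℝ) ≤ m ^ (1/p) := Real.rpow_nonneg hm _
  have h1 : m ^ (1/p) + w ≤ (m ^ (1/p) + 1) * (1 + w) := by nlinarith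
  have h2 : (m ^ (1/p) + w) ^ p ≤ (m ^ (1/p) + 1) ^ p * (1 + w) ^ p := by
    rw [← Real.mul_rpow (by linarith) (by linarith)]
    exact Real.rpow_le_rpow (by linarith) h1 hp0.le
  have h3 : (1:ℝ) ≤ (1 + w) ^ p := aux_one_le_rpow (by linarith) hp0.le
  have hBw : (0:ℝ) ≤ (1 + w) ^ p := by linarith
  have hB2 : (0:ℝ) ≤ (m ^ (1/p) + 1) ^ p := Real.rpow_nonneg (by linarith) _
  have h4 : 1 + m + (m ^ (1/p) + w) ^ p ≤ ((1 + m) + (m ^ (1/p) + 1) ^ p) * (1 + w) ^ p := by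
    nlinarith
  have h3p : (0:ℝ) ≤ 3 ^ p := Real.rpow_nonneg (by norm_num) _
  have h5 : 3 ^ p * (1 + m + (m ^ (1/p) + w) ^ p)
      ≤ (3 ^ p * ((1 + m) + (m ^ (1/p) + 1) ^ p)) * (1 + w) ^ p := by
    rw [mul_assoc]
    refine mul_le_mul_of_nonneg_left h4 h3p
  have h6 : (3 ^ p * (1 + m + (m ^ (1/p) + w) ^ p)) ^ (1 / q')
      ≤ (3 ^ p * ((1 + m) + (m ^ (1/p) + 1) ^ p)) ^ (1 / q') * (1 + w) ^ (p - 1) := by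
    have hnn : (0:ℝ) ≤ 3 ^ p * (1 + m + (m ^ (1/p) + w) ^ p) := by
      have : (0:ℝ) ≤ (m ^ (1/p) + w) ^ p := Real.rpow_nonneg (by linarith) _
      positivity
    have := Real.rpow_le_rpow hnn h5 (by positivity : (0:ℝ) ≤ 1 / q')
    refine le_trans this ?_
    rw [Real.mul_rpow (by positivity) hBw, ← Real.rpow_mul (by linarith), mul_one_div,
      hpq.div_conj_eq_sub_one]
  calc L * (3 ^ p * (1 + m + (m ^ (1/p) + w) ^ p)) ^ (1 / q')
      ≤ L * ((3 ^ p * ((1 + m) + (m ^ (1/p) + 1) ^ p)) ^ (1 / q') * (1 + w) ^ (p - 1)) :=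
        mul_le_mul_of_nonneg_left h6 hL0
    _ = (L * (3 ^ p * ((1 + m) + (m ^ (1/p) + 1) ^ p)) ^ (1 / q')) * (1 + w) ^ (p - 1) := by ring
    _ ≤ _ := by
        refine mul_le_mul_of_nonneg_right (le_max_right _ _) ?_
        exact Real.rpow_nonneg (by linarith) _

lemma aux_penalty {p : ℝ} (hp : 1 < p) {K c' : ℝ} (hK : 1 ≤ K) (hc' : 0 < c') {h w : ℝ}
    (hh0 : 0 < h) (hh : h ≤ c' ^ (1/(p-1)) / (2 * K ^ (1/(p-1))))
    (hw : (2 * K ^ (1/(p-1)) / c' ^ (1/(p-1))) * h ≤ w) :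
    K * (1 + w) ^ (p - 1) * w ≤ h * (c' * (w / h) ^ p) := by
  have hp1 : (0:ℝ) < p - 1 := by linarith
  set κ := K ^ (1/(p-1)) with hκdef
  set γ := c' ^ (1/(p-1)) with hγdef
  have hκ1 : (1:ℝ) ≤ κ := aux_one_le_rpow hK (by positivity)
  have hκ0 : (0:ℝ) < κ := by linarith
  have hγ0 : (0:ℝ) < γ := Real.rpow_pos_of_pos hc' _
  have hw0 : (0:ℝ) < w := lt_of_lt_of_le (by positivity) hw
  have hA : h * (2 * κ) ≤ γ := (le_div_iff₀ (by positivity)).mp hh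
  have hB : 2 * κ * h ≤ γ * w := by
    rw [div_mul_eq_mul_div, div_le_iff₀ hγ0] at hw
    linarith
  have key : κ * (1 + w) ≤ γ * (w / h) := by
    rw [← mul_div_assoc, le_div_iff₀ hh0]
    nlinarith [mul_le_mul_of_nonneg_right hA hw0.le, hB]
  have hraise : K * (1 + w) ^ (p - 1) ≤ c' * (w / h) ^ (p - 1) := by
    have h1 := Real.rpow_le_rpow (by positivity) key hp1.le
    rw [Real.mul_rpow hκ0.le (by linarith),
      Real.mul_rpow hγ0.le (div_pos hw0 hh0).le] at h1
    rw [hκdef, hγdef, ← Real.rpow_mul (by linarith : (0:ℝ) ≤ K),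
      ← Real.rpow_mul hc'.le, one_div_mul_cancel hp1.ne', Real.rpow_one, Real.rpow_one] at h1
    exact h1
  have hfin : h * (c' * (w / h) ^ p) = c' * (w / h) ^ (p - 1) * w := by
    have hwh : (0:ℝ) < w / h := div_pos hw0 hh0
    rw [show p = (p - 1) + 1 by ring, Real.rpow_add hwh, Real.rpow_one]
    field_simp
    ring
  rw [hfin]
  exact mul_le_mul_of_nonneg_right hraise hw0.le

end RealConstLemmas

set_option linter.unusedSectionVars false

section MeasureAux

variable {p : ℝ}

lemma isCoupling_prod (μ ν : Measure X) [IsProbabilityMeasure μ] [IsProbabilityMeasure ν] :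
    IsCoupling μ ν (μ.prod ν) := by
  constructor
  · rw [Measure.map_fst_prod]; simp
  · rw [Measure.map_snd_prod]; simp

lemma isCoupling_diag (μ : Measure X) : IsCoupling μ μ (μ.map (fun x => (x, x))) := by
  have hd : Measurable fun x : X => (x, x) := measurable_id.prodMk measurable_id
  constructor
  · rw [Measure.map_map measurable_fst hd]
    simp [Function.comp_def]
  · rw [Measure.map_map measurable_snd hd]
    simp [Function.comp_def]

lemma IsCoupling.isProbabilityMeasure {μ ν : Measure X} {π : Measure (X × X)}
    [IsProbabilityMeasure μ] (h : IsCoupling μ ν π) : IsProbabilityMeasure π := by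
  constructor
  have h1 : π Set.univ = (π.map Prod.fst) Set.univ := by
    rw [Measure.map_apply measurable_fst MeasurableSet.univ, Set.preimage_univ]
  rw [h1, h.1, measure_univ]

lemma IsCoupling.lintegral_fst {μ ν : Measure X} {π : Measure (X × X)}
    (h : IsCoupling μ ν π) {g : X → ℝ≥0∞} (hg : Measurable g) :
    ∫⁻ q, g q.1 ∂π = ∫⁻ x, g x ∂μ := by
  rw [← h.1, lintegral_map hg measurable_fst]

lemma IsCoupling.lintegral_snd {μ ν : Measure X} {π : Measure (X × X)}
    (h : IsCoupling μ ν π) {g : X → ℝ≥0∞} (hg : Measurable g) :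
    ∫⁻ q, g q.2 ∂π = ∫⁻ x, g x ∂ν := by
  rw [← h.2, lintegral_map hg measurable_snd]

lemma meas_nnorm_rpow (hp0 : 0 ≤ p) : Measurable fun x : X => ((‖x‖₊ : ℝ≥0∞)) ^ p :=
  (ENNReal.continuous_rpow_const.comp (ENNReal.continuous_coe.comp continuous_nnnorm)).measurable

lemma meas_nnorm_sub_rpow (hp0 : 0 ≤ p) :
    Measurable fun q : X × X => ((‖q.1 - q.2‖₊ : ℝ≥0∞)) ^ p :=
  (ENNReal.continuous_rpow_const.comp
    (ENNReal.continuous_coe.comp ((continuous_fst.sub continuous_snd).nnnorm))).measurable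

/-- `Wp` as an infimum over the subtype of couplings. -/
lemma Wp_eq_iInf_subtype (hp0 : 0 < p) (μ ν : Measure X) :
    Wp p μ ν = ⨅ π : {π : Measure (X × X) // IsCoupling μ ν π},
      (∫⁻ q, ((‖q.1 - q.2‖₊ : ℝ≥0∞)) ^ p ∂π.1) ^ (1 / p) := by
  have h1p : 0 < 1 / p := by positivity
  have happ : ∀ x : ℝ≥0∞, ENNReal.orderIsoRpow (1/p) h1p x = x ^ (1/p) := fun x => rfl
  have := map_iInf (ENNReal.orderIsoRpow (1/p) h1p)
    (fun π : {π : Measure (X × X) // IsCoupling μ ν π} =>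
      ∫⁻ q, ((‖q.1 - q.2‖₊ : ℝ≥0∞)) ^ p ∂π.1)
  rw [happ] at this
  simp only [happ] at this
  rw [Wp, ← this]
  congr 1
  rw [iInf_subtype]
  rfl

lemma Wp_self (hp0 : 0 < p) (μ : Measure X) : Wp p μ μ = 0 := by
  have hd := isCoupling_diag μ
  have hint : ∫⁻ q, ((‖q.1 - q.2‖₊ : ℝ≥0∞)) ^ p ∂(μ.map (fun x => (x, x))) = 0 := by
    have hdm : Measurable fun x : X => (x, x) := measurable_id.prodMk measurable_id
    rw [lintegral_map (meas_nnorm_sub_rpow hp0.le) hdm]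
    simp [ENNReal.zero_rpow_of_pos hp0]
  have h0 : (⨅ π ∈ {π : Measure (X × X) | IsCoupling μ μ π},
      ∫⁻ q, ((‖q.1 - q.2‖₊ : ℝ≥0∞)) ^ p ∂π) = 0 := by
    refine le_antisymm ?_ zero_le
    exact le_trans (biInf_le _ hd) hint.le
  rw [Wp, h0, ENNReal.zero_rpow_of_pos (by positivity)]

end MeasureAux

set_option linter.unusedSectionVars false

section MeasureAux2

variable {p : ℝ}

lemma continuous_of_memLipP (hp1 : 1 ≤ p) {f : X → ℝ} {L : ℝ} (hL0 : 0 ≤ L)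
    (hL : ∀ x₁ x₂ : X, |f x₁ - f x₂| ≤ L * (1 + max ‖x₁‖ ‖x₂‖) ^ (p - 1) * ‖x₁ - x₂‖) :
    Continuous f := by
  refine continuous_iff_continuousAt.2 fun x => ?_
  refine continuousAt_of_locally_lipschitz zero_lt_one (L * (2 + ‖x‖) ^ (p - 1)) fun y hy => ?_
  have h := hL y x
  have hmax : max ‖y‖ ‖x‖ ≤ 1 + ‖x‖ := by
    have h1 : ‖y‖ - ‖x‖ ≤ ‖y - x‖ := norm_sub_norm_le y x
    have hd : ‖y - x‖ < 1 := by rwa [← dist_eq_norm]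
    refine max_le (by linarith) (by linarith [norm_nonneg x])
  have hb : (1 + max ‖y‖ ‖x‖) ^ (p - 1) ≤ (2 + ‖x‖) ^ (p - 1) := by
    have h0 : (0:ℝ) ≤ 1 + max ‖y‖ ‖x‖ := by positivity
    exact Real.rpow_le_rpow h0 (by linarith) (by linarith)
  rw [Real.dist_eq, dist_eq_norm]
  calc |f y - f x| ≤ L * (1 + max ‖y‖ ‖x‖) ^ (p - 1) * ‖y - x‖ := h
    _ ≤ L * (2 + ‖x‖) ^ (p - 1) * ‖y - x‖ := by
        have hn : (0:ℝ) ≤ ‖y - x‖ := norm_nonneg _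
        exact mul_le_mul_of_nonneg_right (mul_le_mul_of_nonneg_left hb hL0) hn

lemma ofReal_rpow_norm (hp0 : 0 < p) (x : X) :
    ENNReal.ofReal (‖x‖ ^ p) = (‖x‖₊ : ℝ≥0∞) ^ p := by
  rw [← ENNReal.ofReal_rpow_of_nonneg (norm_nonneg x) hp0.le, ← coe_nnnorm, ENNReal.ofReal_coe_nnreal]

lemma integrable_rpow_norm (hp0 : 0 < p) {ν : Measure X} [IsProbabilityMeasure ν]
    (hν : ∫⁻ x, (‖x‖₊ : ℝ≥0∞) ^ p ∂ν < ⊤) : Integrable (fun x : X => ‖x‖ ^ p) ν := by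
  refine ⟨(continuous_norm.rpow_const fun x => Or.inr hp0.le).aestronglyMeasurable, ?_⟩
  rw [hasFiniteIntegral_iff_ofReal (Eventually.of_forall fun x => by positivity)]
  simp_rw [ofReal_rpow_norm hp0]
  exact hν

lemma integrable_of_memLipP (hp1 : 1 < p) {f : X → ℝ} {L : ℝ} (hL0 : 0 ≤ L)
    (hL : ∀ x₁ x₂ : X, |f x₁ - f x₂| ≤ L * (1 + max ‖x₁‖ ‖x₂‖) ^ (p - 1) * ‖x₁ - x₂‖)
    {ν : Measure X} [IsProbabilityMeasure ν]
    (hν : ∫⁻ x, (‖x‖₊ : ℝ≥0∞) ^ p ∂ν < ⊤) : Integrable f ν := by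
  have hp0 : (0:ℝ) < p := lt_trans zero_lt_one hp1
  have hcont : Continuous f := continuous_of_memLipP hp1.le hL0 hL
  have hbound : ∀ x : X, ‖f x‖ ≤ |f 0| + L * 2 ^ p * (1 + ‖x‖ ^ p) := by
    intro x
    have h := hL x 0
    rw [norm_zero, sub_zero, max_eq_left (norm_nonneg x)] at h
    have h1 : |f x| ≤ |f x - f 0| + |f 0| := by
      calc |f x| = |(f x - f 0) + f 0| := by ring_nf
        _ ≤ |f x - f 0| + |f 0| := abs_add_le _ _
    have hbpos : (0:ℝ) < 1 + ‖x‖ := by positivity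
    have h2 : (1 + ‖x‖) ^ (p - 1) * ‖x‖ ≤ (1 + ‖x‖) ^ p := by
      have hxle : ‖x‖ ≤ 1 + ‖x‖ := by linarith [norm_nonneg x]
      calc (1 + ‖x‖) ^ (p - 1) * ‖x‖ ≤ (1 + ‖x‖) ^ (p - 1) * (1 + ‖x‖) :=
            mul_le_mul_of_nonneg_left hxle (Real.rpow_nonneg hbpos.le _)
        _ = (1 + ‖x‖) ^ p := by
            rw [← Real.rpow_add_one hbpos.ne' (p - 1), sub_add_cancel]
    have h3 : (1 + ‖x‖) ^ p ≤ 2 ^ p * (1 + ‖x‖ ^ p) :=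
      aux_real_two_rpow (norm_nonneg x) hp0.le
    have h4 : L * ((1 + ‖x‖) ^ (p - 1) * ‖x‖) ≤ L * (2 ^ p * (1 + ‖x‖ ^ p)) :=
      mul_le_mul_of_nonneg_left (h2.trans h3) hL0
    rw [Real.norm_eq_abs]
    calc |f x| ≤ |f x - f 0| + |f 0| := h1
      _ ≤ L * (1 + ‖x‖) ^ (p - 1) * ‖x‖ + |f 0| := by linarith [h]
      _ ≤ |f 0| + L * 2 ^ p * (1 + ‖x‖ ^ p) := by
          rw [mul_assoc] at *
          linarith [h4]
  have h5 : Integrable (fun x : X => ‖x‖ ^ p) ν := integrable_rpow_norm hp0 hν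
  have h6 : Integrable (fun x : X => |f 0| + L * 2 ^ p * (1 + ‖x‖ ^ p)) ν :=
    (integrable_const _).add (((integrable_const 1).add h5).const_mul _)
  exact Integrable.mono' h6 hcont.aestronglyMeasurable (Eventually.of_forall hbound)

end MeasureAux2

section MeasureAux3

variable {p : ℝ}

lemma lintegral_coupling_le (hp0 : 0 < p) {μ ν : Measure X} {π : Measure (X × X)}
    (hπ : IsCoupling μ ν π) :
    ∫⁻ q, ((‖q.1 - q.2‖₊ : ℝ≥0∞)) ^ p ∂π ≤
      2 ^ p * (∫⁻ x, (‖x‖₊ : ℝ≥0∞) ^ p ∂μ + ∫⁻ x, (‖x‖₊ : ℝ≥0∞) ^ p ∂ν) := by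
  have hpt : ∀ q : X × X, ((‖q.1 - q.2‖₊ : ℝ≥0∞)) ^ p ≤
      2 ^ p * ((‖q.1‖₊ : ℝ≥0∞) ^ p + (‖q.2‖₊ : ℝ≥0∞) ^ p) := by
    intro q
    have h1 : (‖q.1 - q.2‖₊ : ℝ≥0∞) ≤ (‖q.1‖₊ : ℝ≥0∞) + (‖q.2‖₊ : ℝ≥0∞) := by
      rw [← ENNReal.coe_add, ENNReal.coe_le_coe]
      exact nnnorm_sub_le _ _
    exact le_trans (ENNReal.rpow_le_rpow h1 hp0.le) (aux_ennreal_add_rpow hp0.le)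
  calc ∫⁻ q, ((‖q.1 - q.2‖₊ : ℝ≥0∞)) ^ p ∂π
      ≤ ∫⁻ q, 2 ^ p * ((‖q.1‖₊ : ℝ≥0∞) ^ p + (‖q.2‖₊ : ℝ≥0∞) ^ p) ∂π := lintegral_mono hpt
    _ = 2 ^ p * ∫⁻ q, ((‖q.1‖₊ : ℝ≥0∞) ^ p + (‖q.2‖₊ : ℝ≥0∞) ^ p) ∂π :=
        lintegral_const_mul' _ _ (ENNReal.rpow_ne_top_of_nonneg hp0.le (by norm_num))
    _ = 2 ^ p * (∫⁻ x, (‖x‖₊ : ℝ≥0∞) ^ p ∂μ + ∫⁻ x, (‖x‖₊ : ℝ≥0∞) ^ p ∂ν) := by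
        have hmf : Measurable fun q : X × X => (‖q.1‖₊ : ℝ≥0∞) ^ p :=
          (meas_nnorm_rpow hp0.le).comp measurable_fst
        rw [lintegral_add_left hmf,
          hπ.lintegral_fst (g := fun x => (‖x‖₊ : ℝ≥0∞) ^ p) (meas_nnorm_rpow hp0.le),
          hπ.lintegral_snd (g := fun x => (‖x‖₊ : ℝ≥0∞) ^ p) (meas_nnorm_rpow hp0.le)]

lemma Wp_ne_top (hp0 : 0 < p) {μ ν : Measure X}
    [IsProbabilityMeasure μ] [IsProbabilityMeasure ν]
    (hμm : ∫⁻ x, (‖x‖₊ : ℝ≥0∞) ^ p ∂μ < ⊤) (hνm : ∫⁻ x, (‖x‖₊ : ℝ≥0∞) ^ p ∂ν < ⊤) :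
    Wp p μ ν ≠ ⊤ := by
  have hle : (⨅ π ∈ {π : Measure (X × X) | IsCoupling μ ν π},
      ∫⁻ q, ((‖q.1 - q.2‖₊ : ℝ≥0∞)) ^ p ∂π) ≤
        2 ^ p * (∫⁻ x, (‖x‖₊ : ℝ≥0∞) ^ p ∂μ + ∫⁻ x, (‖x‖₊ : ℝ≥0∞) ^ p ∂ν) :=
    le_trans (biInf_le _ (isCoupling_prod μ ν)) (lintegral_coupling_le hp0 (isCoupling_prod μ ν))
  have hfin : (⨅ π ∈ {π : Measure (X × X) | IsCoupling μ ν π},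
      ∫⁻ q, ((‖q.1 - q.2‖₊ : ℝ≥0∞)) ^ p ∂π) ≠ ⊤ := by
    refine ne_top_of_le_ne_top ?_ hle
    exact ENNReal.mul_ne_top (ENNReal.rpow_ne_top_of_nonneg hp0.le (by norm_num))
      (ENNReal.add_ne_top.2 ⟨hμm.ne, hνm.ne⟩)
  rw [Wp]
  exact ENNReal.rpow_ne_top_of_nonneg (by positivity) hfin

lemma mink_coupling (hp1 : 1 ≤ p) {μ ν : Measure X} {π : Measure (X × X)}
    (hπ : IsCoupling μ ν π) :
    (∫⁻ x, (‖x‖₊ : ℝ≥0∞) ^ p ∂ν) ^ (1 / p) ≤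
      (∫⁻ x, (‖x‖₊ : ℝ≥0∞) ^ p ∂μ) ^ (1 / p) +
      (∫⁻ q, ((‖q.1 - q.2‖₊ : ℝ≥0∞)) ^ p ∂π) ^ (1 / p) := by
  have hp0 : (0:ℝ) < p := lt_of_lt_of_le zero_lt_one hp1
  have hm1 : Measurable fun q : X × X => (‖q.1‖₊ : ℝ≥0∞) :=
    (ENNReal.continuous_coe.comp (continuous_fst.nnnorm)).measurable
  have hm2 : Measurable fun q : X × X => (‖q.1 - q.2‖₊ : ℝ≥0∞) :=
    (ENNReal.continuous_coe.comp ((continuous_fst.sub continuous_snd).nnnorm)).measurable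
  have key := ENNReal.lintegral_Lp_add_le (μ := π) hm1.aemeasurable hm2.aemeasurable hp1
  simp only [Pi.add_apply] at key
  have h1 : (∫⁻ x, (‖x‖₊ : ℝ≥0∞) ^ p ∂ν) ^ (1 / p) ≤
      (∫⁻ q : X × X, ((‖q.1‖₊ : ℝ≥0∞) + (‖q.1 - q.2‖₊ : ℝ≥0∞)) ^ p ∂π) ^ (1 / p) := by
    rw [← hπ.lintegral_snd (g := fun x => (‖x‖₊ : ℝ≥0∞) ^ p) (meas_nnorm_rpow hp0.le)]
    refine ENNReal.rpow_le_rpow (lintegral_mono fun q => ?_) (by positivity)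
    refine ENNReal.rpow_le_rpow ?_ hp0.le
    rw [← ENNReal.coe_add, ENNReal.coe_le_coe, ← NNReal.coe_le_coe, NNReal.coe_add,
      coe_nnnorm, coe_nnnorm, coe_nnnorm]
    have := norm_sub_norm_le q.2 q.1
    rw [norm_sub_rev q.2 q.1] at this
    linarith
  refine le_trans h1 (le_trans key ?_)
  rw [hπ.lintegral_fst (g := fun x => (‖x‖₊ : ℝ≥0∞) ^ p) (meas_nnorm_rpow hp0.le)]

lemma mink_Wp (hp1 : 1 ≤ p) {μ ν : Measure X}
    [IsProbabilityMeasure μ] [IsProbabilityMeasure ν] :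
    (∫⁻ x, (‖x‖₊ : ℝ≥0∞) ^ p ∂ν) ^ (1 / p) ≤
      (∫⁻ x, (‖x‖₊ : ℝ≥0∞) ^ p ∂μ) ^ (1 / p) + Wp p μ ν := by
  have hp0 : (0:ℝ) < p := lt_of_lt_of_le zero_lt_one hp1
  haveI : Nonempty {π : Measure (X × X) // IsCoupling μ ν π} :=
    ⟨⟨μ.prod ν, isCoupling_prod μ ν⟩⟩
  rw [Wp_eq_iInf_subtype hp0, ENNReal.add_iInf]
  exact le_iInf fun π => mink_coupling hp1 π.2

end MeasureAux3

section GainLemma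

variable {p : ℝ}

lemma gain_coupling (hp : 1 < p) {μ ν : Measure X}
    [IsProbabilityMeasure μ] [IsProbabilityMeasure ν]
    {f : X → ℝ} {L : ℝ} (hL0 : 0 ≤ L)
    (hL : ∀ x₁ x₂ : X, |f x₁ - f x₂| ≤ L * (1 + max ‖x₁‖ ‖x₂‖) ^ (p - 1) * ‖x₁ - x₂‖)
    (hfμ : Integrable f μ) (hfν : Integrable f ν)
    {π : Measure (X × X)} (hπ : IsCoupling μ ν π) :
    ENNReal.ofReal (∫ x, f x ∂ν - ∫ x, f x ∂μ) ≤
      (ENNReal.ofReal L *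
        ((3 : ℝ≥0∞) ^ p * (1 + ∫⁻ x, (‖x‖₊ : ℝ≥0∞) ^ p ∂μ + ∫⁻ x, (‖x‖₊ : ℝ≥0∞) ^ p ∂ν))
          ^ (1 / Real.conjExponent p)) *
      (∫⁻ q, ((‖q.1 - q.2‖₊ : ℝ≥0∞)) ^ p ∂π) ^ (1 / p) := by
  have hp0 : (0:ℝ) < p := lt_trans zero_lt_one hp
  have hpq : p.HolderConjugate (Real.conjExponent p) := Real.HolderConjugate.conjExponent hp
  set q' := Real.conjExponent p with hq'
  have hq'0 : (0:ℝ) < q' := hpq.symm.pos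
  haveI : IsProbabilityMeasure π := hπ.isProbabilityMeasure
  have hcont : Continuous f := continuous_of_memLipP hp.le hL0 hL
  have hint2 : Integrable (fun q : X × X => f q.2) π := by
    have h := (integrable_map_measure hcont.aestronglyMeasurable
      measurable_snd.aemeasurable (μ := π)).mp
    rw [hπ.2] at h
    exact h hfν
  have hint1 : Integrable (fun q : X × X => f q.1) π := by
    have h := (integrable_map_measure hcont.aestronglyMeasurable
      measurable_fst.aemeasurable (μ := π)).mp
    rw [hπ.1] at h
    exact h hfμ
  have hid : ∫ x, f x ∂ν - ∫ x, f x ∂μ = ∫ q, (f q.2 - f q.1) ∂π := by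
    rw [← hπ.1, ← hπ.2,
      integral_map measurable_snd.aemeasurable hcont.aestronglyMeasurable,
      integral_map measurable_fst.aemeasurable hcont.aestronglyMeasurable,
      ← integral_sub hint2 hint1]
  have hG : ENNReal.ofReal (∫ x, f x ∂ν - ∫ x, f x ∂μ) ≤
      ∫⁻ q, ENNReal.ofReal |f q.2 - f q.1| ∂π := by
    rw [hid]
    have habs : ∫ q, (f q.2 - f q.1) ∂π ≤ ∫ q, |f q.2 - f q.1| ∂π := by
      have h1 := norm_integral_le_integral_norm (μ := π) (fun q : X × X => f q.2 - f q.1)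
      simp only [Real.norm_eq_abs] at h1
      exact (le_abs_self _).trans h1
    refine le_trans (ENNReal.ofReal_le_ofReal habs) ?_
    have habsint : Integrable (fun q : X × X => |f q.2 - f q.1|) π := (hint2.sub hint1).abs
    rw [ofReal_integral_eq_lintegral_ofReal habsint
      (Eventually.of_forall fun q => abs_nonneg _)]
  have hcont1 : Continuous fun q : X × X => ENNReal.ofReal ((1 + max ‖q.1‖ ‖q.2‖) ^ (p - 1)) := by
    refine ENNReal.continuous_ofReal.comp ?_
    refine Continuous.rpow_const ?_ fun q => Or.inr (by linarith)
    exact continuous_const.add (continuous_fst.norm.max continuous_snd.norm)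
  have hcont2 : Continuous fun q : X × X => ENNReal.ofReal ‖q.1 - q.2‖ :=
    ENNReal.continuous_ofReal.comp (continuous_fst.sub continuous_snd).norm
  have hpt : ∀ q : X × X, ENNReal.ofReal |f q.2 - f q.1| ≤
      ENNReal.ofReal L * (ENNReal.ofReal ((1 + max ‖q.1‖ ‖q.2‖) ^ (p - 1)) *
        ENNReal.ofReal ‖q.1 - q.2‖) := by
    intro q
    have h := hL q.2 q.1
    rw [max_comm ‖q.2‖ ‖q.1‖, norm_sub_rev q.2 q.1] at h
    refine le_trans (ENNReal.ofReal_le_ofReal h) ?_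
    rw [ENNReal.ofReal_mul (by positivity), ENNReal.ofReal_mul hL0, mul_assoc]
  have hHold := ENNReal.lintegral_mul_le_Lp_mul_Lq π hpq.symm hcont1.measurable.aemeasurable
    hcont2.measurable.aemeasurable
  simp only [Pi.mul_apply] at hHold
  have hsnd : ∫⁻ q : X × X, (ENNReal.ofReal ‖q.1 - q.2‖) ^ p ∂π
      = ∫⁻ q, ((‖q.1 - q.2‖₊ : ℝ≥0∞)) ^ p ∂π := by
    refine lintegral_congr fun q => ?_
    rw [← coe_nnnorm, ENNReal.ofReal_coe_nnreal]
  have hfst : ∫⁻ q : X × X, (ENNReal.ofReal ((1 + max ‖q.1‖ ‖q.2‖) ^ (p - 1))) ^ q' ∂π ≤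
      (3 : ℝ≥0∞) ^ p * (1 + ∫⁻ x, (‖x‖₊ : ℝ≥0∞) ^ p ∂μ + ∫⁻ x, (‖x‖₊ : ℝ≥0∞) ^ p ∂ν) := by
    have hEq : ∀ q : X × X, (ENNReal.ofReal ((1 + max ‖q.1‖ ‖q.2‖) ^ (p - 1))) ^ q'
        = ENNReal.ofReal ((1 + max ‖q.1‖ ‖q.2‖) ^ p) := by
      intro q
      have hb : (0:ℝ) ≤ 1 + max ‖q.1‖ ‖q.2‖ := by positivity
      rw [ENNReal.ofReal_rpow_of_nonneg (Real.rpow_nonneg hb _) hq'0.le,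
        ← Real.rpow_mul hb, hpq.sub_one_mul_conj]
    have hptb : ∀ q : X × X, ENNReal.ofReal ((1 + max ‖q.1‖ ‖q.2‖) ^ p) ≤
        (3 : ℝ≥0∞) ^ p * (1 + ENNReal.ofReal (‖q.1‖ ^ p) + ENNReal.ofReal (‖q.2‖ ^ p)) := by
      intro q
      have h1 : (1 + max ‖q.1‖ ‖q.2‖) ^ p ≤ (1 + ‖q.1‖ + ‖q.2‖) ^ p := by
        refine Real.rpow_le_rpow (by positivity) ?_ hp0.le
        have hm : max ‖q.1‖ ‖q.2‖ ≤ ‖q.1‖ + ‖q.2‖ :=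
          max_le (le_add_of_nonneg_right (norm_nonneg q.2))
            (le_add_of_nonneg_left (norm_nonneg q.1))
        linarith
      have h2 := aux_real_three_rpow (norm_nonneg q.1) (norm_nonneg q.2) hp0.le
      refine le_trans (ENNReal.ofReal_le_ofReal (h1.trans h2)) ?_
      rw [ENNReal.ofReal_mul (by positivity), ENNReal.ofReal_add (by positivity) (by positivity),
        ENNReal.ofReal_add (by norm_num) (by positivity), ENNReal.ofReal_one]
      refine mul_le_mul' (le_of_eq ?_) le_rfl
      rw [show ((3:ℝ≥0∞)) = ENNReal.ofReal 3 from (ENNReal.ofReal_ofNat 3).symm,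
        ENNReal.ofReal_rpow_of_nonneg (by norm_num) hp0.le]
    have hm1 : Measurable fun q : X × X => ENNReal.ofReal (‖q.1‖ ^ p) :=
      (ENNReal.continuous_ofReal.comp
        ((continuous_fst.norm).rpow_const fun q => Or.inr hp0.le)).measurable
    calc ∫⁻ q : X × X, (ENNReal.ofReal ((1 + max ‖q.1‖ ‖q.2‖) ^ (p - 1))) ^ q' ∂π
        = ∫⁻ q : X × X, ENNReal.ofReal ((1 + max ‖q.1‖ ‖q.2‖) ^ p) ∂π := lintegral_congr hEq
      _ ≤ ∫⁻ q : X × X, (3:ℝ≥0∞) ^ p *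
            (1 + ENNReal.ofReal (‖q.1‖ ^ p) + ENNReal.ofReal (‖q.2‖ ^ p)) ∂π :=
          lintegral_mono hptb
      _ = (3:ℝ≥0∞) ^ p * ∫⁻ q : X × X,
            (1 + ENNReal.ofReal (‖q.1‖ ^ p) + ENNReal.ofReal (‖q.2‖ ^ p)) ∂π :=
          lintegral_const_mul' _ _ (ENNReal.rpow_ne_top_of_nonneg hp0.le (by norm_num))
      _ = (3:ℝ≥0∞) ^ p * (1 + ∫⁻ x, (‖x‖₊ : ℝ≥0∞) ^ p ∂μ + ∫⁻ x, (‖x‖₊ : ℝ≥0∞) ^ p ∂ν) := by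
          congr 1
          rw [lintegral_add_left (f := fun q : X × X => 1 + ENNReal.ofReal (‖q.1‖ ^ p))
              (measurable_const.add hm1),
            lintegral_add_left (measurable_const)]
          simp_rw [ofReal_rpow_norm hp0]
          rw [lintegral_one, measure_univ,
            hπ.lintegral_fst (g := fun x => (‖x‖₊ : ℝ≥0∞) ^ p) (meas_nnorm_rpow hp0.le),
            hπ.lintegral_snd (g := fun x => (‖x‖₊ : ℝ≥0∞) ^ p) (meas_nnorm_rpow hp0.le)]
  calc ENNReal.ofReal (∫ x, f x ∂ν - ∫ x, f x ∂μ)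
      ≤ ∫⁻ q, ENNReal.ofReal |f q.2 - f q.1| ∂π := hG
    _ ≤ ∫⁻ q : X × X, ENNReal.ofReal L * (ENNReal.ofReal ((1 + max ‖q.1‖ ‖q.2‖) ^ (p - 1)) *
          ENNReal.ofReal ‖q.1 - q.2‖) ∂π := lintegral_mono hpt
    _ = ENNReal.ofReal L * ∫⁻ q : X × X, ENNReal.ofReal ((1 + max ‖q.1‖ ‖q.2‖) ^ (p - 1)) *
          ENNReal.ofReal ‖q.1 - q.2‖ ∂π := lintegral_const_mul' _ _ ENNReal.ofReal_ne_top
    _ ≤ ENNReal.ofReal L *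
          ((∫⁻ q : X × X, (ENNReal.ofReal ((1 + max ‖q.1‖ ‖q.2‖) ^ (p - 1))) ^ q' ∂π) ^ (1 / q') *
           (∫⁻ q : X × X, (ENNReal.ofReal ‖q.1 - q.2‖) ^ p ∂π) ^ (1 / p)) :=
        mul_le_mul' le_rfl hHold
    _ ≤ (ENNReal.ofReal L *
          ((3 : ℝ≥0∞) ^ p * (1 + ∫⁻ x, (‖x‖₊ : ℝ≥0∞) ^ p ∂μ + ∫⁻ x, (‖x‖₊ : ℝ≥0∞) ^ p ∂ν))
            ^ (1 / q')) *
        (∫⁻ q, ((‖q.1 - q.2‖₊ : ℝ≥0∞)) ^ p ∂π) ^ (1 / p) := by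
        rw [hsnd, ← mul_assoc]
        exact mul_le_mul' (mul_le_mul' le_rfl (ENNReal.rpow_le_rpow hfst (by positivity))) le_rfl

lemma gain_total (hp : 1 < p) {μ ν : Measure X}
    [IsProbabilityMeasure μ] [IsProbabilityMeasure ν]
    (hμm : ∫⁻ x, (‖x‖₊ : ℝ≥0∞) ^ p ∂μ < ⊤) (hνm : ∫⁻ x, (‖x‖₊ : ℝ≥0∞) ^ p ∂ν < ⊤)
    {f : X → ℝ} {L : ℝ} (hL0 : 0 ≤ L)
    (hL : ∀ x₁ x₂ : X, |f x₁ - f x₂| ≤ L * (1 + max ‖x₁‖ ‖x₂‖) ^ (p - 1) * ‖x₁ - x₂‖)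
    (hfμ : Integrable f μ) (hfν : Integrable f ν) :
    ENNReal.ofReal (∫ x, f x ∂ν - ∫ x, f x ∂μ) ≤
      (ENNReal.ofReal L *
        ((3 : ℝ≥0∞) ^ p * (1 + ∫⁻ x, (‖x‖₊ : ℝ≥0∞) ^ p ∂μ + ∫⁻ x, (‖x‖₊ : ℝ≥0∞) ^ p ∂ν))
          ^ (1 / Real.conjExponent p)) * Wp p μ ν := by
  have hp0 : (0:ℝ) < p := lt_trans zero_lt_one hp
  set c0 := ENNReal.ofReal L *
      ((3 : ℝ≥0∞) ^ p * (1 + ∫⁻ x, (‖x‖₊ : ℝ≥0∞) ^ p ∂μ + ∫⁻ x, (‖x‖₊ : ℝ≥0∞) ^ p ∂ν))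
        ^ (1 / Real.conjExponent p) with hc0
  have hper : ∀ π : {π : Measure (X × X) // IsCoupling μ ν π},
      ENNReal.ofReal (∫ x, f x ∂ν - ∫ x, f x ∂μ) ≤
        c0 * (∫⁻ q, ((‖q.1 - q.2‖₊ : ℝ≥0∞)) ^ p ∂π.1) ^ (1 / p) :=
    fun π => gain_coupling hp hL0 hL hfμ hfν π.2
  have hq'0 : (0:ℝ) < Real.conjExponent p := (Real.HolderConjugate.conjExponent hp).symm.pos
  have hc0top : c0 ≠ ⊤ := by
    refine ENNReal.mul_ne_top ENNReal.ofReal_ne_top ?_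
    refine ENNReal.rpow_ne_top_of_nonneg (one_div_nonneg.mpr hq'0.le) ?_
    refine ENNReal.mul_ne_top (ENNReal.rpow_ne_top_of_nonneg hp0.le (by norm_num)) ?_
    rw [ENNReal.add_ne_top, ENNReal.add_ne_top]
    exact ⟨⟨ENNReal.one_ne_top, hμm.ne⟩, hνm.ne⟩
  rcases eq_or_ne c0 0 with h0 | h0
  · have h := hper ⟨μ.prod ν, isCoupling_prod μ ν⟩
    rw [h0, zero_mul] at h
    rw [h0, zero_mul]
    exact h
  · have hdiv : ENNReal.ofReal (∫ x, f x ∂ν - ∫ x, f x ∂μ) / c0 ≤ Wp p μ ν := by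
      rw [Wp_eq_iInf_subtype hp0]
      refine le_iInf fun π => ENNReal.div_le_of_le_mul' ?_
      exact hper π
    have h := (ENNReal.div_le_iff_le_mul (Or.inl h0) (Or.inl hc0top)).mp hdiv
    rwa [mul_comm] at h

end GainLemma

theorem stmt11 (p : ℝ) (hp : 1 < p)
    (μ : Measure X) (hμ : μ ∈ Pp (X := X) p)
    (φ : ℝ → ℝ≥0∞) (hmono : MonotoneOn φ (Ici (0 : ℝ))) (hzero : φ 0 = 0)
    (hgrowth : 0 < liminf (fun v : ℝ => φ v / ENNReal.ofReal (v ^ p)) atTop)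
    (f : X → ℝ) (hf : MemLipP p f) :
    ∃ h₀ : ℝ, 0 < h₀ ∧ ∃ a : ℝ, 0 ≤ a ∧ ∀ h : ℝ, 0 < h → h ≤ h₀ →
      Ifun μ φ p h f =
        ⨆ ν ∈ {ν | ν ∈ Pp (X := X) p ∧ Wp p μ ν ≤ ENNReal.ofReal (a * h)},
          ((∫ x, f x ∂ν : ℝ) : EReal)
            - ((phih φ h (Wp p μ ν).toReal : ℝ≥0∞) : EReal) := by
  obtain ⟨L, hL0, hL⟩ := hf
  have hp0 : (0:ℝ) < p := lt_trans zero_lt_one hp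
  have hp1 : (0:ℝ) < p - 1 := by linarith
  have hpq : p.HolderConjugate (Real.conjExponent p) := Real.HolderConjugate.conjExponent hp
  have hq'0 : (0:ℝ) < Real.conjExponent p := hpq.symm.pos
  haveI hμP : IsProbabilityMeasure μ := hμ.1
  have hμm := hμ.2
  set m : ℝ := (∫⁻ x, (‖x‖₊ : ℝ≥0∞) ^ p ∂μ).toReal with hmdef
  have hm0 : (0:ℝ) ≤ m := ENNReal.toReal_nonneg
  have hMμ : ∫⁻ x, (‖x‖₊ : ℝ≥0∞) ^ p ∂μ = ENNReal.ofReal m := (ENNReal.ofReal_toReal hμm.ne).symm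
  set Kc : ℝ :=
    max 1 (L * (3 ^ p * ((1 + m) + (m ^ (1/p) + 1) ^ p)) ^ (1 / Real.conjExponent p)) with hKdef
  have hK1 : (1:ℝ) ≤ Kc := le_max_left _ _
  -- growth of the penalty function
  obtain ⟨r, hr0, hrl⟩ := ENNReal.lt_iff_exists_nnreal_btwn.mp hgrowth
  have hev : ∀ᶠ v : ℝ in atTop, (r : ℝ≥0∞) < φ v / ENNReal.ofReal (v ^ p) :=
    eventually_lt_of_lt_liminf hrl
  obtain ⟨V₀, hV₀⟩ := (Filter.eventually_atTop).mp hev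
  set c' : ℝ := (r : ℝ) with hc'def
  have hc'0 : (0:ℝ) < c' := by
    rw [hc'def]
    exact_mod_cast ENNReal.coe_pos.mp hr0
  have hgrow : ∀ v : ℝ, 1 ≤ v → V₀ ≤ v → ENNReal.ofReal (c' * v ^ p) ≤ φ v := by
    intro v h1v hVv
    have h := hV₀ v hVv
    have hvp : (0:ℝ) < v ^ p := Real.rpow_pos_of_pos (by linarith) p
    have hB0 : ENNReal.ofReal (v ^ p) ≠ 0 := (ENNReal.ofReal_pos.mpr hvp).ne'
    have h2 := mul_le_mul_left h.le (ENNReal.ofReal (v ^ p))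
    rw [ENNReal.div_mul_cancel hB0 ENNReal.ofReal_ne_top] at h2
    refine le_trans (le_of_eq ?_) h2
    rw [ENNReal.ofReal_mul hc'0.le, hc'def, ENNReal.ofReal_coe_nnreal]
  -- the constants
  set κ : ℝ := Kc ^ (1/(p-1)) with hκdef
  set γ : ℝ := c' ^ (1/(p-1)) with hγdef
  have hκ1 : (1:ℝ) ≤ κ := aux_one_le_rpow hK1 (by positivity)
  have hκ0 : (0:ℝ) < κ := by linarith
  have hγ0 : (0:ℝ) < γ := Real.rpow_pos_of_pos hc'0 _
  set a : ℝ := max (max V₀ 1) (2 * κ / γ) with hadef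
  have ha1 : (1:ℝ) ≤ a := (le_max_right V₀ 1).trans (le_max_left _ _)
  have ha0 : (0:ℝ) ≤ a := by linarith
  refine ⟨γ / (2 * κ), by positivity, a, ha0, ?_⟩
  intro h hh0 hhle
  refine le_antisymm ?_ ?_
  · -- hard direction : Ifun ≤ restricted sup
    rw [Ifun]
    refine iSup₂_le fun ν hν => ?_
    haveI hνP : IsProbabilityMeasure ν := hν.1
    by_cases hWle : Wp p μ ν ≤ ENNReal.ofReal (a * h)
    · exact le_biSup
        (fun ν : Measure X => ((∫ x, f x ∂ν : ℝ) : EReal)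
          - ((phih φ h (Wp p μ ν).toReal : ℝ≥0∞) : EReal))
        (show ν ∈ {ν | ν ∈ Pp (X := X) p ∧ Wp p μ ν ≤ ENNReal.ofReal (a * h)} from ⟨hν, hWle⟩)
    · -- far measures
      have hWtop : Wp p μ ν ≠ ⊤ := Wp_ne_top hp0 hμ.2 hν.2
      set w : ℝ := (Wp p μ ν).toReal with hwdef
      have hw0 : (0:ℝ) ≤ w := ENNReal.toReal_nonneg
      have hWof : Wp p μ ν = ENNReal.ofReal w := (ENNReal.ofReal_toReal hWtop).symm
      have hahw : a * h < w := by
        rw [← ENNReal.ofReal_lt_iff_lt_toReal (mul_nonneg ha0 hh0.le) hWtop]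
        exact lt_of_not_ge hWle
      have hwpos : (0:ℝ) < w := lt_trans (mul_pos (by linarith) hh0) hahw
      have hintμ : Integrable f μ := integrable_of_memLipP hp hL0 hL hμ.2
      have hintν : Integrable f ν := integrable_of_memLipP hp hL0 hL hν.2
      have hgain := gain_total hp hμ.2 hν.2 hL0 hL hintμ hintν
      -- second moment of ν in terms of w
      have hMν : ∫⁻ x, (‖x‖₊ : ℝ≥0∞) ^ p ∂ν ≤ ENNReal.ofReal ((m ^ (1/p) + w) ^ p) := by
        have h1 := mink_Wp (p := p) (μ := μ) (ν := ν) hp.le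
        have h2 : (∫⁻ x, (‖x‖₊ : ℝ≥0∞) ^ p ∂ν)
            = ((∫⁻ x, (‖x‖₊ : ℝ≥0∞) ^ p ∂ν) ^ (1/p)) ^ p := by
          rw [← ENNReal.rpow_mul, one_div_mul_cancel hp0.ne', ENNReal.rpow_one]
        rw [h2]
        refine le_trans (ENNReal.rpow_le_rpow h1 hp0.le) (le_of_eq ?_)
        rw [hWof, hMμ,
          ENNReal.ofReal_rpow_of_nonneg hm0 (by positivity : (0:ℝ) ≤ 1/p),
          ← ENNReal.ofReal_add (Real.rpow_nonneg hm0 _) hw0,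
          ENNReal.ofReal_rpow_of_nonneg (add_nonneg (Real.rpow_nonneg hm0 _) hw0) hp0.le]
      -- bound the gain constant
      have hc0le : (ENNReal.ofReal L *
          ((3:ℝ≥0∞) ^ p * (1 + ∫⁻ x, (‖x‖₊:ℝ≥0∞) ^ p ∂μ + ∫⁻ x, (‖x‖₊:ℝ≥0∞) ^ p ∂ν))
            ^ (1 / Real.conjExponent p)) * Wp p μ ν
          ≤ ENNReal.ofReal ((Kc * (1 + w) ^ (p-1)) * w) := by
        rw [hWof, ENNReal.ofReal_mul
          (mul_nonneg (le_trans zero_le_one hK1) (Real.rpow_nonneg (by linarith) _))]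
        refine mul_le_mul' ?_ le_rfl
        have hin : (3:ℝ≥0∞) ^ p * (1 + ∫⁻ x, (‖x‖₊:ℝ≥0∞) ^ p ∂μ + ∫⁻ x, (‖x‖₊:ℝ≥0∞) ^ p ∂ν)
            ≤ ENNReal.ofReal (3 ^ p * (1 + m + (m ^ (1/p) + w) ^ p)) := by
          rw [hMμ, ENNReal.ofReal_mul (Real.rpow_nonneg (by norm_num) _),
            show ((3:ℝ≥0∞)) = ENNReal.ofReal 3 from (ENNReal.ofReal_ofNat 3).symm,
            ENNReal.ofReal_rpow_of_nonneg (by norm_num) hp0.le]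
          refine mul_le_mul' le_rfl ?_
          rw [ENNReal.ofReal_add (by linarith) (Real.rpow_nonneg
              (add_nonneg (Real.rpow_nonneg hm0 _) hw0) _),
            ENNReal.ofReal_add zero_le_one hm0, ENNReal.ofReal_one]
          exact add_le_add le_rfl hMν
        calc ENNReal.ofReal L *
            ((3:ℝ≥0∞) ^ p * (1 + ∫⁻ x, (‖x‖₊:ℝ≥0∞) ^ p ∂μ + ∫⁻ x, (‖x‖₊:ℝ≥0∞) ^ p ∂ν))
              ^ (1 / Real.conjExponent p)
            ≤ ENNReal.ofReal L *
              (ENNReal.ofReal (3 ^ p * (1 + m + (m ^ (1/p) + w) ^ p)))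
                ^ (1 / Real.conjExponent p) :=
              mul_le_mul' le_rfl (ENNReal.rpow_le_rpow hin (by positivity))
          _ = ENNReal.ofReal (L * (3 ^ p * (1 + m + (m ^ (1/p) + w) ^ p))
                ^ (1 / Real.conjExponent p)) := by
              have hnn : (0:ℝ) ≤ 3 ^ p * (1 + m + (m ^ (1/p) + w) ^ p) := by
                have h1 : (0:ℝ) ≤ (m ^ (1/p) + w) ^ p :=
                  Real.rpow_nonneg (add_nonneg (Real.rpow_nonneg hm0 _) hw0) _
                have h2 : (0:ℝ) ≤ 3 ^ p := Real.rpow_nonneg (by norm_num) _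
                nlinarith
              rw [ENNReal.ofReal_rpow_of_nonneg hnn (by positivity),
                ← ENNReal.ofReal_mul hL0]
          _ ≤ ENNReal.ofReal (Kc * (1 + w) ^ (p-1)) :=
              ENNReal.ofReal_le_ofReal (aux_K_bound hp hL0 hm0 hw0)
      -- penalty lower bound
      have hpen : ENNReal.ofReal ((Kc * (1 + w) ^ (p-1)) * w) ≤ phih φ h w := by
        have hawh : a < w / h := (lt_div_iff₀ hh0).mpr (by linarith)
        have hpenal := aux_penalty hp hK1 hc'0 hh0 hhle
          (le_trans (mul_le_mul_of_nonneg_right (le_max_right (max V₀ 1) (2 * κ / γ)) hh0.le)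
            hahw.le)
        calc ENNReal.ofReal ((Kc * (1 + w) ^ (p-1)) * w)
            ≤ ENNReal.ofReal (h * (c' * (w/h) ^ p)) := ENNReal.ofReal_le_ofReal hpenal
          _ = ENNReal.ofReal h * ENNReal.ofReal (c' * (w/h) ^ p) := ENNReal.ofReal_mul hh0.le
          _ ≤ ENNReal.ofReal h * φ (w/h) := by
              refine mul_le_mul' le_rfl (hgrow (w/h) ?_ ?_)
              · linarith
              · have : V₀ ≤ a := (le_max_left V₀ 1).trans (le_max_left _ _)
                linarith
          _ = phih φ h w := rfl
      have hgain2 : ENNReal.ofReal (∫ x, f x ∂ν - ∫ x, f x ∂μ) ≤ phih φ h w :=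
        le_trans hgain (le_trans hc0le hpen)
      -- conclude via the value at μ
      have hFμmem : μ ∈ {ν | ν ∈ Pp (X := X) p ∧ Wp p μ ν ≤ ENNReal.ofReal (a * h)} :=
        ⟨hμ, by rw [Wp_self hp0]; exact zero_le⟩
      have hFμ : ((∫ x, f x ∂μ : ℝ) : EReal) ≤
          ⨆ ν ∈ {ν | ν ∈ Pp (X := X) p ∧ Wp p μ ν ≤ ENNReal.ofReal (a * h)},
            (((∫ x, f x ∂ν : ℝ) : EReal) - ((phih φ h (Wp p μ ν).toReal : ℝ≥0∞) : EReal)) := by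
        refine le_trans (le_of_eq ?_) (le_biSup
          (fun ν : Measure X => ((∫ x, f x ∂ν : ℝ) : EReal)
            - ((phih φ h (Wp p μ ν).toReal : ℝ≥0∞) : EReal)) hFμmem)
        show ((∫ x, f x ∂μ : ℝ) : EReal)
          = ((∫ x, f x ∂μ : ℝ) : EReal) - ((phih φ h (Wp p μ μ).toReal : ℝ≥0∞) : EReal)
        rw [Wp_self hp0, ENNReal.toReal_zero,
          show phih φ h 0 = 0 from by rw [phih, zero_div, hzero, mul_zero],
          EReal.coe_ennreal_zero, sub_eq_add_neg, neg_zero, add_zero]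
      refine le_trans ?_ hFμ
      rcases eq_or_ne (phih φ h w) ⊤ with hPt | hPt
      · rw [hPt, EReal.coe_ennreal_top, EReal.sub_top]
        exact bot_le
      · have hgle : (∫ x, f x ∂ν) - (∫ x, f x ∂μ) ≤ (phih φ h w).toReal :=
          (ENNReal.ofReal_le_iff_le_toReal hPt).mp hgain2
        have hPE : ((phih φ h w : ℝ≥0∞) : EReal) = (((phih φ h w).toReal : ℝ) : EReal) := by
          conv_lhs => rw [← ENNReal.ofReal_toReal hPt]
          rw [EReal.coe_ennreal_ofReal, max_eq_left ENNReal.toReal_nonneg]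
        rw [hPE, ← EReal.coe_sub]
        exact EReal.coe_le_coe_iff.mpr (by linarith)
  · -- easy direction
    rw [Ifun]
    exact biSup_mono fun ν hν => hν.1
end
end

section
/- Let Θ ⊆ L_p(μ;X) be dense in L_p(μ;X) with 0 ∈ Θ. Then I_Θ(h)f = I_{L_p(μ;X)}(h)f for all f ∈ Lip_p and all h > 0. -/
open MeasureTheory Filter Set
open scoped Topology ENNReal NNReal RealInnerProductSpace

noncomputable section

variable {X : Type*} [NormedAddCommGroup X] [InnerProductSpace ℝ X]
  [SecondCountableTopology X] [CompleteSpace X] [MeasurableSpace X] [BorelSpace X]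

theorem stmt12 (p : ℝ) (hp : 1 < p)
    (μ : Measure X) (hμ : μ ∈ Pp (X := X) p)
    (φ : ℝ → ℝ≥0∞) (hmono : MonotoneOn φ (Ici (0 : ℝ))) (hzero : φ 0 = 0)
    (hgrowth : 0 < liminf (fun v : ℝ => φ v / ENNReal.ofReal (v ^ p)) atTop)
    (Θ : Set (X → X)) (hΘ : ∀ g ∈ Θ, MemLp g (ENNReal.ofReal p) μ)
    (hzeroΘ : (fun _ : X => (0 : X)) ∈ Θ)
    (hdense : ∀ g : X → X, MemLp g (ENNReal.ofReal p) μ → ∀ ε : ℝ≥0∞, 0 < ε →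
      ∃ θ ∈ Θ, eLpNorm (fun x => g x - θ x) (ENNReal.ofReal p) μ < ε) :
    ∀ f : X → ℝ, MemLipP p f → ∀ h : ℝ, 0 < h →
      ITheta μ φ p Θ h f
        = ITheta μ φ p {g : X → X | MemLp g (ENNReal.ofReal p) μ} h f := by
  intro f hf h hh
  obtain ⟨L, hL, hLip⟩ := hf
  have hp0 : (0:ℝ) < p := lt_trans one_pos hp
  have hp1 : (0:ℝ) ≤ p - 1 := by linarith
  set p' : ℝ≥0∞ := ENNReal.ofReal p with hp'def
  have hp'0 : p' ≠ 0 := by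
    simp only [hp'def, Ne, ENNReal.ofReal_eq_zero, not_le]; exact hp0
  have hp't : p' ≠ ⊤ := ENNReal.ofReal_ne_top
  have htR : p'.toReal = p := ENNReal.toReal_ofReal hp0.le
  have h1p' : (1:ℝ≥0∞) ≤ p' := by
    rw [hp'def, ← ENNReal.ofReal_one]; exact ENNReal.ofReal_le_ofReal hp.le
  haveI hprob : IsProbabilityMeasure μ := hμ.1
  -- continuity of f
  have hfc : Continuous f := by
    rw [Metric.continuous_iff]
    intro x ε hε
    set K := L * (2 + ‖x‖) ^ (p-1) with hK
    have hK0 : 0 ≤ K := mul_nonneg hL (Real.rpow_nonneg (by positivity) _)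
    refine ⟨min 1 (ε / (K+1)), lt_min one_pos (by positivity), fun x' hx' => ?_⟩
    have hd1 : dist x' x < 1 := lt_of_lt_of_le hx' (min_le_left _ _)
    have hb : |f x' - f x| ≤ K * dist x' x := by
      have h2 : max ‖x'‖ ‖x‖ ≤ 1 + ‖x‖ := by
        have h4 : ‖x'‖ - ‖x‖ ≤ ‖x' - x‖ := norm_sub_norm_le x' x
        rw [← dist_eq_norm] at h4
        exact max_le (by linarith) (by linarith)
      have h3 : (1 + max ‖x'‖ ‖x‖) ^ (p-1) ≤ (2 + ‖x‖) ^ (p-1) := by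
        have hmx : (0:ℝ) ≤ max ‖x'‖ ‖x‖ := le_max_of_le_right (norm_nonneg _)
        exact Real.rpow_le_rpow (by positivity) (by linarith) hp1
      calc |f x' - f x| ≤ L * (1 + max ‖x'‖ ‖x‖) ^ (p-1) * ‖x' - x‖ := hLip x' x
        _ ≤ K * ‖x' - x‖ :=
            mul_le_mul_of_nonneg_right (mul_le_mul_of_nonneg_left h3 hL) (norm_nonneg _)
        _ = K * dist x' x := by rw [dist_eq_norm]
    have h5 : K / (K+1) < 1 := (div_lt_one (by positivity)).2 (by linarith)
    rw [Real.dist_eq]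
    calc |f x' - f x| ≤ K * dist x' x := hb
      _ ≤ K * (ε/(K+1)) :=
          mul_le_mul_of_nonneg_left (le_of_lt (lt_of_lt_of_le hx' (min_le_right _ _))) hK0
      _ = ε * (K/(K+1)) := by ring
      _ < ε * 1 := by exact mul_lt_mul_of_pos_left h5 hε
      _ = ε := mul_one ε
  -- global growth bound
  have hgb : ∀ x : X, |f x| ≤ (|f 0| + L) * (1 + ‖x‖) ^ p := by
    intro x
    have hb1 : (0:ℝ) < 1 + ‖x‖ := by positivity
    have h0 := hLip x 0
    rw [norm_zero, max_eq_left (norm_nonneg x), sub_zero] at h0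
    have h2 : (1+‖x‖)^(p-1) * ‖x‖ ≤ (1+‖x‖)^p := by
      calc (1+‖x‖)^(p-1) * ‖x‖ ≤ (1+‖x‖)^(p-1) * (1+‖x‖) := by
            apply mul_le_mul_of_nonneg_left (by linarith) (Real.rpow_nonneg hb1.le _)
        _ = (1+‖x‖)^p := by
            rw [← Real.rpow_add_one hb1.ne' (p-1)]; norm_num
    have h3 : (1:ℝ) ≤ (1+‖x‖)^p := Real.one_le_rpow (le_add_of_nonneg_right (norm_nonneg x)) hp0.le
    calc |f x| = |(f x - f 0) + f 0| := by ring_nf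
      _ ≤ |f x - f 0| + |f 0| := abs_add_le _ _
      _ ≤ L * (1+‖x‖)^(p-1) * ‖x‖ + |f 0| := by linarith
      _ ≤ L * (1+‖x‖)^p + |f 0| * (1+‖x‖)^p := by
          have h5 := mul_le_mul_of_nonneg_left h2 hL
          have h4 : |f 0| ≤ |f 0| * (1+‖x‖)^p := le_mul_of_one_le_right (abs_nonneg _) h3
          rw [mul_assoc]
          linarith
      _ = (|f 0| + L) * (1+‖x‖)^p := by ring
  -- identity is in L^p
  have hid : MemLp (fun x : X => x) p' μ := by
    refine ⟨aestronglyMeasurable_id, ?_⟩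
    rw [eLpNorm_eq_lintegral_rpow_enorm_toReal hp'0 hp't, htR]
    exact ENNReal.rpow_lt_top_of_nonneg (by positivity) hμ.2.ne
  set E₀ : ℝ≥0∞ := eLpNorm (fun y : X => y) p' μ with hE₀def
  have hE₀t : E₀ ≠ ⊤ := hid.2.ne
  -- integrability of f ∘ (id + θ)
  have hInt : ∀ θ : X → X, MemLp θ p' μ → Integrable (fun y => f (y + θ y)) μ := by
    intro θ hθ
    have hw : MemLp (fun y => y + θ y) p' μ := hid.add hθ
    have hw1 : MemLp (fun y => 1 + ‖y + θ y‖) p' μ := (memLp_const (1:ℝ)).add hw.norm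
    have hmaj : Integrable (fun y => ‖(1:ℝ) + ‖y + θ y‖‖ ^ p'.toReal) μ :=
      hw1.integrable_norm_rpow hp'0 hp't
    refine Integrable.mono' (hmaj.const_mul (|f 0| + L))
      (hfc.comp_aestronglyMeasurable hw.aestronglyMeasurable) ?_
    filter_upwards with y
    have h1 : (0:ℝ) ≤ 1 + ‖y + θ y‖ := by positivity
    calc ‖f (y + θ y)‖ = |f (y + θ y)| := rfl
      _ ≤ (|f 0| + L) * (1 + ‖y + θ y‖) ^ p := hgb _
      _ = (|f 0| + L) * ‖(1:ℝ) + ‖y + θ y‖‖ ^ p'.toReal := by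
          rw [Real.norm_of_nonneg h1, htR]
  -- rewriting the integral over the pushforward
  have hmap : ∀ θ : X → X, MemLp θ p' μ →
      ∫ x, f x ∂(μ.map fun y => y + θ y) = ∫ y, f (y + θ y) ∂μ := by
    intro θ hθ
    exact integral_map (hid.add hθ).aestronglyMeasurable.aemeasurable
      hfc.aestronglyMeasurable
  -- the lpnorm is the toReal of the eLpNorm
  have hlp : ∀ θ : X → X, AEStronglyMeasurable θ μ →
      lpnorm μ p θ = (eLpNorm θ p' μ).toReal := by
    intro θ hθ
    rw [lpnorm, eLpNorm_eq_lintegral_rpow_enorm_toReal hp'0 hp't, htR,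
      integral_eq_lintegral_of_nonneg_ae
        (ae_of_all _ fun y => Real.rpow_nonneg (norm_nonneg _) p)
        ((hθ.norm.aemeasurable.pow aemeasurable_const).aestronglyMeasurable)]
    rw [← ENNReal.toReal_rpow]
    have heq : (∫⁻ a, ENNReal.ofReal (‖θ a‖ ^ p) ∂μ) = ∫⁻ y, (‖θ y‖₊ : ℝ≥0∞) ^ p ∂μ := by
      refine lintegral_congr fun y => ?_
      rw [← ENNReal.ofReal_rpow_of_nonneg (norm_nonneg _) hp0.le, ofReal_norm, enorm_eq_nnnorm]
    simp_rw [enorm_eq_nnnorm]; rw [heq]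
  -- key difference estimate
  have hdiff : ∀ θ₁ θ₂ : X → X, MemLp θ₁ p' μ → MemLp θ₂ p' μ →
      |(∫ y, f (y + θ₁ y) ∂μ) - ∫ y, f (y + θ₂ y) ∂μ|
        ≤ (ENNReal.ofReal L * (1 + E₀ + eLpNorm θ₁ p' μ + eLpNorm θ₂ p' μ) ^ (p-1)
            * eLpNorm (fun y => θ₁ y - θ₂ y) p' μ).toReal := by
    intro θ₁ θ₂ h1 h2
    set u₀ : X → ℝ := fun y => 1 + ‖y‖ + ‖θ₁ y‖ + ‖θ₂ y‖ with hu₀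
    have hu₀n : ∀ y, 0 ≤ u₀ y := fun y => by
      have := norm_nonneg y; have := norm_nonneg (θ₁ y); have := norm_nonneg (θ₂ y)
      simp only [hu₀]; linarith
    set A : ℝ≥0∞ := 1 + E₀ + eLpNorm θ₁ p' μ + eLpNorm θ₂ p' μ with hA
    have hAt : A ≠ ⊤ := by
      rw [hA]
      exact ENNReal.add_ne_top.2 ⟨ENNReal.add_ne_top.2 ⟨ENNReal.add_ne_top.2
        ⟨ENNReal.one_ne_top, hE₀t⟩, h1.2.ne⟩, h2.2.ne⟩
    have hqp : (p/(p-1)).HolderConjugate p := (Real.HolderConjugate.conjExponent hp).symm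
    set q : ℝ := p/(p-1) with hq
    have hpm1 : (0:ℝ) < p - 1 := by linarith
    -- measurability
    have hmn : AEMeasurable (fun y : X => ‖y‖) μ := continuous_norm.measurable.aemeasurable
    have hm1 : AEMeasurable (fun y => ‖θ₁ y‖) μ := h1.1.norm.aemeasurable
    have hm2 : AEMeasurable (fun y => ‖θ₂ y‖) μ := h2.1.norm.aemeasurable
    have hu₀m : AEMeasurable u₀ μ := ((aemeasurable_const.add hmn).add hm1).add hm2
    have hum : AEMeasurable (fun y => ENNReal.ofReal (u₀ y)) μ :=
      ENNReal.measurable_ofReal.comp_aemeasurable hu₀m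
    have hdm : AEMeasurable (fun y => (‖θ₁ y - θ₂ y‖₊ : ℝ≥0∞)) μ := (h1.1.sub h2.1).enorm
    -- step 1
    have hsub := (hInt θ₁ h1).sub (hInt θ₂ h2)
    have s1 : |(∫ y, f (y + θ₁ y) ∂μ) - ∫ y, f (y + θ₂ y) ∂μ|
        ≤ ∫ y, |f (y + θ₁ y) - f (y + θ₂ y)| ∂μ := by
      rw [← integral_sub (hInt θ₁ h1) (hInt θ₂ h2)]
      exact norm_integral_le_integral_norm (fun y => f (y + θ₁ y) - f (y + θ₂ y))
    -- step 2
    have s2 : ∫ y, |f (y + θ₁ y) - f (y + θ₂ y)| ∂μ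
        = (∫⁻ y, ENNReal.ofReal (|f (y + θ₁ y) - f (y + θ₂ y)|) ∂μ).toReal := by
      exact integral_eq_lintegral_of_nonneg_ae (ae_of_all _ fun y => abs_nonneg _)
        hsub.1.norm
    -- step 3: pointwise bound
    have s3 : ∀ y : X, ENNReal.ofReal (|f (y + θ₁ y) - f (y + θ₂ y)|)
        ≤ ENNReal.ofReal L * (ENNReal.ofReal (u₀ y)) ^ (p-1)
            * (‖θ₁ y - θ₂ y‖₊ : ℝ≥0∞) := by
      intro y
      have hb : |f (y + θ₁ y) - f (y + θ₂ y)| ≤ L * (u₀ y) ^ (p-1) * ‖θ₁ y - θ₂ y‖ := by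
        have h0 := hLip (y + θ₁ y) (y + θ₂ y)
        have he : (y + θ₁ y) - (y + θ₂ y) = θ₁ y - θ₂ y := by abel
        rw [he] at h0
        refine h0.trans ?_
        have hmx : max ‖y + θ₁ y‖ ‖y + θ₂ y‖ ≤ ‖y‖ + ‖θ₁ y‖ + ‖θ₂ y‖ := by
          have g1 := norm_add_le y (θ₁ y)
          have g2 := norm_add_le y (θ₂ y)
          have := norm_nonneg (θ₁ y); have := norm_nonneg (θ₂ y)
          exact max_le (by linarith) (by linarith)
        have hmx0 : (0:ℝ) ≤ max ‖y + θ₁ y‖ ‖y + θ₂ y‖ := le_max_of_le_right (norm_nonneg _)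
        have hr : (1 + max ‖y + θ₁ y‖ ‖y + θ₂ y‖) ^ (p-1) ≤ (u₀ y) ^ (p-1) := by
          refine Real.rpow_le_rpow (by linarith) ?_ hp1
          simp only [hu₀]; linarith
        exact mul_le_mul_of_nonneg_right (mul_le_mul_of_nonneg_left hr hL) (norm_nonneg _)
      calc ENNReal.ofReal (|f (y + θ₁ y) - f (y + θ₂ y)|)
          ≤ ENNReal.ofReal (L * (u₀ y) ^ (p-1) * ‖θ₁ y - θ₂ y‖) :=
            ENNReal.ofReal_le_ofReal hb
        _ = ENNReal.ofReal L * ENNReal.ofReal ((u₀ y) ^ (p-1))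
              * ENNReal.ofReal ‖θ₁ y - θ₂ y‖ := by
            rw [ENNReal.ofReal_mul (mul_nonneg hL (Real.rpow_nonneg (hu₀n y) _)),
              ENNReal.ofReal_mul hL]
        _ = ENNReal.ofReal L * (ENNReal.ofReal (u₀ y)) ^ (p-1)
              * (‖θ₁ y - θ₂ y‖₊ : ℝ≥0∞) := by
            rw [ENNReal.ofReal_rpow_of_nonneg (hu₀n y) hp1, ofReal_norm, enorm_eq_nnnorm]
    -- step 4: Hölder
    have humr : AEMeasurable (fun y => (ENNReal.ofReal (u₀ y)) ^ (p-1)) μ :=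
      hum.pow (aemeasurable_const : AEMeasurable (fun _ : X => (p-1)) μ)
    have hold := ENNReal.lintegral_mul_le_Lp_mul_Lq μ hqp humr hdm
    have e1 : ∀ y : X, ((ENNReal.ofReal (u₀ y)) ^ (p-1)) ^ q = (ENNReal.ofReal (u₀ y)) ^ p := by
      intro y
      rw [← ENNReal.rpow_mul]
      congr 1
      rw [hq]
      field_simp
    have e2 : (∫⁻ y, (ENNReal.ofReal (u₀ y)) ^ p ∂μ) ^ (1/q) = (eLpNorm u₀ p' μ) ^ (p - 1) := by
      rw [eLpNorm_eq_lintegral_rpow_enorm_toReal hp'0 hp't, htR, ← ENNReal.rpow_mul]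
      have heq : (∫⁻ y, (‖u₀ y‖₊ : ℝ≥0∞) ^ p ∂μ) = ∫⁻ y, (ENNReal.ofReal (u₀ y)) ^ p ∂μ := by
        refine lintegral_congr fun y => ?_
        rw [← enorm_eq_nnnorm, ← ofReal_norm, Real.norm_of_nonneg (hu₀n y)]
      simp_rw [enorm_eq_nnnorm]; rw [heq]
      congr 1
      rw [hq]
      field_simp
    have e3 : eLpNorm u₀ p' μ ≤ A := by
      have a0 : AEStronglyMeasurable (fun _ : X => (1:ℝ)) μ := aestronglyMeasurable_const
      have a1 : AEStronglyMeasurable (fun y : X => ‖y‖) μ := continuous_norm.aestronglyMeasurable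
      have a2 : AEStronglyMeasurable (fun y => ‖θ₁ y‖) μ := h1.1.norm
      have a3 : AEStronglyMeasurable (fun y => ‖θ₂ y‖) μ := h2.1.norm
      have hμ0 : μ ≠ 0 := IsProbabilityMeasure.ne_zero μ
      calc eLpNorm u₀ p' μ
          ≤ eLpNorm (fun y : X => 1 + ‖y‖ + ‖θ₁ y‖) p' μ
            + eLpNorm (fun y => ‖θ₂ y‖) p' μ :=
            eLpNorm_add_le ((a0.add a1).add a2) a3 h1p'
        _ ≤ (eLpNorm (fun y : X => 1 + ‖y‖) p' μ + eLpNorm (fun y => ‖θ₁ y‖) p' μ)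
            + eLpNorm (fun y => ‖θ₂ y‖) p' μ :=
            add_le_add_left (eLpNorm_add_le (a0.add a1) a2 h1p') _
        _ ≤ ((eLpNorm (fun _ : X => (1:ℝ)) p' μ + eLpNorm (fun y : X => ‖y‖) p' μ)
            + eLpNorm (fun y => ‖θ₁ y‖) p' μ) + eLpNorm (fun y => ‖θ₂ y‖) p' μ :=
            add_le_add_left (add_le_add_left (eLpNorm_add_le a0 a1 h1p') _) _
        _ = A := by
            rw [hA, hE₀def, eLpNorm_norm, eLpNorm_norm, eLpNorm_norm,
              eLpNorm_const (1:ℝ) hp'0 hμ0]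
            simp [measure_univ]
    have e4 : (∫⁻ y, ((‖θ₁ y - θ₂ y‖₊ : ℝ≥0∞)) ^ p ∂μ) ^ (1/p)
        = eLpNorm (fun y => θ₁ y - θ₂ y) p' μ := by
      simp only [eLpNorm_eq_lintegral_rpow_enorm_toReal hp'0 hp't, htR, enorm_eq_nnnorm]
    have s4 : (∫⁻ y, ENNReal.ofReal L * (ENNReal.ofReal (u₀ y)) ^ (p-1)
          * (‖θ₁ y - θ₂ y‖₊ : ℝ≥0∞) ∂μ)
        ≤ ENNReal.ofReal L * ((eLpNorm u₀ p' μ) ^ (p-1)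
            * eLpNorm (fun y => θ₁ y - θ₂ y) p' μ) := by
      simp_rw [mul_assoc]
      rw [lintegral_const_mul' _ _ ENNReal.ofReal_ne_top]
      refine mul_le_mul_right ?_ _
      refine le_trans (le_of_eq ?_) (hold.trans (le_of_eq ?_))
      · rfl
      · simp_rw [e1]
        rw [e4, e2]
    have s5 : ENNReal.ofReal L * ((eLpNorm u₀ p' μ) ^ (p-1)
          * eLpNorm (fun y => θ₁ y - θ₂ y) p' μ)
        ≤ ENNReal.ofReal L * (A ^ (p-1) * eLpNorm (fun y => θ₁ y - θ₂ y) p' μ) :=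
      mul_le_mul_right (mul_le_mul_left (ENNReal.rpow_le_rpow e3 hp1) _) _
    have hfin : ENNReal.ofReal L * (A ^ (p-1) * eLpNorm (fun y => θ₁ y - θ₂ y) p' μ) ≠ ⊤ := by
      refine ENNReal.mul_ne_top ENNReal.ofReal_ne_top (ENNReal.mul_ne_top ?_ ?_)
      · exact (ENNReal.rpow_lt_top_of_nonneg hp1 hAt).ne
      · exact (h1.sub h2).2.ne
    calc |(∫ y, f (y + θ₁ y) ∂μ) - ∫ y, f (y + θ₂ y) ∂μ|
        ≤ ∫ y, |f (y + θ₁ y) - f (y + θ₂ y)| ∂μ := s1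
      _ = (∫⁻ y, ENNReal.ofReal (|f (y + θ₁ y) - f (y + θ₂ y)|) ∂μ).toReal := s2
      _ ≤ (ENNReal.ofReal L * (A ^ (p-1) * eLpNorm (fun y => θ₁ y - θ₂ y) p' μ)).toReal := by
          refine ENNReal.toReal_mono hfin ?_
          exact le_trans (lintegral_mono s3) (s4.trans s5)
      _ = (ENNReal.ofReal L * (1 + E₀ + eLpNorm θ₁ p' μ + eLpNorm θ₂ p' μ) ^ (p-1)
            * eLpNorm (fun y => θ₁ y - θ₂ y) p' μ).toReal := by
          rw [← hA, mul_assoc]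
  -- key approximation step
  have hkey : ∀ g : X → X, MemLp g p' μ → ∀ ε : ℝ, 0 < ε → ∃ θ ∈ Θ,
      eLpNorm θ p' μ ≤ eLpNorm g p' μ ∧
      |(∫ x, f x ∂(μ.map fun y => y + θ y)) - ∫ x, f x ∂(μ.map fun y => y + g y)| ≤ ε := by
    intro g hg ε hε
    by_cases hE0 : eLpNorm g p' μ = 0
    · refine ⟨(fun _ => 0), hzeroΘ, ?_, ?_⟩
      · rw [eLpNorm_zero']; exact zero_le
      · have hg0 : g =ᵐ[μ] 0 := (eLpNorm_eq_zero_iff hg.1 hp'0).mp hE0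
        have hmeq : μ.map (fun y => y + g y) = μ.map (fun y => y + (fun _ : X => (0:X)) y) :=
          Measure.map_congr (hg0.mono fun y hy => by simp [hy])
        rw [hmeq, sub_self, abs_zero]
        exact hε.le
    · set E := eLpNorm g p' μ with hE
      have hEt : E ≠ ⊤ := hg.2.ne
      set C : ℝ≥0∞ := ENNReal.ofReal L * (1 + E₀ + E + E) ^ (p-1) with hC
      have hCt : C ≠ ⊤ := by
        refine ENNReal.mul_ne_top ENNReal.ofReal_ne_top
          (ENNReal.rpow_lt_top_of_nonneg hp1 ?_).ne
        exact ENNReal.add_ne_top.2 ⟨ENNReal.add_ne_top.2 ⟨ENNReal.add_ne_top.2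
          ⟨ENNReal.one_ne_top, hE₀t⟩, hEt⟩, hEt⟩
      set M : ℝ := (C * E).toReal with hM
      have hM0 : 0 ≤ M := ENNReal.toReal_nonneg
      have hM1 : (0:ℝ) < M + 1 := by linarith
      set δ : ℝ := min (1/2) (ε / (2*(M+1))) with hδ
      have hδ0 : 0 < δ := lt_min (by norm_num) (by positivity)
      have hδ1 : δ < 1 := lt_of_le_of_lt (min_le_left _ _) (by norm_num)
      have hδle : δ ≤ ε / (2*(M+1)) := min_le_right _ _
      have h2δM : 2 * δ * M ≤ ε := by
        have h3 : 2 * (ε / (2*(M+1))) * (M+1) = ε := by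
          field_simp
        linarith [mul_le_mul_of_nonneg_right hδle hM0, div_nonneg hε.le (by positivity : (0:ℝ) ≤ 2*(M+1))]
      set g' : X → X := fun y => (1-δ) • g y with hg'def
      have hg' : MemLp g' p' μ := hg.const_smul (1-δ)
      have hsm : eLpNorm g' p' μ = ENNReal.ofReal (1-δ) * E := by
        rw [show g' = (1-δ) • g from rfl, eLpNorm_const_smul, hE]
        congr 1
        rw [← ofReal_norm, Real.norm_of_nonneg (by linarith)]
      set η : ℝ≥0∞ := ENNReal.ofReal δ * E with hη
      have hη0 : 0 < η := ENNReal.mul_pos (ENNReal.ofReal_pos.2 hδ0).ne' hE0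
      obtain ⟨θ, hθΘ, hnear⟩ := hdense g' hg' η hη0
      have hθm : MemLp θ p' μ := hΘ θ hθΘ
      have hng't : eLpNorm (fun x => g' x - θ x) p' μ ≤ η := hnear.le
      have hswap : eLpNorm (θ - g') p' μ
          = eLpNorm (fun x => g' x - θ x) p' μ := by
        have he : θ - g' = -(fun x => g' x - θ x) := by
          ext x
          simp only [Pi.sub_apply, Pi.neg_apply]
          abel
        rw [he, eLpNorm_neg]
      have hθE : eLpNorm θ p' μ ≤ E := by
        have t := eLpNorm_add_le (hθm.1.sub hg'.1) hg'.1 h1p'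
        have he : θ - g' + g' = θ := by
          ext x
          simp only [Pi.add_apply, Pi.sub_apply]
          abel
        rw [he] at t
        calc eLpNorm θ p' μ
            ≤ eLpNorm (θ - g') p' μ + eLpNorm g' p' μ := t
          _ ≤ η + ENNReal.ofReal (1-δ) * E := by
              rw [hswap, hsm]; exact add_le_add_left hng't _
          _ = (ENNReal.ofReal δ + ENNReal.ofReal (1-δ)) * E := by rw [hη, add_mul]
          _ = E := by
              rw [← ENNReal.ofReal_add hδ0.le (by linarith)]
              norm_num
      have hgg' : eLpNorm (g' - g) p' μ = η := by
        have he : g' - g = (-δ) • g := by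
          ext x
          show (1-δ) • g x - g x = (-δ) • g x
          rw [sub_smul, one_smul, neg_smul]
          abel
        rw [he, eLpNorm_const_smul, hη, hE]
        congr 1
        rw [← ofReal_norm, Real.norm_eq_abs, abs_neg, abs_of_pos hδ0]
      have hθg : eLpNorm (fun x => θ x - g x) p' μ ≤ ENNReal.ofReal (2*δ) * E := by
        have t := eLpNorm_add_le (hθm.1.sub hg'.1) (hg'.1.sub hg.1) h1p'
        have he : θ - g' + (g' - g) = fun x => θ x - g x := by
          ext x
          simp only [Pi.add_apply, Pi.sub_apply]
          abel
        rw [he] at t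
        calc eLpNorm (fun x => θ x - g x) p' μ
            ≤ eLpNorm (θ - g') p' μ + eLpNorm (g' - g) p' μ := t
          _ ≤ η + η := add_le_add (le_of_le_of_eq (hswap ▸ hng't) rfl) (le_of_eq hgg')
          _ = ENNReal.ofReal (2*δ) * E := by
              rw [hη, ← add_mul, ← ENNReal.ofReal_add hδ0.le hδ0.le, two_mul]
      refine ⟨θ, hθΘ, hθE, ?_⟩
      rw [hmap θ hθm, hmap g hg]
      refine (hdiff θ g hθm hg).trans ?_
      have hb1 : ENNReal.ofReal L * (1 + E₀ + eLpNorm θ p' μ + eLpNorm g p' μ) ^ (p-1)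
          * eLpNorm (fun y => θ y - g y) p' μ ≤ C * (ENNReal.ofReal (2*δ) * E) := by
        rw [hC]
        refine mul_le_mul' (mul_le_mul_right (ENNReal.rpow_le_rpow ?_ hp1) _) hθg
        rw [← hE]
        exact add_le_add (add_le_add_right hθE _) le_rfl
      have hfin2 : C * (ENNReal.ofReal (2*δ) * E) ≠ ⊤ :=
        ENNReal.mul_ne_top hCt (ENNReal.mul_ne_top ENNReal.ofReal_ne_top hEt)
      calc (ENNReal.ofReal L * (1 + E₀ + eLpNorm θ p' μ + eLpNorm g p' μ) ^ (p-1)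
            * eLpNorm (fun y => θ y - g y) p' μ).toReal
          ≤ (C * (ENNReal.ofReal (2*δ) * E)).toReal := ENNReal.toReal_mono hfin2 hb1
        _ = 2*δ*M := by
            rw [show C * (ENNReal.ofReal (2*δ) * E) = ENNReal.ofReal (2*δ) * (C*E) by ring,
              ENNReal.toReal_mul, ENNReal.toReal_ofReal (by positivity), hM]
        _ ≤ ε := h2δM
  -- monotonicity of the penalty
  have hph : ∀ x₁ x₂ : ℝ, 0 ≤ x₁ → x₁ ≤ x₂ → phih φ h x₁ ≤ phih φ h x₂ := by
    intro x₁ x₂ hx₁ hx₂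
    unfold phih
    refine mul_le_mul_right (hmono ?_ ?_ ?_) _
    · exact div_nonneg hx₁ hh.le
    · exact div_nonneg (hx₁.trans hx₂) hh.le
    · exact div_le_div_of_nonneg_right hx₂ hh.le
  -- main inequality
  have main : ∀ g : X → X, MemLp g p' μ →
      ((∫ x, f x ∂(μ.map fun y => y + g y) : ℝ) : EReal)
        - ((phih φ h (lpnorm μ p g) : ℝ≥0∞) : EReal) ≤ ITheta μ φ p Θ h f := by
    intro g hg
    rw [ITheta]
    set b : ℝ≥0∞ := phih φ h (lpnorm μ p g) with hb
    by_cases hbt : b = ⊤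
    · rw [hbt, EReal.coe_ennreal_top, EReal.sub_top]
      exact bot_le
    · set a : ℝ := ∫ x, f x ∂(μ.map fun y => y + g y) with ha
      have hbE : ((b : ℝ≥0∞) : EReal) ≠ ⊤ := by
        simp [EReal.coe_ennreal_eq_top_iff, hbt]
      have hbB : ((b : ℝ≥0∞) : EReal) ≠ ⊥ := EReal.coe_ennreal_ne_bot b
      have hcoe : ((b : ℝ≥0∞) : EReal) = ((b.toReal : ℝ) : EReal) := by
        conv_lhs => rw [← EReal.coe_toReal hbE hbB]
        rw [EReal.toReal_coe_ennreal]
      rw [hcoe, ← EReal.coe_sub]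
      refine le_of_forall_lt_imp_le_of_dense fun c hc => ?_
      rcases eq_or_ne c ⊥ with rfl | hcb
      · exact bot_le
      have hcT : c ≠ ⊤ := ne_top_of_lt hc
      have hcr : ((c.toReal : ℝ) : EReal) = c := EReal.coe_toReal hcT hcb
      have hlt : c.toReal < a - b.toReal := by
        rw [← EReal.coe_lt_coe_iff, hcr]; exact hc
      have hε0 : (0:ℝ) < (a - b.toReal) - c.toReal := by linarith
      obtain ⟨θ, hθΘ, hθle, hθint⟩ := hkey g hg _ hε0
      have hlpth : lpnorm μ p θ ≤ lpnorm μ p g := by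
        rw [hlp θ (hΘ θ hθΘ).1, hlp g hg.1]
        exact ENNReal.toReal_mono hg.2.ne hθle
      have hlpn : 0 ≤ lpnorm μ p θ := by
        rw [hlp θ (hΘ θ hθΘ).1]; exact ENNReal.toReal_nonneg
      have hpen : phih φ h (lpnorm μ p θ) ≤ b := hb ▸ hph _ _ hlpn hlpth
      have hpent : phih φ h (lpnorm μ p θ) ≠ ⊤ := fun ht => hbt (top_le_iff.1 (ht ▸ hpen))
      have h1 : a - ((a - b.toReal) - c.toReal) ≤ ∫ x, f x ∂(μ.map fun y => y + θ y) := by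
        have h2 := (abs_le.1 hθint).1
        linarith
      have h2 : (phih φ h (lpnorm μ p θ)).toReal ≤ b.toReal := ENNReal.toReal_mono hbt hpen
      have hreal : c.toReal ≤ (∫ x, f x ∂(μ.map fun y => y + θ y))
          - (phih φ h (lpnorm μ p θ)).toReal := by linarith
      have hpE : ((phih φ h (lpnorm μ p θ) : ℝ≥0∞) : EReal) ≠ ⊤ := by
        simp [EReal.coe_ennreal_eq_top_iff, hpent]
      have hval : c ≤ ((∫ x, f x ∂(μ.map fun y => y + θ y) : ℝ) : EReal)
          - ((phih φ h (lpnorm μ p θ) : ℝ≥0∞) : EReal) := by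
        calc c = ((c.toReal : ℝ) : EReal) := hcr.symm
          _ ≤ (((∫ x, f x ∂(μ.map fun y => y + θ y))
                - (phih φ h (lpnorm μ p θ)).toReal : ℝ) : EReal) := by
              exact_mod_cast hreal
          _ = ((∫ x, f x ∂(μ.map fun y => y + θ y) : ℝ) : EReal)
              - ((phih φ h (lpnorm μ p θ) : ℝ≥0∞) : EReal) := by
              rw [EReal.coe_sub]
              congr 1
              conv_rhs => rw [← EReal.coe_toReal hpE (EReal.coe_ennreal_ne_bot _)]
              rw [EReal.toReal_coe_ennreal]
      exact le_iSup₂_of_le θ hθΘ hval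
  refine le_antisymm ?_ ?_
  · rw [ITheta, ITheta]
    exact biSup_mono fun θ hθ => hΘ θ hθ
  · rw [ITheta]
    exact iSup₂_le fun g hg => main g hg
end
end

section
/- For every θ ∈ L_p(μ;X), the measure μ_θ^Mart belongs to M_p(μ) and satisfies W_p^Mart(μ, μ_θ^Mart)² ≤ ‖θ‖²_{L_p(μ;X)}; consequently I^Mart_Θ(h)f ≤ I^Mart(h)f for every Θ ⊆ L_p(μ;X), h > 0, and f ∈ Lip_p. -/
open MeasureTheory Filter Set
open scoped Topology ENNReal NNReal RealInnerProductSpace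

noncomputable section

variable {X : Type*} [NormedAddCommGroup X] [InnerProductSpace ℝ X]
  [SecondCountableTopology X] [CompleteSpace X] [MeasurableSpace X] [BorelSpace X]

/-- `π` is a martingale coupling of `μ` and `ν`. -/
def IsMartCoupling (μ ν : Measure X) (π : Measure (X × X)) : Prop :=
  IsCoupling μ ν π ∧ ∀ B : Set X, MeasurableSet B →
    ∫ q, Set.indicator B (fun _ => (1 : ℝ)) q.1 • q.2 ∂π
      = ∫ y, Set.indicator B (fun _ => (1 : ℝ)) y • y ∂μ

/-- Measures in `P_p` admitting a martingale coupling with `μ`. -/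
def Mp (p : ℝ) (μ : Measure X) : Set (Measure X) :=
  {ν | ν ∈ Pp (X := X) p ∧ ∃ π : Measure (X × X), IsMartCoupling μ ν π}

/-- The `p`-martingale Wasserstein distance. -/
def WpMart (p : ℝ) (μ ν : Measure X) : ℝ≥0∞ :=
  (⨅ π ∈ {π : Measure (X × X) | IsMartCoupling μ ν π},
    ∫⁻ q, (‖q.2 - q.1‖₊ : ℝ≥0∞) ^ p ∂π) ^ (1 / p)

/-- The martingale-constrained risk functional `I^Mart(h) f`. -/
def IMart (μ : Measure X) (φ : ℝ → ℝ≥0∞) (p h : ℝ) (f : X → ℝ) : EReal :=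
  ⨆ ν ∈ Mp p μ, ((∫ x, f x ∂ν : ℝ) : EReal)
    - ((phih φ h ((WpMart p μ ν).toReal ^ 2) : ℝ≥0∞) : EReal)

/-- The randomized perturbation `μ_θ^Mart`, satisfying
`∫ f dμ_θ^Mart = ∫ (f(y+θ(y)) + f(y-θ(y)))/2 μ(dy)`. -/
def muMart (μ : Measure X) (θ : X → X) : Measure X :=
  (2 : ℝ≥0∞)⁻¹ • μ.map (fun y => y + θ y) + (2 : ℝ≥0∞)⁻¹ • μ.map (fun y => y - θ y)

/-- The parametric martingale risk functional `I^Mart_Θ(h) f`. -/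
def IMartTheta (μ : Measure X) (φ : ℝ → ℝ≥0∞) (p : ℝ) (Θ : Set (X → X)) (h : ℝ)
    (f : X → ℝ) : EReal :=
  ⨆ θ ∈ Θ, ((∫ x, f x ∂(muMart μ θ) : ℝ) : EReal)
    - ((phih φ h (lpnorm μ p θ ^ 2) : ℝ≥0∞) : EReal)

/-- Membership in `C²_p`: twice continuously Fréchet differentiable with Hessian growing
at most like `C(1+‖x‖)^{p-2}`. -/
def MemC2p (p : ℝ) (f : X → ℝ) : Prop :=
  ContDiff ℝ 2 f ∧ ∃ C : ℝ, 0 ≤ C ∧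
    ∀ x : X, ‖fderiv ℝ (fun y => gradient f y) x‖ ≤ C * (1 + ‖x‖) ^ (p - 2)

/-- `|∇²f(x)|_Max = sup_{‖w‖ ≤ 1} ⟪w, ∇²f(x) w⟫`. -/
def hessMax (f : X → ℝ) (x : X) : ℝ :=
  sSup ((fun w : X => ⟪w, fderiv ℝ (fun y => gradient f y) x w⟫) '' {w : X | ‖w‖ ≤ 1})

theorem stmt16 (p : ℝ) (hp : 1 < p)
    (μ : Measure X) (hμ : μ ∈ Pp (X := X) p)
    (φ : ℝ → ℝ≥0∞) (hmono : MonotoneOn φ (Ici (0 : ℝ))) (hzero : φ 0 = 0)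
    (hgrowth : 0 < liminf (fun v : ℝ => φ v / ENNReal.ofReal (v ^ (p / 2))) atTop) :
    (∀ θ : X → X, MemLp θ (ENNReal.ofReal p) μ →
      muMart μ θ ∈ Mp p μ ∧
      WpMart p μ (muMart μ θ) ^ 2 ≤ ENNReal.ofReal (lpnorm μ p θ ^ 2)) ∧
    ∀ Θ : Set (X → X), (∀ g ∈ Θ, MemLp g (ENNReal.ofReal p) μ) →
      ∀ h : ℝ, 0 < h → ∀ f : X → ℝ, MemLipP p f →
        IMartTheta μ φ p Θ h f ≤ IMart μ φ p h f := by
  have hp0 : (0 : ℝ) < p := lt_trans one_pos hp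
  haveI : IsProbabilityMeasure μ := hμ.1
  have hpne0 : (ENNReal.ofReal p) ≠ 0 := by
    simp [ENNReal.ofReal_eq_zero, not_le, hp0]
  have hpnetop : (ENNReal.ofReal p) ≠ ⊤ := ENNReal.ofReal_ne_top
  have hptoReal : (ENNReal.ofReal p).toReal = p := ENNReal.toReal_ofReal hp0.le
  have hp1 : (1 : ℝ≥0∞) ≤ ENNReal.ofReal p := by
    rw [ENNReal.one_le_ofReal]; exact hp.le
  -- identity is in Lp
  have hid : MemLp (fun y : X => y) (ENNReal.ofReal p) μ := by
    refine ⟨aestronglyMeasurable_id, ?_⟩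
    rw [eLpNorm_lt_top_iff_lintegral_rpow_enorm_lt_top hpne0 hpnetop, hptoReal]
    exact hμ.2
  have key : ∀ θ : X → X, MemLp θ (ENNReal.ofReal p) μ →
      muMart μ θ ∈ Mp p μ ∧
      WpMart p μ (muMart μ θ) ^ 2 ≤ ENNReal.ofReal (lpnorm μ p θ ^ 2) := by
    intro θ hθ
    have hθm : AEMeasurable θ μ := hθ.aestronglyMeasurable.aemeasurable
    have hplus : MemLp (fun y : X => y + θ y) (ENNReal.ofReal p) μ := hid.add hθ
    have hminus : MemLp (fun y : X => y - θ y) (ENNReal.ofReal p) μ := hid.sub hθ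
    have haP : AEMeasurable (fun y : X => y + θ y) μ := aemeasurable_id.add hθm
    have haM : AEMeasurable (fun y : X => y - θ y) μ := aemeasurable_id.sub hθm
    have hgp : AEMeasurable (fun y : X => (y, y + θ y)) μ :=
      aemeasurable_id.prodMk haP
    have hgm : AEMeasurable (fun y : X => (y, y - θ y)) μ :=
      aemeasurable_id.prodMk haM
    set π : Measure (X × X) :=
      (2 : ℝ≥0∞)⁻¹ • μ.map (fun y : X => (y, y + θ y))
        + (2 : ℝ≥0∞)⁻¹ • μ.map (fun y : X => (y, y - θ y)) with hπdef
    -- marginals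
    have hfst : π.map Prod.fst = μ := by
      rw [hπdef, Measure.map_add _ _ measurable_fst, Measure.map_smul, Measure.map_smul,
        AEMeasurable.map_map_of_aemeasurable measurable_fst.aemeasurable hgp,
        AEMeasurable.map_map_of_aemeasurable measurable_fst.aemeasurable hgm]
      have : (Prod.fst ∘ fun y : X => (y, y + θ y)) = fun y : X => y := rfl
      rw [this]
      have : (Prod.fst ∘ fun y : X => (y, y - θ y)) = fun y : X => y := rfl
      rw [this, Measure.map_id', ← add_smul, ENNReal.inv_two_add_inv_two, one_smul]
    have hsnd : π.map Prod.snd = muMart μ θ := by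
      rw [hπdef, Measure.map_add _ _ measurable_snd, Measure.map_smul, Measure.map_smul,
        AEMeasurable.map_map_of_aemeasurable measurable_snd.aemeasurable hgp,
        AEMeasurable.map_map_of_aemeasurable measurable_snd.aemeasurable hgm]
      rfl
    -- martingale property
    have hmart : ∀ B : Set X, MeasurableSet B →
        ∫ q : X × X, Set.indicator B (fun _ => (1 : ℝ)) q.1 • q.2 ∂π
          = ∫ y, Set.indicator B (fun _ => (1 : ℝ)) y • y ∂μ := by
      intro B hB
      set F : X × X → X := fun q => Set.indicator B (fun _ => (1 : ℝ)) q.1 • q.2 with hF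
      have hFm : Measurable F :=
        ((measurable_const.indicator hB).comp measurable_fst).smul measurable_snd
      have hcompP : (fun y : X => F (y, y + θ y)) = B.indicator (fun y : X => y + θ y) := by
        funext y
        by_cases hy : y ∈ B <;> simp [F, hy, Set.indicator_of_mem, Set.indicator_of_notMem]
      have hcompM : (fun y : X => F (y, y - θ y)) = B.indicator (fun y : X => y - θ y) := by
        funext y
        by_cases hy : y ∈ B <;> simp [F, hy, Set.indicator_of_mem, Set.indicator_of_notMem]
      have hintP : Integrable (fun y : X => F (y, y + θ y)) μ := by
        rw [hcompP]; exact (hplus.integrable hp1).indicator hB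
      have hintM : Integrable (fun y : X => F (y, y - θ y)) μ := by
        rw [hcompM]; exact (hminus.integrable hp1).indicator hB
      have hmapP : ∫ q, F q ∂(μ.map (fun y : X => (y, y + θ y)))
          = ∫ y, F (y, y + θ y) ∂μ := integral_map hgp hFm.aestronglyMeasurable
      have hmapM : ∫ q, F q ∂(μ.map (fun y : X => (y, y - θ y)))
          = ∫ y, F (y, y - θ y) ∂μ := integral_map hgm hFm.aestronglyMeasurable
      have h2 : ((2 : ℝ≥0∞)⁻¹).toReal = (2 : ℝ)⁻¹ := by simp
      have hpt : (fun y : X => (2:ℝ)⁻¹ • F (y, y + θ y) + (2:ℝ)⁻¹ • F (y, y - θ y))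
          = fun y : X => Set.indicator B (fun _ => (1 : ℝ)) y • y := by
        funext y
        by_cases hy : y ∈ B
        · simp only [F, Set.indicator_of_mem hy, one_smul]
          module
        · simp [F, Set.indicator_of_notMem hy]
      have hI1 : Integrable F ((2 : ℝ≥0∞)⁻¹ • μ.map (fun y : X => (y, y + θ y))) := by
        refine ((integrable_map_measure hFm.aestronglyMeasurable hgp).mpr hintP).smul_measure ?_
        simp
      have hI2 : Integrable F ((2 : ℝ≥0∞)⁻¹ • μ.map (fun y : X => (y, y - θ y))) := by
        refine ((integrable_map_measure hFm.aestronglyMeasurable hgm).mpr hintM).smul_measure ?_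
        simp
      calc ∫ q : X × X, Set.indicator B (fun _ => (1 : ℝ)) q.1 • q.2 ∂π
          = (2:ℝ)⁻¹ • ∫ y, F (y, y + θ y) ∂μ + (2:ℝ)⁻¹ • ∫ y, F (y, y - θ y) ∂μ := by
            rw [hπdef, integral_add_measure hI1 hI2, integral_smul_measure,
              integral_smul_measure, hmapP, hmapM, h2]
        _ = ∫ y, ((2:ℝ)⁻¹ • F (y, y + θ y) + (2:ℝ)⁻¹ • F (y, y - θ y)) ∂μ := by
            have hs1 : Integrable (fun y : X => (2:ℝ)⁻¹ • F (y, y + θ y)) μ :=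
              hintP.smul ((2:ℝ)⁻¹)
            have hs2 : Integrable (fun y : X => (2:ℝ)⁻¹ • F (y, y - θ y)) μ :=
              hintM.smul ((2:ℝ)⁻¹)
            rw [integral_add hs1 hs2, integral_smul, integral_smul]
        _ = ∫ y, Set.indicator B (fun _ => (1 : ℝ)) y • y ∂μ := by rw [hpt]
    -- probability measure
    haveI hprobP : IsProbabilityMeasure (μ.map (fun y : X => y + θ y)) :=
      Measure.isProbabilityMeasure_map haP
    haveI hprobM : IsProbabilityMeasure (μ.map (fun y : X => y - θ y)) :=
      Measure.isProbabilityMeasure_map haM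
    haveI hprobν : IsProbabilityMeasure (muMart μ θ) := by
      constructor
      simp [muMart, measure_univ, ENNReal.inv_two_add_inv_two]
    -- moment
    have hmom : ∫⁻ x, (‖x‖₊ : ℝ≥0∞) ^ p ∂(muMart μ θ) < ⊤ := by
      have hmeas : Measurable fun x : X => (‖x‖₊ : ℝ≥0∞) ^ p :=
        measurable_nnnorm.coe_nnreal_ennreal.pow_const p
      have hP : ∫⁻ x, (‖x‖₊ : ℝ≥0∞) ^ p ∂(μ.map (fun y : X => y + θ y)) < ⊤ := by
        rw [lintegral_map' hmeas.aemeasurable haP]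
        have := (eLpNorm_lt_top_iff_lintegral_rpow_enorm_lt_top hpne0 hpnetop).mp hplus.2
        rwa [hptoReal] at this
      have hM : ∫⁻ x, (‖x‖₊ : ℝ≥0∞) ^ p ∂(μ.map (fun y : X => y - θ y)) < ⊤ := by
        rw [lintegral_map' hmeas.aemeasurable haM]
        have := (eLpNorm_lt_top_iff_lintegral_rpow_enorm_lt_top hpne0 hpnetop).mp hminus.2
        rwa [hptoReal] at this
      rw [muMart, lintegral_add_measure, lintegral_smul_measure, lintegral_smul_measure]
      exact ENNReal.add_lt_top.mpr ⟨ENNReal.mul_lt_top (by simp) hP, ENNReal.mul_lt_top (by simp) hM⟩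
    have hMart : IsMartCoupling μ (muMart μ θ) π := ⟨⟨hfst, hsnd⟩, hmart⟩
    refine ⟨⟨⟨hprobν, hmom⟩, π, hMart⟩, ?_⟩
    -- cost bound
    have hcostmeas : Measurable fun q : X × X => (‖q.2 - q.1‖₊ : ℝ≥0∞) ^ p :=
      ((measurable_snd.sub measurable_fst).nnnorm.coe_nnreal_ennreal).pow_const p
    have hcost : ∫⁻ q : X × X, (‖q.2 - q.1‖₊ : ℝ≥0∞) ^ p ∂π
        = ∫⁻ y, (‖θ y‖₊ : ℝ≥0∞) ^ p ∂μ := by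
      rw [hπdef, lintegral_add_measure, lintegral_smul_measure, lintegral_smul_measure,
        lintegral_map' hcostmeas.aemeasurable hgp, lintegral_map' hcostmeas.aemeasurable hgm]
      simp only [add_sub_cancel_left, sub_sub_cancel_left, nnnorm_neg]
      rw [← add_smul, ENNReal.inv_two_add_inv_two, one_smul]
    have hIθnn : (0 : ℝ) ≤ ∫ y, ‖θ y‖ ^ p ∂μ :=
      integral_nonneg fun y => Real.rpow_nonneg (norm_nonneg _) p
    have hlpnn : (0 : ℝ) ≤ lpnorm μ p θ := Real.rpow_nonneg hIθnn _
    have hintθ : Integrable (fun y => ‖θ y‖ ^ p) μ := by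
      have := hθ.integrable_norm_rpow hpne0 hpnetop
      rwa [hptoReal] at this
    have hlint : ∫⁻ y, (‖θ y‖₊ : ℝ≥0∞) ^ p ∂μ = ENNReal.ofReal (∫ y, ‖θ y‖ ^ p ∂μ) := by
      rw [ofReal_integral_eq_lintegral_ofReal hintθ
        (Filter.Eventually.of_forall fun y => Real.rpow_nonneg (norm_nonneg _) p)]
      refine lintegral_congr fun y => ?_
      rw [← ENNReal.ofReal_rpow_of_nonneg (norm_nonneg _) hp0.le, ofReal_norm]; rfl
    have hWle : WpMart p μ (muMart μ θ) ≤ ENNReal.ofReal (lpnorm μ p θ) := by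
      have h1 : WpMart p μ (muMart μ θ)
          ≤ (∫⁻ q : X × X, (‖q.2 - q.1‖₊ : ℝ≥0∞) ^ p ∂π) ^ (1 / p) := by
        refine ENNReal.rpow_le_rpow ?_ (by positivity)
        exact iInf₂_le π hMart
      rw [hcost, hlint] at h1
      rwa [lpnorm, ← ENNReal.ofReal_rpow_of_nonneg hIθnn (by positivity)]
    calc WpMart p μ (muMart μ θ) ^ 2 ≤ (ENNReal.ofReal (lpnorm μ p θ)) ^ 2 :=
          pow_le_pow_left₀ (zero_le) hWle 2
      _ = ENNReal.ofReal (lpnorm μ p θ ^ 2) := (ENNReal.ofReal_pow hlpnn 2).symm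
  refine ⟨key, ?_⟩
  intro Θ hΘ h hh f _
  refine iSup₂_le fun θ hθΘ => ?_
  obtain ⟨hmem, hW⟩ := key θ (hΘ θ hθΘ)
  have hphi : phih φ h ((WpMart p μ (muMart μ θ)).toReal ^ 2)
      ≤ phih φ h (lpnorm μ p θ ^ 2) := by
    unfold phih
    refine mul_le_mul_right ?_ _
    have hlpnn : (0 : ℝ) ≤ lpnorm μ p θ ^ 2 := sq_nonneg _
    have h1 : (WpMart p μ (muMart μ θ)).toReal ^ 2 ≤ lpnorm μ p θ ^ 2 := by
      have := ENNReal.toReal_mono ENNReal.ofReal_ne_top hW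
      rwa [ENNReal.toReal_pow, ENNReal.toReal_ofReal hlpnn] at this
    refine hmono ?_ ?_ ?_
    · exact mem_Ici.mpr (div_nonneg (sq_nonneg _) hh.le)
    · exact mem_Ici.mpr (div_nonneg hlpnn hh.le)
    · exact div_le_div_of_nonneg_right h1 hh.le
  calc ((∫ x, f x ∂(muMart μ θ) : ℝ) : EReal)
        - ((phih φ h (lpnorm μ p θ ^ 2) : ℝ≥0∞) : EReal)
      ≤ ((∫ x, f x ∂(muMart μ θ) : ℝ) : EReal)
        - ((phih φ h ((WpMart p μ (muMart μ θ)).toReal ^ 2) : ℝ≥0∞) : EReal) :=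
        EReal.sub_le_sub le_rfl (EReal.coe_ennreal_le_coe_ennreal_iff.mpr hphi)
    _ ≤ IMart μ φ p h f := le_iSup₂_of_le (muMart μ θ) hmem le_rfl
end
end

section
/- Let f : X → ℝ be Fréchet differentiable with continuous gradient ∇f : X → X satisfying L_f := sup_{x∈X} ‖∇f(x)‖/(1+‖x‖)^{p−1} < ∞. Then: (i) f ∈ Lip_p; (ii) |f|_Lip(x) = ‖∇f(x)‖ for all x ∈ X; and (iii) the map v : X → X given by v(x) = ∇f(x)/‖∇f(x)‖ if ∇f(x) ≠ 0 and v(x) = 0 otherwise is a measurable direction of steepest ascent for f. -/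
open MeasureTheory Filter Set
open scoped Topology ENNReal NNReal RealInnerProductSpace

noncomputable section

variable {X : Type*} [NormedAddCommGroup X] [InnerProductSpace ℝ X]
  [SecondCountableTopology X] [CompleteSpace X] [MeasurableSpace X] [BorelSpace X]

private lemma aux_fderiv_eq (f : X → ℝ) (hdiff : Differentiable ℝ f) (x : X) :
    fderiv ℝ f x = InnerProductSpace.toDual ℝ X (gradient f x) :=
  ((hdiff x).hasGradientAt.hasFDerivAt).fderiv

private lemma aux_fderiv_norm (f : X → ℝ) (hdiff : Differentiable ℝ f) (x : X) :
    ‖fderiv ℝ f x‖ = ‖gradient f x‖ := by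
  rw [aux_fderiv_eq f hdiff x]; exact (InnerProductSpace.toDual ℝ X).norm_map _

private lemma aux_dir (f : X → ℝ) (hdiff : Differentiable ℝ f) (x u : X) :
    Tendsto (fun h : ℝ => (f (x + h • u) - f x) / h) (𝓝[>] (0:ℝ))
      (𝓝 ⟪gradient f x, u⟫) := by
  have hline : HasDerivAt (fun t : ℝ => x + t • u) u 0 := by
    simpa using ((hasDerivAt_id (0:ℝ)).smul_const u).const_add x
  have hD : HasDerivAt (fun t : ℝ => f (x + t • u)) ⟪gradient f x, u⟫ 0 := by
    have := ((hdiff (x + (0:ℝ) • u)).hasFDerivAt).comp_hasDerivAt 0 hline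
    rw [zero_smul, add_zero, aux_fderiv_eq f hdiff x, InnerProductSpace.toDual_apply_apply] at this
    exact this
  have h2 : Tendsto (slope (fun t : ℝ => f (x + t • u)) 0) (𝓝[>] (0:ℝ))
      (𝓝 ⟪gradient f x, u⟫) :=
    (hasDerivAt_iff_tendsto_slope.mp hD).mono_left
      (nhdsWithin_mono _ (fun h hh => ne_of_gt hh))
  refine h2.congr (fun h => ?_)
  simp [slope, div_eq_inv_mul]

open Classical in
private lemma aux_unit (f : X → ℝ) (x : X) :
    (‖(if gradient f x = 0 then (0:X) else ‖gradient f x‖⁻¹ • gradient f x)‖ = 0 ∨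
     ‖(if gradient f x = 0 then (0:X) else ‖gradient f x‖⁻¹ • gradient f x)‖ = 1) ∧
    ⟪gradient f x, if gradient f x = 0 then (0:X) else ‖gradient f x‖⁻¹ • gradient f x⟫
      = ‖gradient f x‖ := by
  by_cases hg : gradient f x = 0
  · simp [hg]
  · rw [if_neg hg]
    have hn : ‖gradient f x‖ ≠ 0 := norm_ne_zero_iff.mpr hg
    constructor
    · right
      rw [norm_smul, norm_inv, norm_norm, inv_mul_cancel₀ hn]
    · rw [real_inner_smul_right, real_inner_self_eq_norm_mul_norm]
      field_simp

open Classical in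
private lemma aux_sSup_tendsto (f : X → ℝ) (hdiff : Differentiable ℝ f)
    (hcont : Continuous fun x => gradient f x) (x : X) :
    Tendsto (fun h : ℝ =>
        sSup ((fun u : X => (f (x + h • u) - f x) / h) '' {u : X | ‖u‖ = 0 ∨ ‖u‖ = 1}))
      (𝓝[>] (0:ℝ)) (𝓝 ‖gradient f x‖) := by
  rw [Metric.tendsto_nhds]
  intro ε hε
  obtain ⟨δ, hδ, hδ'⟩ := Metric.continuousAt_iff.mp hcont.continuousAt (ε/2) (by positivity)
  have hgx : (0:ℝ) ≤ ‖gradient f x‖ + ε/2 := by positivity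
  have hball : ∀ z ∈ Metric.closedBall x (δ/2), ‖fderiv ℝ f z‖ ≤ ‖gradient f x‖ + ε/2 := by
    intro z hz
    rw [aux_fderiv_norm f hdiff]
    have h1 : dist (gradient f z) (gradient f x) < ε/2 :=
      hδ' (lt_of_le_of_lt (Metric.mem_closedBall.mp hz) (by linarith))
    have h2 := norm_sub_norm_le (gradient f z) (gradient f x)
    rw [dist_eq_norm] at h1
    linarith
  have hub : ∀ h : ℝ, 0 < h → h ≤ δ/2 →
      ∀ y ∈ (fun u : X => (f (x + h • u) - f x) / h) '' {u : X | ‖u‖ = 0 ∨ ‖u‖ = 1},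
      y ≤ ‖gradient f x‖ + ε/2 := by
    rintro h hh hhδ y ⟨u, hu, rfl⟩
    have hu1 : ‖u‖ ≤ 1 := by rcases hu with h0 | h0 <;> simp [h0]
    have hmem : x + h • u ∈ Metric.closedBall x (δ/2) := by
      rw [Metric.mem_closedBall, dist_eq_norm]
      calc ‖x + h • u - x‖ = h * ‖u‖ := by
            rw [add_sub_cancel_left, norm_smul, Real.norm_eq_abs, abs_of_pos hh]
        _ ≤ h * 1 := by nlinarith
        _ ≤ δ/2 := by linarith
    have hmv := (convex_closedBall x (δ/2)).norm_image_sub_le_of_norm_fderiv_le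
      (fun z _ => hdiff z) hball (Metric.mem_closedBall_self (by linarith)) hmem
    have : f (x + h • u) - f x ≤ (‖gradient f x‖ + ε/2) * h := by
      have h2 : ‖x + h • u - x‖ ≤ h := by
        rw [add_sub_cancel_left, norm_smul, Real.norm_eq_abs, abs_of_pos hh]
        nlinarith
      have := le_trans (le_abs_self _) (le_trans hmv
        (mul_le_mul_of_nonneg_left h2 hgx))
      simpa [Real.norm_eq_abs] using this
    rw [div_le_iff₀ hh]
    linarith [this]
  set u₀ := if gradient f x = 0 then (0:X) else ‖gradient f x‖⁻¹ • gradient f x with hu₀def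
  obtain ⟨hu₀mem, hu₀inner⟩ := aux_unit f x
  have hlow : Tendsto (fun h : ℝ => (f (x + h • u₀) - f x) / h) (𝓝[>] (0:ℝ))
      (𝓝 ‖gradient f x‖) := by
    have := aux_dir f hdiff x u₀
    rwa [hu₀def, hu₀inner] at this
  have hev1 : ∀ᶠ h in 𝓝[>] (0:ℝ), ‖gradient f x‖ - ε/2 < (f (x + h • u₀) - f x) / h :=
    hlow.eventually (eventually_gt_nhds (by linarith))
  have hev2 : Ioo (0:ℝ) (δ/2) ∈ 𝓝[>] (0:ℝ) :=
    Ioo_mem_nhdsGT_of_mem ⟨le_refl 0, by positivity⟩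
  filter_upwards [hev1, hev2] with h hl hh
  set S := (fun u : X => (f (x + h • u) - f x) / h) '' {u : X | ‖u‖ = 0 ∨ ‖u‖ = 1} with hS
  have hbdd : ∀ y ∈ S, y ≤ ‖gradient f x‖ + ε/2 := hub h hh.1 hh.2.le
  have hmem0 : (f (x + h • u₀) - f x) / h ∈ S := ⟨u₀, hu₀mem, rfl⟩
  have h1 : sSup S ≤ ‖gradient f x‖ + ε/2 := csSup_le ⟨_, hmem0⟩ hbdd
  have h2 : ‖gradient f x‖ - ε/2 < sSup S :=
    lt_of_lt_of_le hl (le_csSup ⟨_, hbdd⟩ hmem0)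
  rw [Real.dist_eq, abs_lt]
  constructor <;> linarith

open Classical in
theorem stmt17 (p : ℝ) (hp : 1 < p) (f : X → ℝ)
    (hdiff : Differentiable ℝ f) (hcont : Continuous fun x => gradient f x)
    (hLf : BddAbove (Set.range fun x : X => ‖gradient f x‖ / (1 + ‖x‖) ^ (p - 1))) :
    MemLipP p f ∧ (∀ x : X, locLip f x = ‖gradient f x‖) ∧
      SteepestAscent f
        (fun x => if gradient f x = 0 then 0 else ‖gradient f x‖⁻¹ • gradient f x) := by
  classical
  obtain ⟨C, hC⟩ := hLf
  have hCb : ∀ z : X, ‖gradient f z‖ ≤ C * (1 + ‖z‖) ^ (p - 1) := by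
    intro z
    have h1 : (0:ℝ) < (1 + ‖z‖) ^ (p - 1) :=
      Real.rpow_pos_of_pos (by positivity) _
    have h2 := hC (Set.mem_range_self z)
    rw [div_le_iff₀ h1] at h2
    linarith
  have hC0 : 0 ≤ C := by
    have h3 := hC (Set.mem_range_self (0:X))
    have h2 : 0 ≤ ‖gradient f (0:X)‖ / (1 + ‖(0:X)‖) ^ (p-1) := by positivity
    linarith
  have hp1 : (0:ℝ) ≤ p - 1 := by linarith
  have hloc : ∀ x : X, locLip f x = ‖gradient f x‖ := fun x =>
    (aux_sSup_tendsto f hdiff hcont x).limsup_eq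
  refine ⟨⟨C, hC0, ?_⟩, hloc, ?_, ?_⟩
  · intro x₁ x₂
    set R := max ‖x₁‖ ‖x₂‖ with hR
    have hR0 : 0 ≤ R := le_trans (norm_nonneg x₁) (le_max_left _ _)
    have hx₁ : x₁ ∈ Metric.closedBall (0:X) R := by
      simp only [Metric.mem_closedBall, dist_zero_right]
      exact le_max_left _ _
    have hx₂ : x₂ ∈ Metric.closedBall (0:X) R := by
      simp only [Metric.mem_closedBall, dist_zero_right]
      exact le_max_right _ _
    have hbd : ∀ z ∈ Metric.closedBall (0:X) R,
        ‖fderiv ℝ f z‖ ≤ C * (1 + R) ^ (p-1) := by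
      intro z hz
      rw [aux_fderiv_norm f hdiff]
      refine le_trans (hCb z) (mul_le_mul_of_nonneg_left ?_ hC0)
      refine Real.rpow_le_rpow (by positivity) ?_ hp1
      have : ‖z‖ ≤ R := by simpa [dist_zero_right] using hz
      linarith
    have hmv := (convex_closedBall (0:X) R).norm_image_sub_le_of_norm_fderiv_le
      (fun z _ => hdiff z) hbd hx₂ hx₁
    calc |f x₁ - f x₂| ≤ C * (1 + R) ^ (p-1) * ‖x₁ - x₂‖ := by
          simpa [Real.norm_eq_abs] using hmv
      _ = C * (1 + R) ^ (p-1) * ‖x₁ - x₂‖ := rfl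
  · have hmg : Measurable fun x => gradient f x := hcont.measurable
    refine Measurable.ite ?_ measurable_const ?_
    · exact hmg (measurableSet_singleton 0)
    · exact (hmg.norm.inv).smul hmg
  · intro x
    obtain ⟨hmem, hinner⟩ := aux_unit f x
    refine ⟨hmem, ?_⟩
    have hd := aux_dir f hdiff x
      (if gradient f x = 0 then (0:X) else ‖gradient f x‖⁻¹ • gradient f x)
    rw [hinner] at hd
    rw [hloc x]
    exact hd
end
end

section
/- If μ ∈ P_p is nonatomic, then for every ν ∈ P_p there exists θ ∈ L_p(μ;X) such that ν = μ_θ, i.e., ν is the pushforward of μ under the map y ↦ y + θ(y). -/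
open MeasureTheory Filter Set
open scoped Topology ENNReal NNReal RealInnerProductSpace

noncomputable section

variable {X : Type*} [NormedAddCommGroup X] [InnerProductSpace ℝ X]
  [SecondCountableTopology X] [CompleteSpace X] [MeasurableSpace X] [BorelSpace X]

namespace Stmt18Aux

open ProbabilityTheory

/-- Claim A: the cdf of an atomless probability measure pushes it to uniform. -/
lemma measure_cdf_le (μ : Measure ℝ) [IsProbabilityMeasure μ] [NullSingletonClass μ]
    {c : ℝ} (hc1 : c ≤ 1) : μ {y | cdf μ y ≤ c} = ENNReal.ofReal c := by
  have hmono : Monotone (cdf μ) := (cdf μ).mono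
  have hcont : ∀ a : ℝ, Function.leftLim (cdf μ) a = cdf μ a := by
    intro a
    have h0 : μ {a} = 0 := measure_singleton a
    have h1 : (cdf μ).measure {a} = 0 := by rw [measure_cdf]; exact h0
    rw [StieltjesFunction.measure_singleton] at h1
    have h2 : cdf μ a - Function.leftLim (cdf μ) a ≤ 0 := by
      by_contra h
      exact (ENNReal.ofReal_pos.2 (lt_of_not_ge h)).ne' h1
    have h3 := hmono.leftLim_le (le_refl a)
    linarith
  set s := {y | cdf μ y ≤ c} with hs_def
  rcases eq_empty_or_nonempty s with hs | hs
  · have hlt : ∀ y, c < cdf μ y := by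
      intro y
      by_contra h
      exact (eq_empty_iff_forall_notMem.1 hs y) (not_lt.1 h)
    have h0 : c ≤ 0 :=
      ge_of_tendsto (tendsto_cdf_atBot μ) (Eventually.of_forall fun y => (hlt y).le)
    rw [hs]
    simp [ENNReal.ofReal_eq_zero.2 h0]
  · by_cases hbdd : BddAbove s
    · set a := sSup s with ha_def
      have hlow : ∀ x < a, cdf μ x ≤ c := by
        intro x hx
        obtain ⟨y, hy, hxy⟩ := exists_lt_of_lt_csSup hs hx
        exact le_trans (hmono hxy.le) hy
      have ha_mem : a ∈ s := by
        by_contra h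
        have hFa : c < cdf μ a := not_le.1 h
        have hll : Function.leftLim (cdf μ) a ≤ c := by
          rw [hmono.leftLim_eq_sSup (x := a)]
          apply csSup_le
          · exact (nonempty_Iio.image _)
          · rintro z ⟨x, hx, rfl⟩
            exact hlow x hx
        rw [hcont a] at hll
        exact absurd hll (not_le.2 hFa)
      have hseq : s = Iic a := by
        ext x
        constructor
        · intro hx; exact le_csSup hbdd hx
        · intro hx; exact le_trans (hmono hx) ha_mem
      have hFa_ge : c ≤ cdf μ a := by
        have hev : ∀ᶠ x in 𝓝[>] a, c ≤ cdf μ x := by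
          filter_upwards [self_mem_nhdsWithin] with x hx
          by_contra h
          have : x ∈ s := (not_le.1 h).le
          exact absurd (le_csSup hbdd this) (not_le.2 hx)
        exact ge_of_tendsto (((cdf μ).right_continuous a).tendsto.mono_left
          (nhdsWithin_mono _ Ioi_subset_Ici_self)) hev
      have hFa : cdf μ a = c := le_antisymm ha_mem hFa_ge
      rw [hseq, ← ofReal_cdf μ a, hFa]
    · have hsuniv : s = univ := by
        apply eq_univ_of_forall
        intro x
        obtain ⟨y, hy, hxy⟩ := not_bddAbove_iff.1 hbdd x
        exact le_trans (hmono hxy.le) hy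
      have h1 : (1:ℝ) ≤ c := by
        refine le_of_tendsto (tendsto_cdf_atTop μ) (Eventually.of_forall fun y => ?_)
        have : y ∈ s := hsuniv ▸ mem_univ y
        exact this
      have : c = 1 := le_antisymm hc1 h1
      rw [hsuniv, this]
      simp [measure_univ]

/-- Claim B: Galois property of the quantile function. -/
lemma quantile_le_iff (ν : Measure ℝ) [IsProbabilityMeasure ν]
    {u : ℝ} (hu0 : 0 < u) (hu1 : u < 1) (x : ℝ) :
    sInf {z | u ≤ cdf ν z} ≤ x ↔ u ≤ cdf ν x := by
  set t := {z | u ≤ cdf ν z} with ht_def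
  have hmono : Monotone (cdf ν) := (cdf ν).mono
  have hne : t.Nonempty := by
    obtain ⟨z, hz⟩ := ((tendsto_cdf_atTop ν).eventually (eventually_gt_nhds hu1)).exists
    exact ⟨z, hz.le⟩
  have hbdd : BddBelow t := by
    obtain ⟨z0, hz0⟩ := eventually_atBot.1
      ((tendsto_cdf_atBot ν).eventually (eventually_lt_nhds hu0))
    refine ⟨z0, fun z hz => ?_⟩
    by_contra h
    exact absurd hz (not_le.2 (lt_of_le_of_lt (hmono (not_le.1 h).le) (hz0 z0 le_rfl)))
  constructor
  · intro h
    have hmem : u ≤ cdf ν (sInf t) := by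
      have hev : ∀ᶠ z in 𝓝[>] (sInf t), u ≤ cdf ν z := by
        filter_upwards [self_mem_nhdsWithin] with z hz
        obtain ⟨w, hw, hwz⟩ := exists_lt_of_csInf_lt hne hz
        exact le_trans hw (hmono hwz.le)
      exact ge_of_tendsto (((cdf ν).right_continuous _).tendsto.mono_left
        (nhdsWithin_mono _ Ioi_subset_Ici_self)) hev
    exact le_trans hmem (hmono h)
  · intro h
    exact csInf_le hbdd h

/-- Existence of a transport map on the real line. -/
lemma exists_map_real (μ ν : Measure ℝ) [IsProbabilityMeasure μ] [IsProbabilityMeasure ν]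
    [NullSingletonClass μ] : ∃ S : ℝ → ℝ, Measurable S ∧ μ.map S = ν := by
  classical
  set F := cdf μ with hF_def
  have hFmeas : Measurable F := (cdf μ).mono.measurable
  set S : ℝ → ℝ := fun y => if 0 < F y ∧ F y < 1 then sInf {z | F y ≤ cdf ν z} else 0
    with hS_def
  have hset : ∀ x : ℝ, {y | S y ≤ x}
      = (F ⁻¹' (Ioo 0 1 ∩ Iic (cdf ν x))) ∪ ((F ⁻¹' (Ioo 0 1))ᶜ ∩ {y | (0:ℝ) ≤ x}) := by
    intro x
    ext y
    by_cases h : 0 < F y ∧ F y < 1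
    · simp only [hS_def, if_pos h, mem_setOf_eq, mem_union, mem_preimage, mem_inter_iff,
        mem_Ioo, mem_Iic, mem_compl_iff]
      rw [quantile_le_iff ν h.1 h.2 x]
      tauto
    · simp only [hS_def, if_neg h, mem_setOf_eq, mem_union, mem_preimage, mem_inter_iff,
        mem_Ioo, mem_Iic, mem_compl_iff]
      tauto
  have hSmeas : Measurable S := by
    apply measurable_of_Iic
    intro x
    rw [show S ⁻¹' Iic x = {y | S y ≤ x} from rfl, hset x]
    exact ((hFmeas (measurableSet_Ioo.inter measurableSet_Iic))).union
      ((hFmeas measurableSet_Ioo).compl.inter (MeasurableSet.const _))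
  refine ⟨S, hSmeas, ?_⟩
  haveI : IsProbabilityMeasure (μ.map S) := Measure.isProbabilityMeasure_map hSmeas.aemeasurable
  apply Measure.ext_of_Iic
  intro x
  rw [Measure.map_apply hSmeas measurableSet_Iic]
  -- null set where F is 0 or 1
  have hN0 : μ {y | F y ≤ 0} = 0 := by
    have := measure_cdf_le μ (c := 0) (by norm_num)
    simpa using this
  have hN1 : μ {y | (1:ℝ) ≤ F y} = 0 := by
    have hlt : μ {y | F y < 1} = 1 := by
      have hsub : ∀ n : ℕ, ENNReal.ofReal (1 - 1 / (n + 1)) ≤ μ {y | F y < 1} := by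
        intro n
        rw [← measure_cdf_le μ (c := 1 - 1 / (n + 1))
          (sub_le_self 1 (by positivity))]
        apply measure_mono
        intro y hy
        have hy' : cdf μ y ≤ 1 - 1 / (n + 1) := hy
        have h1 : (0:ℝ) < 1 / (n + 1) := by positivity
        show F y < 1
        have : (F : ℝ → ℝ) = cdf μ := by rw [hF_def]
        rw [this]
        linarith
      have htend : Tendsto (fun n : ℕ => ENNReal.ofReal (1 - 1 / (n + 1))) atTop
          (𝓝 (1 : ℝ≥0∞)) := by
        rw [show (1 : ℝ≥0∞) = ENNReal.ofReal 1 by simp]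
        apply ENNReal.tendsto_ofReal
        have := tendsto_one_div_add_atTop_nhds_zero_nat (𝕜 := ℝ)
        simpa using (tendsto_const_nhds (x := (1:ℝ))).sub this
      have h1le : (1:ℝ≥0∞) ≤ μ {y | F y < 1} :=
        le_of_tendsto htend (Eventually.of_forall hsub)
      exact le_antisymm prob_le_one h1le
    have hcompl : {y | (1:ℝ) ≤ F y} = {y | F y < 1}ᶜ := by ext y; simp [not_lt]
    have hm : MeasurableSet {y | F y < 1} := hFmeas measurableSet_Iio
    rw [hcompl, measure_compl hm (measure_ne_top _ _), hlt]
    simp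
  have hN : μ ({y | F y ≤ 0} ∪ {y | (1:ℝ) ≤ F y}) = 0 := measure_union_null hN0 hN1
  have hae : (S ⁻¹' Iic x : Set ℝ) =ᵐ[μ] {y | F y ≤ cdf ν x} := by
    rw [ae_eq_set]
    constructor
    · refine measure_mono_null (fun y hy => ?_) hN
      rcases hy with ⟨hy1, hy2⟩
      by_contra hyN
      simp only [mem_union, mem_setOf_eq, not_or, not_le] at hyN
      have hy1' : y ∈ {y | S y ≤ x} := hy1
      rw [hset x] at hy1'
      rcases hy1' with h | h
      · exact hy2 h.2
      · exact h.1 ⟨hyN.1, hyN.2⟩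
    · refine measure_mono_null (fun y hy => ?_) hN
      rcases hy with ⟨hy1, hy2⟩
      by_contra hyN
      simp only [mem_union, mem_setOf_eq, not_or, not_le] at hyN
      apply hy2
      show y ∈ {y | S y ≤ x}
      rw [hset x]
      exact Or.inl ⟨⟨hyN.1, hyN.2⟩, hy1⟩
  rw [measure_congr hae, hF_def, measure_cdf_le μ (cdf_le_one ν x), ofReal_cdf]

end Stmt18Aux

theorem stmt18 (p : ℝ) (hp : 1 < p)
    (μ : Measure X) (hμ : μ ∈ Pp (X := X) p)
    (hna : ∀ B : Set X, MeasurableSet B → 0 < μ B →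
      ∃ A : Set X, MeasurableSet A ∧ A ⊆ B ∧ 0 < μ A ∧ μ A < μ B) :
    ∀ ν ∈ Pp (X := X) p, ∃ θ : X → X,
      MemLp θ (ENNReal.ofReal p) μ ∧ ν = μ.map fun y => y + θ y := by
  classical
  intro ν hν
  obtain ⟨hμP, hμm⟩ := hμ
  obtain ⟨hνP, hνm⟩ := hν
  haveI := hμP; haveI := hνP
  have hnoatom : ∀ x : X, μ {x} = 0 := by
    intro x
    by_contra h
    obtain ⟨A, hAm, hAs, hA0, hAlt⟩ := hna {x} (measurableSet_singleton x)
      (pos_iff_ne_zero.2 h)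
    rcases Set.subset_singleton_iff_eq.1 hAs with rfl | rfl
    · simp at hA0
    · exact absurd hAlt (lt_irrefl _)
  haveI : NullSingletonClass μ := ⟨hnoatom⟩
  have hX : ¬ Countable X := by
    intro h
    have h0 : μ Set.univ = 0 := Set.Countable.measure_zero Set.countable_univ μ
    rw [measure_univ] at h0
    exact one_ne_zero h0
  let e : X ≃ᵐ ℝ := PolishSpace.measurableEquivOfNotCountable hX not_countable
  set μ' := μ.map e with hμ'_def
  set ν' := ν.map e with hν'_def
  haveI : IsProbabilityMeasure μ' := Measure.isProbabilityMeasure_map e.measurable.aemeasurable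
  haveI : IsProbabilityMeasure ν' := Measure.isProbabilityMeasure_map e.measurable.aemeasurable
  haveI : NullSingletonClass μ' := by
    constructor
    intro r
    rw [hμ'_def, Measure.map_apply e.measurable (measurableSet_singleton r)]
    have hpre : e ⁻¹' {r} = {e.symm r} := by
      ext z
      simp only [Set.mem_preimage, Set.mem_singleton_iff]
      constructor
      · intro h; rw [← h]; simp
      · intro h; rw [h]; simp
    rw [hpre]
    exact hnoatom _
  obtain ⟨S, hSmeas, hSmap⟩ := Stmt18Aux.exists_map_real μ' ν'
  set T : X → X := fun y => e.symm (S (e y)) with hT_def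
  have hTmeas : Measurable T := e.symm.measurable.comp (hSmeas.comp e.measurable)
  have hTmap : μ.map T = ν := by
    have h1 : μ.map T = ((μ.map e).map S).map e.symm := by
      rw [Measure.map_map hSmeas e.measurable,
        Measure.map_map e.symm.measurable (hSmeas.comp e.measurable)]
      rfl
    rw [h1, ← hμ'_def, hSmap, hν'_def,
      Measure.map_map e.symm.measurable e.measurable]
    simp
  have hp0 : (ENNReal.ofReal p) ≠ 0 := by
    simp only [ne_eq, ENNReal.ofReal_eq_zero, not_le]
    linarith
  have hpt : (ENNReal.ofReal p) ≠ ⊤ := ENNReal.ofReal_ne_top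
  have hptr : (ENNReal.ofReal p).toReal = p := ENNReal.toReal_ofReal (by linarith)
  have hmemT : MemLp T (ENNReal.ofReal p) μ := by
    refine ⟨hTmeas.aestronglyMeasurable, ?_⟩
    rw [eLpNorm_eq_lintegral_rpow_enorm_toReal hp0 hpt, hptr]; simp only [enorm_eq_nnnorm]
    have hint : ∫⁻ y, (‖T y‖₊ : ℝ≥0∞) ^ p ∂μ = ∫⁻ x, (‖x‖₊ : ℝ≥0∞) ^ p ∂ν := by
      rw [← hTmap,
        lintegral_map (measurable_nnnorm.coe_nnreal_ennreal.pow_const p) hTmeas]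
    rw [hint]
    exact ENNReal.rpow_lt_top_of_nonneg (by positivity) hνm.ne
  have hmemI : MemLp (fun y : X => y) (ENNReal.ofReal p) μ := by
    refine ⟨aestronglyMeasurable_id, ?_⟩
    rw [eLpNorm_eq_lintegral_rpow_enorm_toReal hp0 hpt, hptr]; simp only [enorm_eq_nnnorm]
    exact ENNReal.rpow_lt_top_of_nonneg (by positivity) hμm.ne
  refine ⟨fun y => T y - y, hmemT.sub hmemI, ?_⟩
  have hfun : (fun y : X => y + (T y - y)) = T := by
    funext y
    abel
  rw [hfun, hTmap]
end
end

section
/- Let μ be a finite Borel measure on ℝ and p ∈ [1,∞). Then the linear span of the indicator functions {1_{[K,∞)} : K ∈ ℝ} is dense in L_p(μ). If moreover ∫_ℝ |y|^p μ(dy) < ∞, then the linear span of the call payoff functions {x ↦ max(x−K, 0) : K ∈ ℝ} is dense in L_p(μ). -/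
open MeasureTheory Set
open scoped ENNReal
noncomputable section

lemma step_approx (g : ℝ → ℝ) (hg : Continuous g) (hsupp : HasCompactSupport g)
    {δ : ℝ} (hδ : 0 < δ) :
    ∃ s ∈ Submodule.span ℝ
      {g : ℝ → ℝ | ∃ K : ℝ, g = Set.indicator (Set.Ici K) fun _ => (1 : ℝ)},
      Measurable s ∧ ∀ x, |g x - s x| ≤ δ := by
  obtain ⟨η, hη, hmod⟩ := Metric.uniformContinuous_iff.mp
    (hsupp.uniformContinuous_of_continuous hg) δ hδ
  obtain ⟨r0, hr0⟩ := hsupp.isBounded.subset_closedBall 0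
  set R : ℝ := max r0 0 with hR
  have hRnn : 0 ≤ R := le_max_right _ _
  have hr : tsupport g ⊆ Metric.closedBall 0 R :=
    hr0.trans (Metric.closedBall_subset_closedBall (le_max_left _ _))
  have hg0 : ∀ x : ℝ, R + 1 ≤ |x| → g x = 0 := by
    intro x hx
    apply image_eq_zero_of_notMem_tsupport
    intro hmem
    have := hr hmem
    rw [Metric.mem_closedBall, Real.dist_eq, sub_zero] at this
    linarith
  set t : ℝ := η / 2 with ht
  have htpos : 0 < t := by positivity
  have htη : t < η := by rw [ht]; linarith
  set a : ℝ := -(R + 2) with ha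
  set n : ℕ := ⌈(2 * R + 4) / t⌉₊ + 1 with hn
  have hnt : 2 * R + 4 ≤ n * t := by
    have h1 : (2 * R + 4) / t ≤ (n : ℝ) := le_trans (Nat.le_ceil _) (by exact_mod_cast Nat.le_succ _)
    calc 2 * R + 4 = ((2 * R + 4) / t) * t := by field_simp
    _ ≤ n * t := by nlinarith
  set K : ℕ → ℝ := fun i => a + i * t with hK
  set c : ℕ → ℝ := fun i => g (K (i + 1)) - g (K i) with hc
  set s : ℝ → ℝ := ∑ i ∈ Finset.range n,
    c i • (Set.indicator (Set.Ici (K (i + 1))) fun _ => (1 : ℝ)) with hs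
  have hga : g a = 0 := hg0 a (by rw [ha, abs_of_nonpos (by linarith)]; linarith)
  have hsx : ∀ y : ℝ, s y = ∑ i ∈ Finset.range n,
      c i * (if K (i+1) ≤ y then (1:ℝ) else 0) := by
    intro y
    rw [hs, Finset.sum_apply]
    refine Finset.sum_congr rfl fun i _ => ?_
    simp [Set.indicator_apply, Set.mem_Ici]
  refine ⟨s, ?_, ?_, ?_⟩
  · exact Submodule.sum_mem _ fun i _ =>
      Submodule.smul_mem _ _ (Submodule.subset_span ⟨K (i+1), rfl⟩)
  · have : s = fun y => ∑ i ∈ Finset.range n,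
        c i * (if K (i+1) ≤ y then (1:ℝ) else 0) := funext hsx
    rw [this]
    exact Finset.measurable_sum _ fun i _ =>
      (Measurable.ite measurableSet_Ici measurable_const measurable_const).const_mul _
  intro x
  rcases lt_or_ge x (K 1) with hx | hx
  · -- x < K 1 : s x = 0
    have hzero : s x = 0 := by
      rw [hsx]
      refine Finset.sum_eq_zero fun i _ => ?_
      rw [if_neg, mul_zero]
      intro h
      have hmono : K 1 ≤ K (i+1) := by
        rw [hK]; simp only; push_cast; nlinarith [Nat.one_le_iff_ne_zero.mpr (Nat.succ_ne_zero i),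
          (by exact_mod_cast Nat.one_le_iff_ne_zero.mpr (Nat.succ_ne_zero i) : (1:ℝ) ≤ (i+1:ℕ))]
      linarith
    rw [hzero, sub_zero]
    rcases lt_or_ge x a with hxa | hxa
    · rw [hg0 x (by rw [abs_of_nonpos (by rw [ha] at hxa; linarith)]; rw [ha] at hxa; linarith)]
      simp [hδ.le]
    · have : dist x a < η := by
        rw [Real.dist_eq, abs_of_nonneg (by linarith)]
        have : K 1 = a + t := by rw [hK]; push_cast; ring
        rw [this] at hx; linarith
      have := hmod this
      rw [Real.dist_eq, hga, sub_zero] at this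
      exact this.le
  · -- K 1 ≤ x
    have hx0 : 0 ≤ x - a := by
      have : K 1 = a + t := by rw [hK]; push_cast; ring
      rw [this] at hx; linarith
    have hx0div : 0 ≤ (x - a) / t := div_nonneg hx0 htpos.le
    set m : ℕ := ⌊(x - a) / t⌋₊ with hm
    set j : ℕ := min n m with hj
    have hjn : j ≤ n := min_le_left _ _
    have hiff : ∀ i : ℕ, K (i+1) ≤ x ↔ i < m := by
      intro i
      have h1 : K (i+1) ≤ x ↔ ((i+1 : ℕ) : ℝ) ≤ (x - a) / t := by
        rw [le_div_iff₀ htpos]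
        show a + ((i+1 : ℕ) : ℝ) * t ≤ x ↔ _
        push_cast
        constructor <;> intro h <;> linarith
      rw [h1, ← Nat.le_floor_iff hx0div, ← hm]
      omega
    have hsum : s x = g (K j) := by
      rw [hsx]
      have h2 : ∀ i ∈ Finset.range n,
          c i * (if K (i+1) ≤ x then (1:ℝ) else 0) = if i < j then c i else 0 := by
        intro i hi
        rw [Finset.mem_range] at hi
        by_cases h : i < j
        · rw [if_pos h, if_pos ((hiff i).mpr (by omega)), mul_one]
        · rw [if_neg h, if_neg (fun hc => h (by rw [hiff] at hc; omega)), mul_zero]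
      rw [Finset.sum_congr rfl h2, ← Finset.sum_filter]
      have h3 : (Finset.range n).filter (· < j) = Finset.range j := by
        ext k; simp only [Finset.mem_filter, Finset.mem_range]; omega
      rw [h3, Finset.sum_range_sub (fun i => g (K i))]
      have : K 0 = a := by rw [hK]; push_cast; ring
      rw [this, hga, sub_zero]
    rw [hsum]
    rcases le_or_gt n m with hnm | hmn
    · -- j = n, both g x and g (K n) are 0
      have hjeq : j = n := by omega
      have haa : a = -(R + 2) := ha
      have hxbig : R + 1 ≤ x := by
        have h0 : (n : ℝ) ≤ (x - a) / t := le_trans (by exact_mod_cast hnm) (Nat.floor_le hx0div)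
        have h4 : (n : ℝ) * t ≤ x - a := (le_div_iff₀ htpos).mp h0
        linarith
      have hKbig : R + 1 ≤ K n := by
        have : K n = a + n * t := rfl
        linarith
      rw [hjeq, hg0 x (le_trans hxbig (le_abs_self x)),
        hg0 (K n) (le_trans hKbig (le_abs_self _))]
      simp [hδ.le]
    · -- j = m, |x - K m| < t
      have hjeq : j = m := by omega
      have h5 : K m ≤ x := by
        have h0 : (m : ℝ) ≤ (x - a) / t := by rw [hm]; exact Nat.floor_le hx0div
        have := (le_div_iff₀ htpos).mp h0
        show a + (m : ℝ) * t ≤ x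
        linarith
      have h6 : x < K (m+1) := by
        have h0 : (x - a) / t < (m : ℝ) + 1 := by rw [hm]; exact Nat.lt_floor_add_one _
        have := (div_lt_iff₀ htpos).mp h0
        show x < a + ((m+1 : ℕ) : ℝ) * t
        push_cast
        linarith
      have hdist : dist x (K m) < η := by
        rw [Real.dist_eq, abs_of_nonneg (by linarith)]
        have : K (m+1) = K m + t := by rw [hK]; push_cast; ring
        rw [this] at h6; linarith
      rw [hjeq]
      exact (by simpa [Real.dist_eq] using hmod hdist : |g x - g (K m)| < δ).le


section helpers

variable (p : ℝ) (μ : Measure ℝ) [IsFiniteMeasure μ]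

lemma span_ind_meas :
    ∀ s ∈ Submodule.span ℝ
      {g : ℝ → ℝ | ∃ K : ℝ, g = Set.indicator (Set.Ici K) fun _ => (1 : ℝ)},
      Measurable s := by
  intro s hs
  induction hs using Submodule.span_induction with
  | mem x hx =>
    obtain ⟨K, rfl⟩ := hx
    exact measurable_const.indicator measurableSet_Ici
  | zero => exact measurable_const
  | add x y hx hy ihx ihy => exact ihx.add ihy
  | smul a x hx ih => exact ih.const_smul a

lemma ind_approx (hp : 1 ≤ p)
    (f : ℝ → ℝ) (hf : MemLp f (ENNReal.ofReal p) μ) (η : ℝ≥0∞) (hη0 : η ≠ 0) (hηt : η ≠ ⊤) :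
    ∃ s ∈ Submodule.span ℝ
      {g : ℝ → ℝ | ∃ K : ℝ, g = Set.indicator (Set.Ici K) fun _ => (1 : ℝ)},
      Measurable s ∧ eLpNorm (f - s) (ENNReal.ofReal p) μ < η := by
  set P := ENNReal.ofReal p with hPdef
  have hP1 : 1 ≤ P := by
    rw [hPdef, ← ENNReal.ofReal_one]; exact ENNReal.ofReal_le_ofReal hp
  have hPtop : P ≠ ⊤ := ENNReal.ofReal_ne_top
  have hζ0 : η / 2 / 2 ≠ 0 := by
    simp [ENNReal.div_eq_zero_iff, hη0]
  obtain ⟨g, gsupp, hfg, gcont, gmem⟩ :=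
    hf.exists_hasCompactSupport_eLpNorm_sub_le hPtop hζ0
  -- choose δ
  set A : ℝ≥0∞ := μ Set.univ ^ P.toReal⁻¹ with hA
  have hAtop : A ≠ ⊤ := by
    refine (ENNReal.rpow_lt_top_of_nonneg (by positivity) (measure_ne_top μ _)).ne
  set b : ℝ≥0∞ := η / 2 / 2 / (A + 1) with hb
  have hζtop : η / 2 / 2 ≠ ⊤ :=
    (ENNReal.div_lt_top ((ENNReal.div_lt_top hηt (by norm_num)).ne) (by norm_num)).ne
  have hbtop : b ≠ ⊤ :=
    (ENNReal.div_lt_top hζtop (by simp)).ne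
  have hb0 : b ≠ 0 := by
    rw [hb, Ne, ENNReal.div_eq_zero_iff]
    rintro (h | h)
    · exact hζ0 h
    · exact (by simp [hAtop] : A + 1 ≠ ⊤) h
  have hbpos : 0 < b.toReal := ENNReal.toReal_pos hb0 hbtop
  obtain ⟨s, hsmem, hsmeas, hbound⟩ := step_approx g gcont gsupp hbpos
  refine ⟨s, hsmem, hsmeas, ?_⟩
  have hgs : eLpNorm (g - s) P μ ≤ η / 2 / 2 := by
    have h1 : eLpNorm (g - s) P μ ≤ μ Set.univ ^ P.toReal⁻¹ * ENNReal.ofReal b.toReal := by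
      refine eLpNorm_le_of_ae_bound (Filter.Eventually.of_forall fun x => ?_)
      simpa [Real.norm_eq_abs] using hbound x
    rw [ENNReal.ofReal_toReal hbtop] at h1
    refine h1.trans ?_
    calc A * b ≤ (A + 1) * b := mul_le_mul_left le_self_add _
    _ ≤ η / 2 / 2 := by rw [hb]; exact ENNReal.mul_div_le
  have hmeas1 : AEStronglyMeasurable (f - g) μ := (hf.sub gmem).aestronglyMeasurable
  have hmeas2 : AEStronglyMeasurable (g - s) μ :=
    (gcont.measurable.sub hsmeas).aestronglyMeasurable
  calc eLpNorm (f - s) P μ = eLpNorm ((f - g) + (g - s)) P μ := by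
        rw [sub_add_sub_cancel]
  _ ≤ eLpNorm (f - g) P μ + eLpNorm (g - s) P μ := eLpNorm_add_le hmeas1 hmeas2 hP1
  _ ≤ η / 2 / 2 + η / 2 / 2 := add_le_add hfg hgs
  _ = η / 2 := ENNReal.add_halves _
  _ < η := ENNReal.half_lt_self hη0 hηt

lemma call_meas :
    ∀ v ∈ Submodule.span ℝ {g : ℝ → ℝ | ∃ K : ℝ, g = fun x => max (x - K) 0},
      Measurable v := by
  intro v hv
  induction hv using Submodule.span_induction with
  | mem x hx =>
    obtain ⟨K, rfl⟩ := hx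
    exact ((measurable_id.sub measurable_const).max measurable_const)
  | zero => exact measurable_const
  | add x y hx hy ihx ihy => exact ihx.add ihy
  | smul a x hx ih => exact ih.const_smul a

lemma ind_to_call (hp : 1 ≤ p) :
    ∀ s ∈ Submodule.span ℝ
      {g : ℝ → ℝ | ∃ K : ℝ, g = Set.indicator (Set.Ici K) fun _ => (1 : ℝ)},
      ∀ η : ℝ≥0∞, η ≠ 0 → η ≠ ⊤ →
      ∃ v ∈ Submodule.span ℝ {g : ℝ → ℝ | ∃ K : ℝ, g = fun x => max (x - K) 0},
        Measurable v ∧ eLpNorm (s - v) (ENNReal.ofReal p) μ < η := by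
  have hP1 : 1 ≤ ENNReal.ofReal p := by
    rw [← ENNReal.ofReal_one]; exact ENNReal.ofReal_le_ofReal hp
  have hP0 : ENNReal.ofReal p ≠ 0 := by
    intro h; rw [h] at hP1; simp at hP1
  have hPtop : ENNReal.ofReal p ≠ ⊤ := ENNReal.ofReal_ne_top
  have hPr : 0 < (ENNReal.ofReal p).toReal := by
    rw [ENNReal.toReal_ofReal (by linarith)]; linarith
  intro s hs
  induction hs using Submodule.span_induction with
  | mem x hx =>
    obtain ⟨K, rfl⟩ := hx
    intro η hη0 hηt
    -- choose δ = 1/(n+1) with μ (Ico (K - δ) K) small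
    have htend : Filter.Tendsto (fun n : ℕ => μ (Set.Ico (K - 1 / (n + 1)) K))
        Filter.atTop (nhds (μ (⋂ n : ℕ, Set.Ico (K - 1 / (n + 1)) K))) := by
      refine tendsto_measure_iInter_atTop
        (fun n => (measurableSet_Ico).nullMeasurableSet) ?_ ⟨0, measure_ne_top μ _⟩
      intro i j hij
      refine Set.Ico_subset_Ico ?_ le_rfl
      have : (1 : ℝ) / (j + 1) ≤ 1 / (i + 1) := by
        apply one_div_le_one_div_of_le (by positivity)
        exact_mod_cast Nat.add_le_add_right hij 1
      linarith
    have hempty : (⋂ n : ℕ, Set.Ico (K - 1 / (n + 1)) K) = (∅ : Set ℝ) := by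
      ext x
      simp only [Set.mem_iInter, Set.mem_Ico, Set.mem_empty_iff_false, iff_false, not_forall]
      by_contra h
      push_neg at h
      have hxK : x < K := (h 0).2
      obtain ⟨n, hn⟩ := exists_nat_one_div_lt (sub_pos.mpr hxK)
      exact absurd (h n).1 (by linarith [hn])
    rw [hempty, measure_empty] at htend
    set target : ℝ≥0∞ := η ^ (ENNReal.ofReal p).toReal with htgt
    have htpos : 0 < target := by
      refine ENNReal.rpow_pos (by positivity) hηt
    obtain ⟨n, hn⟩ := (htend.eventually_lt_const htpos).exists
    set δ : ℝ := 1 / (n + 1) with hδdef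
    have hδpos : 0 < δ := by positivity
    set v : ℝ → ℝ := δ⁻¹ • (fun x => max (x - (K - δ)) 0) - δ⁻¹ • (fun x => max (x - K) 0)
      with hv
    have hvmem : v ∈ Submodule.span ℝ {g : ℝ → ℝ | ∃ K : ℝ, g = fun x => max (x - K) 0} :=
      Submodule.sub_mem _
        (Submodule.smul_mem _ _ (Submodule.subset_span ⟨K - δ, rfl⟩))
        (Submodule.smul_mem _ _ (Submodule.subset_span ⟨K, rfl⟩))
    have hvmeas : Measurable v := call_meas _ hvmem
    refine ⟨v, hvmem, hvmeas, ?_⟩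
    have hptw : ∀ x : ℝ,
        ‖(Set.indicator (Set.Ici K) (fun _ => (1:ℝ)) - v) x‖ ≤
        ‖Set.indicator (Set.Ico (K - δ) K) (fun _ => (1:ℝ)) x‖ := by
      intro x
      simp only [Pi.sub_apply, hv, Pi.smul_apply, smul_eq_mul, Real.norm_eq_abs,
        Set.indicator_apply, Set.mem_Ici, Set.mem_Ico]
      rcases lt_or_ge x (K - δ) with h1 | h1
      · rw [if_neg (by linarith), if_neg (by push_neg; intro; linarith)]
        rw [max_eq_right (by linarith), max_eq_right (by linarith)]
        simp
      rcases lt_or_ge x K with h2 | h2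
      · rw [if_neg (by linarith), if_pos ⟨h1, h2⟩]
        rw [max_eq_left (by linarith), max_eq_right (by linarith)]
        rw [abs_le]
        constructor
        · have : δ⁻¹ * (x - (K - δ)) ≤ δ⁻¹ * δ := by
            apply mul_le_mul_of_nonneg_left (by linarith) (by positivity)
          rw [inv_mul_cancel₀ (ne_of_gt hδpos)] at this
          simp only [abs_one]
          linarith
        · simp only [abs_one]
          have : 0 ≤ δ⁻¹ * (x - (K - δ)) := by
            apply mul_nonneg (by positivity) (by linarith)
          linarith
      · rw [if_pos h2, if_neg (by push_neg; intro; linarith)]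
        rw [max_eq_left (by linarith), max_eq_left (by linarith)]
        have : δ⁻¹ * (x - (K - δ)) - δ⁻¹ * (x - K) = δ⁻¹ * δ := by ring
        rw [show (1:ℝ) - (δ⁻¹ * (x - (K - δ)) - δ⁻¹ * (x - K))
            = 1 - δ⁻¹ * δ by rw [this]]
        rw [inv_mul_cancel₀ (ne_of_gt hδpos)]
        simp
    calc eLpNorm (Set.indicator (Set.Ici K) (fun _ => (1:ℝ)) - v) (ENNReal.ofReal p) μ
        ≤ eLpNorm (Set.indicator (Set.Ico (K - δ) K) (fun _ => (1:ℝ))) (ENNReal.ofReal p) μ :=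
          eLpNorm_mono hptw
    _ = ‖(1:ℝ)‖₊ * μ (Set.Ico (K - δ) K) ^ (1 / (ENNReal.ofReal p).toReal) :=
          eLpNorm_indicator_const measurableSet_Ico hP0 hPtop
    _ = μ (Set.Ico (K - δ) K) ^ (ENNReal.ofReal p).toReal⁻¹ := by
          simp [one_div]
    _ < target ^ (ENNReal.ofReal p).toReal⁻¹ := by
          refine ENNReal.rpow_lt_rpow ?_ (by positivity)
          exact_mod_cast hn
    _ = η := by
          rw [htgt, ← ENNReal.rpow_mul, mul_inv_cancel₀ (ne_of_gt hPr), ENNReal.rpow_one]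
  | zero =>
    intro η hη0 hηt
    refine ⟨0, Submodule.zero_mem _, measurable_const, ?_⟩
    simp only [sub_zero, eLpNorm_zero]
    exact pos_iff_ne_zero.mpr hη0
  | add x y hx hy ihx ihy =>
    intro η hη0 hηt
    have h2 : η / 2 ≠ 0 := by simp [hη0]
    have h2t : η / 2 ≠ ⊤ := (ENNReal.div_lt_top hηt (by norm_num)).ne
    obtain ⟨v₁, hv₁mem, hv₁meas, hv₁⟩ := ihx (η / 2) h2 h2t
    obtain ⟨v₂, hv₂mem, hv₂meas, hv₂⟩ := ihy (η / 2) h2 h2t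
    refine ⟨v₁ + v₂, Submodule.add_mem _ hv₁mem hv₂mem, hv₁meas.add hv₂meas, ?_⟩
    have heq : x + y - (v₁ + v₂) = (x - v₁) + (y - v₂) := by abel
    rw [heq]
    calc eLpNorm ((x - v₁) + (y - v₂)) (ENNReal.ofReal p) μ
        ≤ eLpNorm (x - v₁) (ENNReal.ofReal p) μ + eLpNorm (y - v₂) (ENNReal.ofReal p) μ :=
          eLpNorm_add_le ((span_ind_meas _ hx).sub hv₁meas).aestronglyMeasurable
            ((span_ind_meas _ hy).sub hv₂meas).aestronglyMeasurable hP1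
    _ < η / 2 + η / 2 := ENNReal.add_lt_add hv₁ hv₂
    _ = η := ENNReal.add_halves _
  | smul a x hx ih =>
    intro η hη0 hηt
    rcases eq_or_ne a 0 with rfl | ha
    · refine ⟨0, Submodule.zero_mem _, measurable_const, ?_⟩
      simp only [zero_smul, sub_zero, eLpNorm_zero]
      exact pos_iff_ne_zero.mpr hη0
    · have han : (‖a‖₊ : ℝ≥0∞) ≠ 0 := by simpa using ha
      have hant : (‖a‖₊ : ℝ≥0∞) ≠ ⊤ := ENNReal.coe_ne_top
      obtain ⟨v, hvmem, hvmeas, hv⟩ := ih (η / ‖a‖₊)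
        (by simp [ENNReal.div_eq_zero_iff, hη0, hant])
        (ENNReal.div_lt_top hηt han).ne
      refine ⟨a • v, Submodule.smul_mem _ _ hvmem, hvmeas.const_smul a, ?_⟩
      rw [← smul_sub, eLpNorm_const_smul]
      calc (‖a‖₊ : ℝ≥0∞) • eLpNorm (x - v) (ENNReal.ofReal p) μ
          = (‖a‖₊ : ℝ≥0∞) * eLpNorm (x - v) (ENNReal.ofReal p) μ := rfl
      _ < (‖a‖₊ : ℝ≥0∞) * (η / ‖a‖₊) := by
          exact (ENNReal.mul_lt_mul_iff_right han hant).mpr hv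
      _ = η := ENNReal.mul_div_cancel han hant

end helpers

theorem stmt19 (p : ℝ) (hp : 1 ≤ p) (μ : Measure ℝ) [IsFiniteMeasure μ] :
    (∀ f : ℝ → ℝ, MemLp f (ENNReal.ofReal p) μ → ∀ ε : ℝ≥0∞, 0 < ε →
      ∃ g ∈ Submodule.span ℝ
          {g : ℝ → ℝ | ∃ K : ℝ, g = Set.indicator (Set.Ici K) fun _ => (1 : ℝ)},
        eLpNorm (f - g) (ENNReal.ofReal p) μ < ε) ∧
    ((∫⁻ y, ENNReal.ofReal (|y| ^ p) ∂μ) < ⊤ →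
      ∀ f : ℝ → ℝ, MemLp f (ENNReal.ofReal p) μ → ∀ ε : ℝ≥0∞, 0 < ε →
        ∃ g ∈ Submodule.span ℝ {g : ℝ → ℝ | ∃ K : ℝ, g = fun x => max (x - K) 0},
          eLpNorm (f - g) (ENNReal.ofReal p) μ < ε) := by
  have hP1 : 1 ≤ ENNReal.ofReal p := by
    rw [← ENNReal.ofReal_one]; exact ENNReal.ofReal_le_ofReal hp
  constructor
  · intro f hf ε hε
    set ζ : ℝ≥0∞ := min ε 1 with hζ
    have hζ0 : ζ ≠ 0 := (lt_min hε zero_lt_one).ne'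
    have hζt : ζ ≠ ⊤ := (lt_of_le_of_lt (min_le_right _ _) ENNReal.one_lt_top).ne
    obtain ⟨s, hsmem, _, hs⟩ := ind_approx p μ hp f hf ζ hζ0 hζt
    exact ⟨s, hsmem, lt_of_lt_of_le hs (min_le_left _ _)⟩
  · intro _ f hf ε hε
    set ζ : ℝ≥0∞ := min ε 1 with hζ
    have hζ0 : ζ ≠ 0 := (lt_min hε zero_lt_one).ne'
    have hζt : ζ ≠ ⊤ := (lt_of_le_of_lt (min_le_right _ _) ENNReal.one_lt_top).ne
    have h2 : ζ / 2 ≠ 0 := by simp [hζ0]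
    have h2t : ζ / 2 ≠ ⊤ := (ENNReal.div_lt_top hζt (by norm_num)).ne
    obtain ⟨s, hsmem, hsmeas, hs⟩ := ind_approx p μ hp f hf (ζ / 2) h2 h2t
    obtain ⟨v, hvmem, hvmeas, hv⟩ := ind_to_call p μ hp s hsmem (ζ / 2) h2 h2t
    refine ⟨v, hvmem, ?_⟩
    have heq : f - v = (f - s) + (s - v) := by abel
    rw [heq]
    calc eLpNorm ((f - s) + (s - v)) (ENNReal.ofReal p) μ
        ≤ eLpNorm (f - s) (ENNReal.ofReal p) μ + eLpNorm (s - v) (ENNReal.ofReal p) μ :=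
          eLpNorm_add_le (hf.aestronglyMeasurable.sub hsmeas.aestronglyMeasurable)
            (hsmeas.sub hvmeas).aestronglyMeasurable hP1
    _ < ζ / 2 + ζ / 2 := ENNReal.add_lt_add hs hv
    _ = ζ := ENNReal.add_halves _
    _ ≤ ε := min_le_left _ _
end
end
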